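/- arXiv:1407.2801 — 6 statements merged into one kernel-verified Lean document; each statement's English description precedes it below -/
import Mathlib

section
/- Let n ≥ 1, let A be an n×n Robinson similarity matrix, and let Δ be an integer with 1 ≤ Δ ≤ n−1. Then for every permutation π of [n] one has ⟨A_π, B^Δ_n⟩ ≥ ⟨A, B^Δ_n⟩; that is, the identity permutation is optimal for QAP(A, B^Δ_n). -/
/-- `A` is a Robinson similarity matrix: it is symmetric and its entries decrease
monotonically in rows and columns when moving away from the main diagonal, i.e.
`A i k ≤ min (A i j) (A j k)` for all `i ≤ j ≤ k`. -/
def IsRobinsonSim {n : ℕ} (A : Matrix (Fin n) (Fin n) ℝ) : Prop :=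
  (∀ i j, A i j = A j i) ∧
  ∀ i j k : Fin n, i ≤ j → j ≤ k → A i k ≤ min (A i j) (A j k)

/-- `B` is a Robinson dissimilarity matrix: it is symmetric and
`max (B i j) (B j k) ≤ B i k` for all `i ≤ j ≤ k`. -/
def IsRobinsonDissim {n : ℕ} (B : Matrix (Fin n) (Fin n) ℝ) : Prop :=
  (∀ i j, B i j = B j i) ∧
  ∀ i j k : Fin n, i ≤ j → j ≤ k → max (B i j) (B j k) ≤ B i k

/-- `A` is a Toeplitz matrix: `A i j = A (i+1) (j+1)` whenever the indices make sense. -/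
def IsToeplitz {n : ℕ} (A : Matrix (Fin n) (Fin n) ℝ) : Prop :=
  ∀ (i j : Fin n) (hi : i.val + 1 < n) (hj : j.val + 1 < n),
    A i j = A ⟨i.val + 1, hi⟩ ⟨j.val + 1, hj⟩

/-- The matrix `A_π` with entries `(A_π) i j = A (π i) (π j)`. -/
def permMat {n : ℕ} (A : Matrix (Fin n) (Fin n) ℝ) (π : Equiv.Perm (Fin n)) :
    Matrix (Fin n) (Fin n) ℝ :=
  Matrix.of fun i j => A (π i) (π j)

/-- The trace inner product `⟨A,B⟩ = ∑_{i,j} A i j * B i j`. -/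
def mInner {n : ℕ} (A B : Matrix (Fin n) (Fin n) ℝ) : ℝ :=
  ∑ i, ∑ j, A i j * B i j

/-- The 0/1 Toeplitz Robinson dissimilarity matrix `B^Δ_n`, with `(i,j)` entry `1`
iff `|i - j| ≥ n - Δ` (indices thought of as `1,…,n`, here `0`-based). -/
def BDelta (n Δ : ℕ) : Matrix (Fin n) (Fin n) ℝ :=
  Matrix.of fun i j => if (n : ℤ) - (Δ : ℤ) ≤ |(i.val : ℤ) - (j.val : ℤ)| then 1 else 0

/-- The set `E^Δ_n` of (unordered, represented here with first coordinate smaller)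
upper-triangular support positions of `B^Δ_n`: the pairs `(i,j)` with `i < j` and
`j - i ≥ n - Δ`, i.e. `i + (n - Δ) ≤ j`. -/
def EDelta (n Δ : ℕ) : Finset (Fin n × Fin n) :=
  Finset.univ.filter (fun p => p.1.val + (n - Δ) ≤ p.2.val)

open Finset

def SS (m n : ℕ) (f : ℕ → ℕ → ℝ) : ℝ :=
  ∑ i ∈ range n, ∑ j ∈ Ico (i + m) n, f i j

def skip (c x : ℕ) : ℕ := if x < c then x else x + 1

lemma skip_mono {c x y : ℕ} (h : x ≤ y) : skip c x ≤ skip c y := by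
  unfold skip; split_ifs <;> omega

lemma strictMono_nat_lb {k : ℕ} {e : Fin k → ℕ} (he : StrictMono e) :
    ∀ t (ht : t < k), t ≤ e ⟨t, ht⟩ := by
  intro t
  induction t with
  | zero => intro ht; exact Nat.zero_le _
  | succ s ih =>
    intro ht
    have hs : s < k := by omega
    have h1 := ih hs
    have h2 : e ⟨s, hs⟩ < e ⟨s + 1, ht⟩ := he (by simp [Fin.lt_def])
    omega

lemma strictMono_nat_add_le {k : ℕ} {e : Fin k → ℕ} (he : StrictMono e) :
    ∀ d t (h : t + d < k), e ⟨t, by omega⟩ + d ≤ e ⟨t + d, h⟩ := by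
  intro d
  induction d with
  | zero => intro t h; simp
  | succ s ih =>
    intro t h
    have h1 : t + s < k := by omega
    have h2 := ih t h1
    have h3 : e ⟨t + s, h1⟩ < e ⟨t + s + 1, by omega⟩ := he (by simp [Fin.lt_def])
    have h4 : e ⟨t + s + 1, by omega⟩ = e ⟨t + (s + 1), h⟩ := by
      congr 1
    omega

lemma strictMono_nat_ub {k N : ℕ} {e : Fin k → ℕ} (he : StrictMono e)
    (hN : ∀ i, e i < N) (i : Fin k) : e i ≤ N - k + i := by
  have hik : i.val + (k - 1 - i.val) < k := by omega
  have h1 := strictMono_nat_add_le he (k - 1 - i.val) i.val hik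
  have h2 : e ⟨i.val, by omega⟩ = e i := congrArg e (Fin.ext rfl)
  have h3 := hN ⟨i.val + (k - 1 - i.val), hik⟩
  omega

lemma image_orderEmbOfFin {k : ℕ} (T : Finset ℕ) (hk : T.card = k) :
    Finset.image (fun i => T.orderEmbOfFin hk i) Finset.univ = T := by
  apply Finset.coe_injective
  rw [Finset.coe_image, Finset.coe_univ, Set.image_univ]
  exact T.range_orderEmbOfFin hk

lemma sum_range_le_sum_T {c k : ℕ} (T : Finset ℕ) (hTc : ∀ x ∈ T, x < c) (hk : T.card = k)
    (φ : ℕ → ℝ) (hφ : ∀ x y, x ≤ y → y < c → φ x ≤ φ y) :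
    ∑ x ∈ range k, φ x ≤ ∑ x ∈ T, φ x := by
  rw [← image_orderEmbOfFin T hk,
    Finset.sum_image (fun a _ b _ h => (T.orderEmbOfFin hk).injective h)]
  rw [← Fin.sum_univ_eq_sum_range φ k]
  apply Finset.sum_le_sum
  intro i _
  have hmem := T.orderEmbOfFin_mem hk i
  have hlb : (i : ℕ) ≤ T.orderEmbOfFin hk i := by
    have := strictMono_nat_lb (T.orderEmbOfFin hk).strictMono i.val i.2
    have h2 : (⟨i.val, i.2⟩ : Fin k) = i := Fin.ext rfl
    rwa [h2] at this
  exact hφ _ _ hlb (hTc _ hmem)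

lemma sum_window_le_sum_T {lo N k : ℕ} (T : Finset ℕ) (hT : ∀ x ∈ T, lo ≤ x ∧ x < N)
    (hk : T.card = k) (φ : ℕ → ℝ) (hφ : ∀ x y, lo ≤ x → x ≤ y → y < N → φ y ≤ φ x) :
    ∑ x ∈ Ico (N - k) N, φ x ≤ ∑ x ∈ T, φ x := by
  have hkN : k ≤ N := by
    rw [← hk]
    calc T.card ≤ (range N).card :=
          Finset.card_le_card (fun x hx => mem_range.mpr (hT x hx).2)
      _ = N := by simp
  rw [Finset.sum_Ico_eq_sum_range]
  have hNk : N - (N - k) = k := by omega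
  rw [hNk]
  rw [← Fin.sum_univ_eq_sum_range (fun x => φ (N - k + x)) k]
  rw [← image_orderEmbOfFin T hk,
    Finset.sum_image (fun a _ b _ h => (T.orderEmbOfFin hk).injective h)]
  apply Finset.sum_le_sum
  intro i _
  have hmem := T.orderEmbOfFin_mem hk i
  have hub : T.orderEmbOfFin hk i ≤ N - k + i :=
    strictMono_nat_ub (T.orderEmbOfFin hk).strictMono (fun j => (hT _ (T.orderEmbOfFin_mem hk j)).2) i
  exact hφ _ _ (hT _ hmem).1 hub (by omega)

lemma sum_Ico_shift (p q : ℕ) (g : ℕ → ℝ) :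
    ∑ j ∈ Ico p q, g (j + 1) = ∑ b ∈ Ico (p + 1) (q + 1), g b := by
  rw [Finset.sum_Ico_eq_sum_range, Finset.sum_Ico_eq_sum_range]
  have h : q + 1 - (p + 1) = q - p := by omega
  rw [h]
  exact Finset.sum_congr rfl fun x _ => by rw [show p + x + 1 = p + 1 + x by omega]

lemma identityI (m n c : ℕ) (hm : 1 ≤ m) (hc : c ≤ n) (f : ℕ → ℕ → ℝ) :
    SS m (n + 1) f
      = SS m n (fun a b => f (skip c a) (skip c b))
        + ∑ a ∈ range (c + 1 - m), f a c
        + ∑ b ∈ Ico (c + m) (n + 1), f c b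
        + ∑ i ∈ Ico (c + 1 - m) (min c (n + 1 - m)), f i (i + m) := by
  set row : ℕ → ℝ := fun a => ∑ b ∈ Ico (a + m) (n + 1), f a b with hrow
  set corr : ℕ → ℝ := fun i =>
    if i + m ≤ c then f i c else (if i + m ≤ n then f i (i + m) else 0) with hcorr
  -- left side by rows
  have hL : SS m (n + 1) f
      = (∑ a ∈ range c, row a) + row c + ∑ a ∈ Ico (c + 1) (n + 1), row a := by
    unfold SS
    rw [← Finset.sum_range_add_sum_Ico (fun a => row a) (show c ≤ n + 1 by omega)]
    rw [Finset.sum_eq_sum_Ico_succ_bot (show c < n + 1 by omega) (fun a => row a)]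
    ring
  -- rows of SS m n f'
  have hrows : ∀ i < n, (∑ j ∈ Ico (i + m) n, f (skip c i) (skip c j))
      = if i < c then row i - corr i else row (i + 1) := by
    intro i hi
    by_cases hic : i < c
    · simp only [if_pos hic]
      have hski : skip c i = i := by simp [skip, hic]
      rw [hski]
      by_cases hn1 : n < i + m
      · have he1 : Ico (i + m) n = ∅ := Finset.Ico_eq_empty (by omega)
        have he2 : Ico (i + m) (n + 1) = ∅ := Finset.Ico_eq_empty (by omega)
        have hcorr0 : corr i = 0 := by
          simp only [hcorr]
          rw [if_neg (by omega), if_neg (by omega)]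
        rw [he1, hcorr0]
        simp only [hrow]
        simp [he2]
      push_neg at hn1
      by_cases hcc : i + m ≤ c
      · -- split at c
        rw [← Finset.sum_Ico_consecutive _ hcc hc]
        have h2 : ∀ j ∈ Ico (i + m) c, f i (skip c j) = f i j := by
          intro j hj
          simp only [mem_Ico] at hj
          simp [skip, hj.2]
        have h3 : ∀ j ∈ Ico c n, f i (skip c j) = f i (j + 1) := by
          intro j hj
          simp only [mem_Ico] at hj
          simp [skip, show ¬ (j < c) by omega]
        rw [Finset.sum_congr rfl h2, Finset.sum_congr rfl h3]
        rw [sum_Ico_shift c n (fun b => f i b)]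
        have hcorrv : corr i = f i c := by simp only [hcorr]; rw [if_pos hcc]
        have hrowv : row i = (∑ j ∈ Ico (i + m) c, f i j) + f i c
            + ∑ b ∈ Ico (c + 1) (n + 1), f i b := by
          simp only [hrow]
          rw [← Finset.sum_Ico_consecutive (f i) (show i + m ≤ c by omega)
            (show c ≤ n + 1 by omega)]
          rw [Finset.sum_eq_sum_Ico_succ_bot (show c < n + 1 by omega) (f i)]
          ring
        rw [hcorrv, hrowv]; ring
      · push_neg at hcc
        have h3 : ∀ j ∈ Ico (i + m) n, f i (skip c j) = f i (j + 1) := by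
          intro j hj
          simp only [mem_Ico] at hj
          simp [skip, show ¬ (j < c) by omega]
        rw [Finset.sum_congr rfl h3, sum_Ico_shift (i + m) n (fun b => f i b)]
        have hcorrv : corr i = f i (i + m) := by
          simp only [hcorr]; rw [if_neg (by omega), if_pos (by omega)]
        have hrowv : row i = f i (i + m) + ∑ b ∈ Ico (i + m + 1) (n + 1), f i b := by
          simp only [hrow]
          exact Finset.sum_eq_sum_Ico_succ_bot (show i + m < n + 1 by omega) (f i)
        rw [hcorrv, hrowv]; ring
    · simp only [if_neg hic]
      push_neg at hic
      have hski : skip c i = i + 1 := by simp [skip, show ¬ (i < c) by omega]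
      have h3 : ∀ j ∈ Ico (i + m) n, f (skip c i) (skip c j) = f (i + 1) (j + 1) := by
        intro j hj
        simp only [mem_Ico] at hj
        have : skip c j = j + 1 := by simp [skip, show ¬ (j < c) by omega]
        rw [hski, this]
      rw [Finset.sum_congr rfl h3, sum_Ico_shift (i + m) n (fun b => f (i + 1) b)]
      have hadd : i + 1 + m = i + m + 1 := by omega
      simp only [hrow, hadd]
  have hR : SS m n (fun a b => f (skip c a) (skip c b))
      = ((∑ a ∈ range c, row a) - ∑ i ∈ range c, corr i)
        + ∑ a ∈ Ico (c + 1) (n + 1), row a := by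
    unfold SS
    rw [← Finset.sum_range_add_sum_Ico
      (fun i => ∑ j ∈ Ico (i + m) n, f (skip c i) (skip c j)) hc]
    have h1 : ∑ i ∈ range c, (∑ j ∈ Ico (i + m) n, f (skip c i) (skip c j))
        = ∑ i ∈ range c, (row i - corr i) := by
      apply Finset.sum_congr rfl
      intro i hi
      simp only [mem_range] at hi
      rw [hrows i (by omega), if_pos hi]
    have h2 : ∑ i ∈ Ico c n, (∑ j ∈ Ico (i + m) n, f (skip c i) (skip c j))
        = ∑ a ∈ Ico (c + 1) (n + 1), row a := by
      rw [← sum_Ico_shift c n (fun a => row a)]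
      apply Finset.sum_congr rfl
      intro i hi
      simp only [mem_Ico] at hi
      rw [hrows i hi.2, if_neg (by omega)]
    rw [h1, h2, Finset.sum_sub_distrib]
  -- corrections sum
  have hC : ∑ i ∈ range c, corr i
      = (∑ a ∈ range (c + 1 - m), f a c)
        + ∑ i ∈ Ico (c + 1 - m) (min c (n + 1 - m)), f i (i + m) := by
    rw [← Finset.sum_range_add_sum_Ico corr (show c + 1 - m ≤ c by omega)]
    congr 1
    · apply Finset.sum_congr rfl
      intro i hi
      simp only [mem_range] at hi
      simp only [hcorr]
      rw [if_pos (by omega)]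
    · have h4 : ∀ i ∈ Ico (c + 1 - m) c, corr i
          = if i + m ≤ n then f i (i + m) else 0 := by
        intro i hi
        simp only [mem_Ico] at hi
        simp only [hcorr]
        rw [if_neg (by omega)]
      rw [Finset.sum_congr rfl h4, ← Finset.sum_filter]
      congr 1
      ext x
      simp only [mem_filter, mem_Ico]
      omega
  rw [hL, hR, hC]
  simp only [hrow]
  ring

lemma SS_split_top (m n : ℕ) (hm : 1 ≤ m) (F : ℕ → ℕ → ℝ) :
    SS m (n + 1) F = SS m n F + ∑ i ∈ range (n + 1 - m), F i n := by
  unfold SS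
  have h1 : ∀ i, ∑ j ∈ Ico (i + m) (n + 1), F i j
      = (∑ j ∈ Ico (i + m) n, F i j) + (if i + m ≤ n then F i n else 0) := by
    intro i
    by_cases h : i + m ≤ n
    · rw [Finset.sum_Ico_succ_top h, if_pos h]
    · rw [if_neg h, Finset.Ico_eq_empty (by omega), Finset.Ico_eq_empty (by omega)]
      simp
  calc ∑ i ∈ range (n + 1), ∑ j ∈ Ico (i + m) (n + 1), F i j
      = ∑ i ∈ range (n + 1),
          ((∑ j ∈ Ico (i + m) n, F i j) + (if i + m ≤ n then F i n else 0)) :=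
        Finset.sum_congr rfl (fun i _ => h1 i)
    _ = (∑ i ∈ range (n + 1), ∑ j ∈ Ico (i + m) n, F i j)
          + ∑ i ∈ range (n + 1), (if i + m ≤ n then F i n else 0) :=
        Finset.sum_add_distrib
    _ = (∑ i ∈ range n, ∑ j ∈ Ico (i + m) n, F i j)
          + ∑ i ∈ range (n + 1 - m), F i n := by
        congr 1
        · rw [Finset.sum_range_succ]
          rw [Finset.Ico_eq_empty (by omega)]
          simp
        · rw [← Finset.sum_filter]
          congr 1
          ext x
          simp only [mem_filter, mem_range]
          omega

lemma core (m : ℕ) (hm : 1 ≤ m) :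
    ∀ n (f : ℕ → ℕ → ℝ),
      (∀ a b, f a b = f b a) →
      (∀ a' a b b', a' ≤ a → a ≤ b → b ≤ b' → b' < n → f a' b' ≤ f a b) →
      ∀ g : ℕ → ℕ, (∀ i, i < n → g i < n) →
      (∀ i j, i < n → j < n → g i = g j → i = j) →
      SS m n f ≤ SS m n (fun a b => f (g a) (g b)) := by
  intro n
  induction n with
  | zero => intro f _ _ g _ _; simp [SS]
  | succ n IH =>
    intro f hsym hmono g hgr hginj
    by_cases hmn : n + 1 ≤ m
    · have h0 : ∀ (h : ℕ → ℕ → ℝ), SS m (n + 1) h = 0 := by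
        intro h
        unfold SS
        apply Finset.sum_eq_zero
        intro i _
        rw [Finset.Ico_eq_empty (by omega)]
        simp
      rw [h0, h0]
    push_neg at hmn
    have hmn' : m ≤ n := by omega
    set c := g n with hcdef
    have hc : c ≤ n := by have := hgr n (by omega); omega
    set f' : ℕ → ℕ → ℝ := fun a b => f (skip c a) (skip c b) with hf'
    set g' : ℕ → ℕ := fun i => if g i < c then g i else g i - 1 with hg'
    have hgne : ∀ i, i < n → g i ≠ c := by
      intro i hi h
      have := hginj i n (by omega) (by omega) h
      omega
    have hsk : ∀ i, i < n → skip c (g' i) = g i := by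
      intro i hi
      have hne := hgne i hi
      simp only [hg', skip]
      by_cases h : g i < c
      · simp [h]
      · rw [if_neg h, if_neg (by omega)]
        omega
    have hg'r : ∀ i, i < n → g' i < n := by
      intro i hi
      have hne := hgne i hi
      have hlt := hgr i (by omega)
      simp only [hg']
      by_cases h : g i < c
      · rw [if_pos h]; omega
      · rw [if_neg h]; omega
    have hg'inj : ∀ i j, i < n → j < n → g' i = g' j → i = j := by
      intro i j hi hj h
      apply hginj i j (by omega) (by omega)
      rw [← hsk i hi, ← hsk j hj, h]
    have hf'sym : ∀ a b, f' a b = f' b a := fun a b => hsym _ _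
    have hf'mono : ∀ a' a b b', a' ≤ a → a ≤ b → b ≤ b' → b' < n → f' a' b' ≤ f' a b := by
      intro a' a b b' h1 h2 h3 h4
      apply hmono _ _ _ _ (skip_mono h1) (skip_mono h2) (skip_mono h3)
      simp only [skip]
      split_ifs <;> omega
    have hIH := IH f' hf'sym hf'mono g' hg'r hg'inj
    -- split the permuted side
    rw [SS_split_top m n hm (fun a b => f (g a) (g b))]
    have hconv : SS m n (fun a b => f (g a) (g b)) = SS m n (fun a b => f' (g' a) (g' b)) := by
      unfold SS
      apply Finset.sum_congr rfl
      intro i hi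
      apply Finset.sum_congr rfl
      intro j hj
      simp only [mem_range] at hi
      simp only [mem_Ico] at hj
      simp only [hf']
      rw [hsk i hi, hsk j (by omega)]
    -- the k of the window
    set k := ((range (n + 1 - m)).filter (fun i => g i < c)).card with hkdef
    have hk_le : k ≤ n + 1 - m := by
      rw [hkdef]
      calc _ ≤ (range (n + 1 - m)).card := Finset.card_filter_le _ _
        _ = n + 1 - m := by simp
    -- T1 and T2
    set T1 := (range (n + 1 - m)).filter (fun i => g i < c) |>.image g with hT1
    set T2 := (range (n + 1 - m)).filter (fun i => ¬ g i < c) |>.image g with hT2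
    have hinj1 : ∀ s : Finset ℕ, s ⊆ range (n + 1 - m) →
        Set.InjOn g s := by
      intro s hs x hx y hy hxy
      have hx' := mem_range.mp (hs hx)
      have hy' := mem_range.mp (hs hy)
      exact hginj x y (by omega) (by omega) hxy
    have hcard1 : T1.card = k := by
      rw [hT1, Finset.card_image_of_injOn (hinj1 _ (Finset.filter_subset _ _)), hkdef]
    have hcard2 : T2.card = (n + 1 - m) - k := by
      rw [hT2, Finset.card_image_of_injOn (hinj1 _ (Finset.filter_subset _ _))]
      have := Finset.card_filter_add_card_filter_not
        (s := range (n + 1 - m)) (p := fun i => g i < c)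
      simp only [Finset.card_range] at this
      omega
    have hT1mem : ∀ x ∈ T1, x < c := by
      intro x hx
      rw [hT1] at hx
      obtain ⟨i, hi, rfl⟩ := Finset.mem_image.mp hx
      exact (Finset.mem_filter.mp hi).2
    have hT2mem : ∀ x ∈ T2, c ≤ x ∧ x < n + 1 := by
      intro x hx
      rw [hT2] at hx
      obtain ⟨i, hi, rfl⟩ := Finset.mem_image.mp hx
      have h1 := (Finset.mem_filter.mp hi).2
      have h2 := mem_range.mp (Finset.mem_filter.mp hi).1
      have := hgr i (by omega)
      omega
    have hk2 : k ≤ c := by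
      rw [← hcard1]
      calc T1.card ≤ (range c).card :=
            Finset.card_le_card (fun x hx => mem_range.mpr (hT1mem x hx))
        _ = c := by simp
    have hk1 : c < k + m := by
      by_contra hcon
      push_neg at hcon
      have h2le : T2.card ≤ (Ico c (n + 1)).card := by
        apply Finset.card_le_card
        intro x hx
        exact Finset.mem_Ico.mpr (hT2mem x hx)
      rw [hcard2, Nat.card_Ico] at h2le
      -- also need sharper: T2 ⊆ Ico (c+1) (n+1) since g i ≠ c
      have hT2mem' : ∀ x ∈ T2, c + 1 ≤ x ∧ x < n + 1 := by
        intro x hx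
        rw [hT2] at hx
        obtain ⟨i, hi, rfl⟩ := Finset.mem_image.mp hx
        have h1 := (Finset.mem_filter.mp hi).2
        have h2 := mem_range.mp (Finset.mem_filter.mp hi).1
        have h3 := hgne i (by omega)
        have := hgr i (by omega)
        omega
      have h2le' : T2.card ≤ (Ico (c + 1) (n + 1)).card := by
        apply Finset.card_le_card
        intro x hx
        exact Finset.mem_Ico.mpr (hT2mem' x hx)
      rw [hcard2, Nat.card_Ico] at h2le'
      omega
    have hk3 : k + m ≤ n + 1 := by omega
    -- Sub-lemma A : lower bound for the new column terms
    have hA : (∑ x ∈ range k, f x c) + ∑ x ∈ Ico (k + m) (n + 1), f c x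
        ≤ ∑ i ∈ range (n + 1 - m), f (g i) (g n) := by
      rw [← hcdef]
      rw [← Finset.sum_filter_add_sum_filter_not (range (n + 1 - m))
        (fun i => g i < c) (fun i => f (g i) c)]
      have hs1 : ∑ i ∈ (range (n + 1 - m)).filter (fun i => g i < c), f (g i) c
          = ∑ x ∈ T1, f x c := by
        rw [hT1, Finset.sum_image]
        intro x hx y hy hxy
        exact hinj1 _ (Finset.filter_subset _ _) hx hy hxy
      have hs2 : ∑ i ∈ (range (n + 1 - m)).filter (fun i => ¬ g i < c), f (g i) c
          = ∑ x ∈ T2, f c x := by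
        rw [hT2, Finset.sum_image ?_]
        · exact Finset.sum_congr rfl (fun i _ => hsym _ _)
        · intro x hx y hy hxy
          exact hinj1 _ (Finset.filter_subset _ _) hx hy hxy
      rw [hs1, hs2]
      have hb1 : ∑ x ∈ range k, f x c ≤ ∑ x ∈ T1, f x c := by
        apply sum_range_le_sum_T T1 hT1mem hcard1
        intro x y hxy hyc
        exact hmono x y c c hxy (by omega) le_rfl (by omega)
      have hb2 : ∑ x ∈ Ico (k + m) (n + 1), f c x ≤ ∑ x ∈ T2, f c x := by
        have hwin : Ico ((n + 1) - ((n + 1 - m) - k)) (n + 1) = Ico (k + m) (n + 1) := by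
          congr 1
          omega
        rw [← hwin]
        apply sum_window_le_sum_T T2 hT2mem hcard2
        intro x y h1 h2 h3
        exact hmono c c x y le_rfl h1 h2 h3
      linarith
    -- Sub-lemma B : the window inequality
    have hB : SS m (n + 1) f
        ≤ SS m n f' + ((∑ x ∈ range k, f x c) + ∑ x ∈ Ico (k + m) (n + 1), f c x) := by
      rw [identityI m n c hm hc f, ← hf']
      have e1 : ∑ x ∈ range k, f x c
          = (∑ x ∈ range (c + 1 - m), f x c) + ∑ x ∈ Ico (c + 1 - m) k, f x c :=
        (Finset.sum_range_add_sum_Ico _ (by omega)).symm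
      have e2 : ∑ x ∈ Ico (k + m) (n + 1), f c x
          = (∑ x ∈ Ico (k + m) (min (c + m) (n + 1)), f c x)
            + ∑ x ∈ Ico (min (c + m) (n + 1)) (n + 1), f c x :=
        (Finset.sum_Ico_consecutive _ (by omega) (by omega)).symm
      have e2b : Ico (min (c + m) (n + 1)) (n + 1) = Ico (c + m) (n + 1) := by
        ext x
        simp only [mem_Ico]
        omega
      have e3 : ∑ i ∈ Ico (c + 1 - m) (min c (n + 1 - m)), f i (i + m)
          = (∑ i ∈ Ico (c + 1 - m) k, f i (i + m))
            + ∑ i ∈ Ico k (min c (n + 1 - m)), f i (i + m) :=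
        (Finset.sum_Ico_consecutive _ (by omega) (by omega)).symm
      have comp1 : ∑ i ∈ Ico (c + 1 - m) k, f i (i + m)
          ≤ ∑ x ∈ Ico (c + 1 - m) k, f x c := by
        apply Finset.sum_le_sum
        intro x hx
        simp only [mem_Ico] at hx
        exact hmono x x c (x + m) le_rfl (by omega) (by omega) (by omega)
      have comp2 : ∑ i ∈ Ico k (min c (n + 1 - m)), f i (i + m)
          ≤ ∑ x ∈ Ico (k + m) (min (c + m) (n + 1)), f c x := by
        rw [Finset.sum_Ico_eq_sum_range, Finset.sum_Ico_eq_sum_range]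
        have hrr : min (c + m) (n + 1) - (k + m) = min c (n + 1 - m) - k := by omega
        rw [hrr]
        apply Finset.sum_le_sum
        intro x hx
        simp only [mem_range] at hx
        have hxx : k + m + x = k + x + m := by omega
        rw [hxx]
        exact hmono (k + x) c (k + x + m) (k + x + m) (by omega) (by omega) le_rfl (by omega)
      rw [e1, e2, e2b, e3]
      linarith
    rw [hconv]
    calc SS m (n + 1) f
        ≤ SS m n f' + ((∑ x ∈ range k, f x c) + ∑ x ∈ Ico (k + m) (n + 1), f c x) := hB
      _ ≤ SS m n (fun a b => f' (g' a) (g' b))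
            + ∑ i ∈ range (n + 1 - m), f (g i) (g n) := by
          apply add_le_add hIH hA

def fext {n : ℕ} (X : Matrix (Fin n) (Fin n) ℝ) : ℕ → ℕ → ℝ :=
  fun a b => if h : a < n ∧ b < n then X ⟨a, h.1⟩ ⟨b, h.2⟩ else 0

lemma fext_sym {n : ℕ} (X : Matrix (Fin n) (Fin n) ℝ) (hX : ∀ i j, X i j = X j i) :
    ∀ a b, fext X a b = fext X b a := by
  intro a b
  unfold fext
  by_cases h : a < n ∧ b < n
  · rw [dif_pos h, dif_pos ⟨h.2, h.1⟩]
    exact hX _ _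
  · rw [dif_neg h, dif_neg (fun h' => h ⟨h'.2, h'.1⟩)]

lemma fext_apply {n : ℕ} (X : Matrix (Fin n) (Fin n) ℝ) (i j : Fin n) :
    fext X i j = X i j := by
  unfold fext
  rw [dif_pos ⟨i.2, j.2⟩]

lemma mInner_BDelta {n : ℕ} (Δ : ℕ) (hn : 1 ≤ n) (hΔ2 : Δ ≤ n - 1)
    (X : Matrix (Fin n) (Fin n) ℝ) (hX : ∀ i j, X i j = X j i) :
    mInner X (BDelta n Δ) = 2 * SS (n - Δ) n (fext X) := by
  set m := n - Δ with hm
  have hm1 : 1 ≤ m := by omega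
  have step1 : mInner X (BDelta n Δ)
      = ∑ a ∈ range n, ∑ b ∈ range n,
          (if a + m ≤ b ∨ b + m ≤ a then fext X a b else 0) := by
    rw [mInner]
    rw [← Fin.sum_univ_eq_sum_range
      (fun a => ∑ b ∈ range n, (if a + m ≤ b ∨ b + m ≤ a then fext X a b else 0)) n]
    apply Finset.sum_congr rfl
    intro i _
    rw [← Fin.sum_univ_eq_sum_range
      (fun b => if (i : ℕ) + m ≤ b ∨ b + m ≤ (i : ℕ) then fext X i b else 0) n]
    apply Finset.sum_congr rfl
    intro j _
    show X i j * BDelta n Δ i j = _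
    by_cases hcond : (i : ℕ) + m ≤ (j : ℕ) ∨ (j : ℕ) + m ≤ (i : ℕ)
    · rw [if_pos hcond]
      have hB1 : BDelta n Δ i j = 1 := by
        simp only [BDelta, Matrix.of_apply]
        rw [if_pos]
        rw [le_abs]
        omega
      rw [hB1, mul_one, fext_apply]
    · rw [if_neg hcond]
      have hB0 : BDelta n Δ i j = 0 := by
        simp only [BDelta, Matrix.of_apply]
        rw [if_neg]
        rw [le_abs]
        omega
      rw [hB0, mul_zero]
  have hsplitif : ∀ a b, (if a + m ≤ b ∨ b + m ≤ a then fext X a b else 0)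
      = (if a + m ≤ b then fext X a b else 0) + (if b + m ≤ a then fext X a b else 0) := by
    intro a b
    by_cases h1 : a + m ≤ b
    · rw [if_pos (Or.inl h1), if_pos h1, if_neg (by omega)]
      ring
    · by_cases h2 : b + m ≤ a
      · rw [if_pos (Or.inr h2), if_neg h1, if_pos h2]
        ring
      · rw [if_neg (by tauto), if_neg h1, if_neg h2]
        ring
  have hfilter : ∀ a : ℕ, (range n).filter (fun b => a + m ≤ b) = Ico (a + m) n := by
    intro a
    ext x
    simp only [mem_filter, mem_range, mem_Ico]
    omega
  have hpart1 : ∑ a ∈ range n, ∑ b ∈ range n, (if a + m ≤ b then fext X a b else 0)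
      = SS m n (fext X) := by
    unfold SS
    apply Finset.sum_congr rfl
    intro a _
    rw [← Finset.sum_filter, hfilter a]
  have hpart2 : ∑ a ∈ range n, ∑ b ∈ range n, (if b + m ≤ a then fext X a b else 0)
      = SS m n (fext X) := by
    rw [Finset.sum_comm]
    unfold SS
    apply Finset.sum_congr rfl
    intro b _
    rw [← Finset.sum_filter, hfilter b]
    exact Finset.sum_congr rfl (fun a _ => fext_sym X hX a b)
  calc mInner X (BDelta n Δ)
      = ∑ a ∈ range n, ∑ b ∈ range n,
          (if a + m ≤ b ∨ b + m ≤ a then fext X a b else 0) := step1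
    _ = (∑ a ∈ range n, ∑ b ∈ range n, (if a + m ≤ b then fext X a b else 0))
        + ∑ a ∈ range n, ∑ b ∈ range n, (if b + m ≤ a then fext X a b else 0) := by
        rw [← Finset.sum_add_distrib]
        apply Finset.sum_congr rfl
        intro a _
        rw [← Finset.sum_add_distrib]
        exact Finset.sum_congr rfl (fun b _ => hsplitif a b)
    _ = 2 * SS m n (fext X) := by
        rw [hpart1, hpart2]
        ring


/-- If `A` is an `n × n` Robinson similarity matrix and `1 ≤ Δ ≤ n - 1`,
then for every permutation `π` of `[n]` one has `⟨A_π, B^Δ_n⟩ ≥ ⟨A, B^Δ_n⟩`. -/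
theorem identity_optimal_for_BDelta {n : ℕ} (hn : 1 ≤ n)
    (A : Matrix (Fin n) (Fin n) ℝ) (hA : IsRobinsonSim A)
    (Δ : ℕ) (hΔ1 : 1 ≤ Δ) (hΔ2 : Δ ≤ n - 1) (π : Equiv.Perm (Fin n)) :
    mInner (permMat A π) (BDelta n Δ) ≥ mInner A (BDelta n Δ) := by
  set m := n - Δ with hmdef
  have hm1 : 1 ≤ m := by omega
  have hPsym : ∀ i j, permMat A π i j = permMat A π j i := by
    intro i j
    show A (π i) (π j) = A (π j) (π i)
    exact hA.1 _ _
  rw [ge_iff_le, mInner_BDelta Δ hn hΔ2 A hA.1, mInner_BDelta Δ hn hΔ2 (permMat A π) hPsym]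
  set g : ℕ → ℕ := fun i => if h : i < n then ((π ⟨i, h⟩ : Fin n) : ℕ) else i with hg
  have hg_lt : ∀ i, i < n → g i < n := by
    intro i hi
    simp only [hg]
    rw [dif_pos hi]
    exact (π ⟨i, hi⟩).2
  have hg_inj : ∀ i j, i < n → j < n → g i = g j → i = j := by
    intro i j hi hj hij
    simp only [hg] at hij
    rw [dif_pos hi, dif_pos hj] at hij
    have h1 : π ⟨i, hi⟩ = π ⟨j, hj⟩ := Fin.ext hij
    have h2 : (⟨i, hi⟩ : Fin n) = ⟨j, hj⟩ := π.injective h1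
    exact congrArg Fin.val h2
  have hmono : ∀ a' a b b', a' ≤ a → a ≤ b → b ≤ b' → b' < n →
      fext A a' b' ≤ fext A a b := by
    intro a' a b b' h1 h2 h3 h4
    have ha' : a' < n := by omega
    have ha : a < n := by omega
    have hb : b < n := by omega
    unfold fext
    rw [dif_pos ⟨ha', h4⟩, dif_pos ⟨ha, hb⟩]
    have s1 : A ⟨a', ha'⟩ ⟨b', h4⟩ ≤ A ⟨a, ha⟩ ⟨b', h4⟩ := by
      have := hA.2 ⟨a', ha'⟩ ⟨a, ha⟩ ⟨b', h4⟩ (by simpa using h1) (by simpa using by omega)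
      exact le_trans this (min_le_right _ _)
    have s2 : A ⟨a, ha⟩ ⟨b', h4⟩ ≤ A ⟨a, ha⟩ ⟨b, hb⟩ := by
      have := hA.2 ⟨a, ha⟩ ⟨b, hb⟩ ⟨b', h4⟩ (by simpa using h2) (by simpa using h3)
      exact le_trans this (min_le_left _ _)
    exact le_trans s1 s2
  have hcore := core m hm1 n (fext A) (fext_sym A hA.1) hmono g hg_lt hg_inj
  have hconv : SS m n (fun a b => fext A (g a) (g b)) = SS m n (fext (permMat A π)) := by
    unfold SS
    apply Finset.sum_congr rfl
    intro i hi
    apply Finset.sum_congr rfl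
    intro j hj
    simp only [mem_range] at hi
    simp only [mem_Ico] at hj
    have hjn : j < n := hj.2
    simp only [hg]
    rw [dif_pos hi, dif_pos hjn]
    have e1 : fext A ((π ⟨i, hi⟩ : Fin n) : ℕ) ((π ⟨j, hjn⟩ : Fin n) : ℕ)
        = A (π ⟨i, hi⟩) (π ⟨j, hjn⟩) := fext_apply A _ _
    have e2 : fext (permMat A π) i j = A (π ⟨i, hi⟩) (π ⟨j, hjn⟩) := by
      have := fext_apply (permMat A π) ⟨i, hi⟩ ⟨j, hjn⟩
      exact this
    rw [e1, e2]
  rw [hconv] at hcore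
  linarith
end

section
/- Let n ≥ 1, let A be an n×n Robinson similarity matrix, let Δ be an integer with 1 ≤ Δ ≤ n−1, and let π be a permutation of [n]. Then ∑_{{i,j} ∈ E^Δ_n} A_{π(i)π(j)} ≥ ∑_{{i,j} ∈ E^Δ_n} A_{ij}, where the sums run over the unordered pairs {i, n−Δ+j} with 1 ≤ i ≤ j ≤ Δ. -/
open Finset

/-- rank distance within `S`: number of elements of `S` in `(x, y]`. -/
def rkc (S : Finset ℕ) (x y : ℕ) : ℕ := (S.filter fun z => x < z ∧ z ≤ y).card

lemma star_lemma (m : ℕ) (hm : 1 ≤ m) (R : ℕ → ℕ → Prop) [DecidableRel R]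
    (hcl : ∀ x x' y' y : ℕ, x ≤ x' → x' ≤ y' → y' ≤ y → R x y → R x' y') (τ : ℕ → ℕ) :
    ∀ S : Finset ℕ, Set.InjOn τ S →
    (∑ x ∈ S, ∑ y ∈ S, if x < y ∧ R x y ∧ m ≤ rkc S x y then 1 else 0)
      ≤ ∑ x ∈ S, ∑ y ∈ S,
          if x < y ∧ R x y ∧ m + min (τ x) (τ y) ≤ max (τ x) (τ y) then 1 else 0 := by
  classical
  intro S
  induction S using Finset.strongInduction with
  | _ S IH =>
    intro hτ
    rcases S.eq_empty_or_nonempty with rfl | hne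
    · simp
    obtain ⟨v, hvS, hvmax⟩ := S.exists_max_image τ hne
    set S' := S.erase v with hS'
    have hvS' : v ∉ S' := Finset.notMem_erase v S
    have hins : insert v S' = S := Finset.insert_erase hvS
    have hssub : S' ⊂ S := Finset.erase_ssubset hvS
    have hS'S : S' ⊆ S := Finset.erase_subset _ _
    have hτ' : Set.InjOn τ S' := Set.InjOn.mono (Finset.coe_subset.mpr hS'S) hτ
    have hτlt : ∀ u ∈ S', τ u < τ v := by
      intro u hu
      have h1 : τ u ≤ τ v := hvmax u (hS'S hu)
      have h2 : τ u ≠ τ v := fun h => (Finset.mem_erase.1 hu).1 (hτ (hS'S hu) hvS h)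
      omega
    -- generic splitting of the double sum
    have hsplit : ∀ f : ℕ → ℕ → ℕ, f v v = 0 →
        ∑ x ∈ S, ∑ y ∈ S, f x y
          = (∑ x ∈ S', ∑ y ∈ S', f x y) + ((∑ y ∈ S', f v y) + ∑ x ∈ S', f x v) := by
      intro f hfvv
      rw [← hins, Finset.sum_insert hvS', Finset.sum_insert hvS']
      have h1 : ∀ x ∈ S', ∑ y ∈ insert v S', f x y = f x v + ∑ y ∈ S', f x y := by
        intro x _; rw [Finset.sum_insert hvS']
      rw [Finset.sum_congr rfl h1, Finset.sum_add_distrib, hfvv]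
      ring
    -- pointwise decomposition of the rank indicator on S' × S'
    have hpoint : ∀ x ∈ S', ∀ y ∈ S',
        (if x < y ∧ R x y ∧ m ≤ rkc S x y then (1:ℕ) else 0)
          = (if x < y ∧ R x y ∧ m ≤ rkc S' x y then 1 else 0)
            + (if x < y ∧ R x y ∧ x < v ∧ v < y ∧ rkc S x y = m then 1 else 0) := by
      intro x hx y hy
      have hyv : y ≠ v := (Finset.mem_erase.1 hy).1
      have hrk : rkc S x y = rkc S' x y + (if x < v ∧ v ≤ y then 1 else 0) := by
        unfold rkc
        conv_lhs => rw [← hins]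
        rw [Finset.filter_insert]
        split_ifs with h
        · rw [Finset.card_insert_of_notMem (fun hc => hvS' (Finset.mem_of_mem_filter _ hc))]
        · rfl
      by_cases h1 : x < y ∧ R x y
      · obtain ⟨h1a, h1b⟩ := h1
        simp only [h1a, h1b, true_and]
        split_ifs at hrk ⊢ <;> omega
      · rw [if_neg (fun hc => h1 ⟨hc.1, hc.2.1⟩), if_neg (fun hc => h1 ⟨hc.1, hc.2.1⟩),
          if_neg (fun hc => h1 ⟨hc.1, hc.2.1⟩)]
    have key : (∑ x ∈ S', ∑ y ∈ S',
          if x < y ∧ R x y ∧ m ≤ rkc S x y then (1:ℕ) else 0)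
        = (∑ x ∈ S', ∑ y ∈ S', if x < y ∧ R x y ∧ m ≤ rkc S' x y then 1 else 0)
          + ∑ x ∈ S', ∑ y ∈ S',
              (if x < y ∧ R x y ∧ x < v ∧ v < y ∧ rkc S x y = m then 1 else 0) := by
      rw [← Finset.sum_add_distrib]
      refine Finset.sum_congr rfl fun x hx => ?_
      rw [← Finset.sum_add_distrib]
      exact Finset.sum_congr rfl fun y hy => hpoint x hx y hy
    have hIH := IH S' hssub hτ'
    -- left and right neighbourhoods of v
    set P := S'.filter (fun u => u < v ∧ R u v) with hP
    set Q := S'.filter (fun u => v < u ∧ R v u) with hQ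
    -- rank bounds on P
    have hrkPle : ∀ x ∈ P, rkc S x v ≤ P.card := by
      intro x hx
      obtain ⟨hxS', hxv, hxR⟩ := Finset.mem_filter.1 hx
      have hsub2 : (S.filter fun z => x < z ∧ z ≤ v) ⊆ insert v (P.erase x) := by
        intro z hz
        obtain ⟨hzS, hxz, hzv⟩ := Finset.mem_filter.1 hz
        rcases eq_or_lt_of_le hzv with rfl | hzv'
        · exact Finset.mem_insert_self _ _
        · refine Finset.mem_insert_of_mem (Finset.mem_erase.2 ⟨by omega, ?_⟩)
          exact Finset.mem_filter.2 ⟨Finset.mem_erase.2 ⟨by omega, hzS⟩, hzv',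
            hcl x z v v (le_of_lt hxz) (le_of_lt hzv') le_rfl hxR⟩
      calc rkc S x v ≤ (insert v (P.erase x)).card := Finset.card_le_card hsub2
        _ ≤ (P.erase x).card + 1 := Finset.card_insert_le _ _
        _ = P.card := by
            rw [Finset.card_erase_of_mem hx]
            have : 1 ≤ P.card := Finset.card_pos.2 ⟨x, hx⟩
            omega
    have hrkPanti : ∀ x₁ ∈ P, ∀ x₂ ∈ P, x₁ < x₂ → rkc S x₂ v < rkc S x₁ v := by
      intro x₁ h₁ x₂ h₂ hlt
      obtain ⟨h₂S', h₂v, h₂R⟩ := Finset.mem_filter.1 h₂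
      have hsub2 : insert x₂ (S.filter fun z => x₂ < z ∧ z ≤ v)
          ⊆ (S.filter fun z => x₁ < z ∧ z ≤ v) := by
        intro z hz
        rcases Finset.mem_insert.1 hz with rfl | hz'
        · exact Finset.mem_filter.2 ⟨hS'S h₂S', hlt, le_of_lt h₂v⟩
        · obtain ⟨hzS, hc1, hc2⟩ := Finset.mem_filter.1 hz'
          exact Finset.mem_filter.2 ⟨hzS, by omega, hc2⟩
      have hx2notin : x₂ ∉ (S.filter fun z => x₂ < z ∧ z ≤ v) := by simp
      have hcard := Finset.card_le_card hsub2
      rw [Finset.card_insert_of_notMem hx2notin] at hcard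
      unfold rkc
      omega
    have hinjP : ∀ x₁ ∈ P, ∀ x₂ ∈ P, rkc S x₁ v = rkc S x₂ v → x₁ = x₂ := by
      intro x₁ h₁ x₂ h₂ heq
      rcases lt_trichotomy x₁ x₂ with h | h | h
      · have := hrkPanti x₁ h₁ x₂ h₂ h; omega
      · exact h
      · have := hrkPanti x₂ h₂ x₁ h₁ h; omega
    have hrkPpos : ∀ x, x < v → 1 ≤ rkc S x v := by
      intro x hxv
      exact Finset.card_pos.2 ⟨v, Finset.mem_filter.2 ⟨hvS, hxv, le_rfl⟩⟩
    -- rank bounds on Q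
    have hrkQle : ∀ y ∈ Q, rkc S v y ≤ Q.card := by
      intro y hy
      obtain ⟨hyS', hyv, hyR⟩ := Finset.mem_filter.1 hy
      refine Finset.card_le_card fun z hz => ?_
      obtain ⟨hzS, hvz, hzy⟩ := Finset.mem_filter.1 hz
      exact Finset.mem_filter.2 ⟨Finset.mem_erase.2 ⟨by omega, hzS⟩, hvz,
        hcl v v z y le_rfl (le_of_lt hvz) hzy hyR⟩
    have hrkQmono : ∀ y₁ ∈ Q, ∀ y₂ ∈ Q, y₁ < y₂ → rkc S v y₁ < rkc S v y₂ := by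
      intro y₁ h₁ y₂ h₂ hlt
      obtain ⟨h₂S', h₂v, h₂R⟩ := Finset.mem_filter.1 h₂
      have hsub2 : insert y₂ (S.filter fun z => v < z ∧ z ≤ y₁)
          ⊆ (S.filter fun z => v < z ∧ z ≤ y₂) := by
        intro z hz
        rcases Finset.mem_insert.1 hz with rfl | hz'
        · exact Finset.mem_filter.2 ⟨hS'S h₂S', h₂v, le_rfl⟩
        · obtain ⟨hzS, hc1, hc2⟩ := Finset.mem_filter.1 hz'
          exact Finset.mem_filter.2 ⟨hzS, hc1, by omega⟩
      have hy2notin : y₂ ∉ (S.filter fun z => v < z ∧ z ≤ y₁) := by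
        simp only [Finset.mem_filter, not_and]
        intro _ _; omega
      have hcard := Finset.card_le_card hsub2
      rw [Finset.card_insert_of_notMem hy2notin] at hcard
      unfold rkc
      omega
    have hinjQ : ∀ y₁ ∈ Q, ∀ y₂ ∈ Q, rkc S v y₁ = rkc S v y₂ → y₁ = y₂ := by
      intro y₁ h₁ y₂ h₂ heq
      rcases lt_trichotomy y₁ y₂ with h | h | h
      · have := hrkQmono y₁ h₁ y₂ h₂ h; omega
      · exact h
      · have := hrkQmono y₂ h₂ y₁ h₁ h; omega
    have hrkQpos : ∀ y ∈ S, v < y → 1 ≤ rkc S v y := by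
      intro y hyS hvy
      exact Finset.card_pos.2 ⟨y, Finset.mem_filter.2 ⟨hyS, hvy, le_rfl⟩⟩
    -- (b) the rank-long counts at v
    have hDrP : (∑ x ∈ S', if x < v ∧ R x v ∧ m ≤ rkc S x v then (1:ℕ) else 0)
        ≤ P.card + 1 - m := by
      have hcardeq : (S'.filter fun x => x < v ∧ R x v ∧ m ≤ rkc S x v)
          = P.filter (fun x => m ≤ rkc S x v) := by
        rw [hP, Finset.filter_filter]
        apply Finset.filter_congr
        intro x _
        simp [and_assoc]
      calc (∑ x ∈ S', if x < v ∧ R x v ∧ m ≤ rkc S x v then (1:ℕ) else 0)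
          = (S'.filter fun x => x < v ∧ R x v ∧ m ≤ rkc S x v).card :=
            (Finset.card_filter _ _).symm
        _ = (P.filter (fun x => m ≤ rkc S x v)).card := by rw [hcardeq]
        _ ≤ (Finset.Icc m P.card).card := by
            refine Finset.card_le_card_of_injOn (fun x => rkc S x v) ?_ ?_
            · intro x hx
              obtain ⟨hxP, hxm⟩ := Finset.mem_filter.1 hx
              exact Finset.mem_Icc.2 ⟨hxm, hrkPle x hxP⟩
            · intro a ha b hb hab
              have haP := (Finset.mem_filter.1 (Finset.mem_coe.1 ha)).1
              have hbP := (Finset.mem_filter.1 (Finset.mem_coe.1 hb)).1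
              exact hinjP a haP b hbP hab
        _ = P.card + 1 - m := Nat.card_Icc _ _
    have hDrQ : (∑ y ∈ S', if v < y ∧ R v y ∧ m ≤ rkc S v y then (1:ℕ) else 0)
        ≤ Q.card + 1 - m := by
      have hcardeq : (S'.filter fun y => v < y ∧ R v y ∧ m ≤ rkc S v y)
          = Q.filter (fun y => m ≤ rkc S v y) := by
        rw [hQ, Finset.filter_filter]
        apply Finset.filter_congr
        intro x _
        simp [and_assoc]
      calc (∑ y ∈ S', if v < y ∧ R v y ∧ m ≤ rkc S v y then (1:ℕ) else 0)
          = (S'.filter fun y => v < y ∧ R v y ∧ m ≤ rkc S v y).card :=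
            (Finset.card_filter _ _).symm
        _ = (Q.filter (fun y => m ≤ rkc S v y)).card := by rw [hcardeq]
        _ ≤ (Finset.Icc m Q.card).card := by
            refine Finset.card_le_card_of_injOn (fun y => rkc S v y) ?_ ?_
            · intro y hy
              obtain ⟨hyQ, hym⟩ := Finset.mem_filter.1 hy
              exact Finset.mem_Icc.2 ⟨hym, hrkQle y hyQ⟩
            · intro a ha b hb hab
              have haQ := (Finset.mem_filter.1 (Finset.mem_coe.1 ha)).1
              have hbQ := (Finset.mem_filter.1 (Finset.mem_coe.1 hb)).1
              exact hinjQ a haQ b hbQ hab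
        _ = Q.card + 1 - m := Nat.card_Icc _ _
    -- (c) the spanning pairs
    set W := (S' ×ˢ S').filter
        (fun pr => pr.1 < pr.2 ∧ R pr.1 pr.2 ∧ pr.1 < v ∧ v < pr.2 ∧ rkc S pr.1 pr.2 = m)
      with hW
    have hSpW : (∑ x ∈ S', ∑ y ∈ S',
          if x < y ∧ R x y ∧ x < v ∧ v < y ∧ rkc S x y = m then (1:ℕ) else 0) = W.card := by
      rw [hW, Finset.card_filter, Finset.sum_product]
    have hWfact : ∀ pr ∈ W, pr.1 ∈ P ∧ pr.2 ∈ Q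
        ∧ rkc S pr.1 v + rkc S v pr.2 = m := by
      intro pr hpr
      rw [hW, Finset.mem_filter] at hpr
      obtain ⟨hmem, hxy, hRxy, hxv, hvy, hrkm⟩ := hpr
      have hxS' : pr.1 ∈ S' := (Finset.mem_product.1 hmem).1
      have hyS' : pr.2 ∈ S' := (Finset.mem_product.1 hmem).2
      have hxP : pr.1 ∈ P := Finset.mem_filter.2 ⟨hxS', hxv,
        hcl pr.1 pr.1 v pr.2 le_rfl (le_of_lt hxv) (le_of_lt hvy) hRxy⟩
      have hyQ : pr.2 ∈ Q := Finset.mem_filter.2 ⟨hyS', hvy,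
        hcl pr.1 v pr.2 pr.2 (le_of_lt hxv) (le_of_lt hvy) le_rfl hRxy⟩
      refine ⟨hxP, hyQ, ?_⟩
      have hsplit2 : (S.filter fun z => pr.1 < z ∧ z ≤ pr.2)
          = (S.filter fun z => pr.1 < z ∧ z ≤ v) ∪ (S.filter fun z => v < z ∧ z ≤ pr.2) := by
        rw [← Finset.filter_or]
        apply Finset.filter_congr
        intro z _
        constructor
        · intro h; omega
        · intro h; omega
      have hdisj2 : Disjoint (S.filter fun z => pr.1 < z ∧ z ≤ v)
          (S.filter fun z => v < z ∧ z ≤ pr.2) := by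
        rw [Finset.disjoint_left]
        intro a ha hb
        have h1 := (Finset.mem_filter.1 ha).2
        have h2 := (Finset.mem_filter.1 hb).2
        omega
      have hcc : rkc S pr.1 pr.2 = rkc S pr.1 v + rkc S v pr.2 := by
        unfold rkc
        rw [hsplit2, Finset.card_union_of_disjoint hdisj2]
      omega
    have hWcard : W.card ≤ min P.card (m - 1) + 1 - max 1 (m - Q.card) := by
      calc W.card ≤ (Finset.Icc (max 1 (m - Q.card)) (min P.card (m - 1))).card := by
            refine Finset.card_le_card_of_injOn (fun pr => rkc S pr.1 v) ?_ ?_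
            · intro pr hpr
              obtain ⟨hxP, hyQ, hsum⟩ := hWfact pr hpr
              have h1 : 1 ≤ rkc S pr.1 v :=
                hrkPpos pr.1 (Finset.mem_filter.1 hxP).2.1
              have h2 : rkc S pr.1 v ≤ P.card := hrkPle _ hxP
              have h3 : 1 ≤ rkc S v pr.2 :=
                hrkQpos pr.2 (hS'S (Finset.mem_filter.1 hyQ).1) (Finset.mem_filter.1 hyQ).2.1
              have h4 : rkc S v pr.2 ≤ Q.card := hrkQle _ hyQ
              show rkc S pr.1 v ∈ Finset.Icc _ _
              refine Finset.mem_Icc.2 ⟨?_, ?_⟩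
              · omega
              · omega
            · intro a ha b hb hab
              obtain ⟨haP, haQ, hasum⟩ := hWfact a (Finset.mem_coe.1 ha)
              obtain ⟨hbP, hbQ, hbsum⟩ := hWfact b (Finset.mem_coe.1 hb)
              have hab' : rkc S a.1 v = rkc S b.1 v := hab
              have h1 : a.1 = b.1 := hinjP a.1 haP b.1 hbP hab'
              have h2 : a.2 = b.2 := by
                refine hinjQ a.2 haQ b.2 hbQ ?_
                omega
              exact Prod.ext h1 h2
        _ = min P.card (m - 1) + 1 - max 1 (m - Q.card) := Nat.card_Icc _ _
    have hWdich : W.card = 0 ∨ (1 ≤ P.card ∧ 1 ≤ Q.card ∧ 2 ≤ m) := by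
      rcases W.eq_empty_or_nonempty with h | ⟨pr, hpr⟩
      · left; rw [h]; rfl
      · right
        obtain ⟨hxP, hyQ, hsum⟩ := hWfact pr hpr
        have h1 : 1 ≤ rkc S pr.1 v := hrkPpos pr.1 (Finset.mem_filter.1 hxP).2.1
        have h3 : 1 ≤ rkc S v pr.2 :=
          hrkQpos pr.2 (hS'S (Finset.mem_filter.1 hyQ).1) (Finset.mem_filter.1 hyQ).2.1
        exact ⟨Finset.card_pos.2 ⟨pr.1, hxP⟩, Finset.card_pos.2 ⟨pr.2, hyQ⟩, by omega⟩
    -- (a) the τ-long counts at v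
    have hDtP : (∑ x ∈ S',
          if x < v ∧ R x v ∧ m + min (τ x) (τ v) ≤ max (τ x) (τ v) then (1:ℕ) else 0)
        = (P.filter fun x => m + τ x ≤ τ v).card := by
      have h1 : ∀ x ∈ S',
          (if x < v ∧ R x v ∧ m + min (τ x) (τ v) ≤ max (τ x) (τ v) then (1:ℕ) else 0)
            = (if x < v ∧ R x v ∧ m + τ x ≤ τ v then 1 else 0) := by
        intro x hx
        have h := hτlt x hx
        rw [min_eq_left h.le, max_eq_right h.le]
      rw [Finset.sum_congr rfl h1]
      have hcardeq : (S'.filter fun x => x < v ∧ R x v ∧ m + τ x ≤ τ v)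
          = P.filter (fun x => m + τ x ≤ τ v) := by
        rw [hP, Finset.filter_filter]
        apply Finset.filter_congr
        intro x _
        simp [and_assoc]
      rw [← hcardeq, Finset.card_filter]
    have hDtQ : (∑ y ∈ S',
          if v < y ∧ R v y ∧ m + min (τ v) (τ y) ≤ max (τ v) (τ y) then (1:ℕ) else 0)
        = (Q.filter fun y => m + τ y ≤ τ v).card := by
      have h1 : ∀ y ∈ S',
          (if v < y ∧ R v y ∧ m + min (τ v) (τ y) ≤ max (τ v) (τ y) then (1:ℕ) else 0)
            = (if v < y ∧ R v y ∧ m + τ y ≤ τ v then 1 else 0) := by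
        intro y hy
        have h := hτlt y hy
        rw [min_eq_right h.le, max_eq_left h.le]
      rw [Finset.sum_congr rfl h1]
      have hcardeq : (S'.filter fun y => v < y ∧ R v y ∧ m + τ y ≤ τ v)
          = Q.filter (fun y => m + τ y ≤ τ v) := by
        rw [hQ, Finset.filter_filter]
        apply Finset.filter_congr
        intro y _
        simp [and_assoc]
      rw [← hcardeq, Finset.card_filter]
    have hshort : P.card + Q.card
        ≤ (P.filter fun x => m + τ x ≤ τ v).card
          + (Q.filter fun y => m + τ y ≤ τ v).card + (m - 1) := by
      have e1 := Finset.card_filter_add_card_filter_not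
        (s := P) (p := fun x => m + τ x ≤ τ v)
      have e2 := Finset.card_filter_add_card_filter_not
        (s := Q) (p := fun y => m + τ y ≤ τ v)
      have hdisj : Disjoint (P.filter fun x => ¬ (m + τ x ≤ τ v))
          (Q.filter fun y => ¬ (m + τ y ≤ τ v)) := by
        rw [Finset.disjoint_left]
        intro a ha hb
        have h1 := (Finset.mem_filter.1 (Finset.mem_filter.1 ha).1).2.1
        have h2 := (Finset.mem_filter.1 (Finset.mem_filter.1 hb).1).2.1
        omega
      have hui : ((P.filter fun x => ¬ (m + τ x ≤ τ v))
            ∪ (Q.filter fun y => ¬ (m + τ y ≤ τ v))).card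
          ≤ (Finset.Ico (τ v + 1 - m) (τ v)).card := by
        refine Finset.card_le_card_of_injOn τ ?_ ?_
        · intro u hu
          have huS' : u ∈ S' := by
            rcases Finset.mem_union.1 hu with h | h
            · exact (Finset.mem_filter.1 (Finset.mem_filter.1 h).1).1
            · exact (Finset.mem_filter.1 (Finset.mem_filter.1 h).1).1
          have hshort' : ¬ (m + τ u ≤ τ v) := by
            rcases Finset.mem_union.1 hu with h | h
            · exact (Finset.mem_filter.1 h).2
            · exact (Finset.mem_filter.1 h).2
          have := hτlt u huS'
          exact Finset.mem_Ico.2 ⟨by omega, by omega⟩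
        · intro a ha b hb hab
          have haS : a ∈ S := by
            rcases Finset.mem_union.1 (Finset.mem_coe.1 ha) with h | h
            · exact hS'S (Finset.mem_filter.1 (Finset.mem_filter.1 h).1).1
            · exact hS'S (Finset.mem_filter.1 (Finset.mem_filter.1 h).1).1
          have hbS : b ∈ S := by
            rcases Finset.mem_union.1 (Finset.mem_coe.1 hb) with h | h
            · exact hS'S (Finset.mem_filter.1 (Finset.mem_filter.1 h).1).1
            · exact hS'S (Finset.mem_filter.1 (Finset.mem_filter.1 h).1).1
          exact hτ haS hbS hab
      rw [Finset.card_union_of_disjoint hdisj, Nat.card_Ico] at hui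
      omega
    -- assemble
    rw [hsplit (fun x y => if x < y ∧ R x y ∧ m ≤ rkc S x y then 1 else 0) (by simp),
      hsplit (fun x y =>
        if x < y ∧ R x y ∧ m + min (τ x) (τ y) ≤ max (τ x) (τ y) then 1 else 0) (by simp),
      key, hDtP, hDtQ, hSpW]
    have harith : W.card
        + ((∑ y ∈ S', if v < y ∧ R v y ∧ m ≤ rkc S v y then (1:ℕ) else 0)
          + ∑ x ∈ S', if x < v ∧ R x v ∧ m ≤ rkc S x v then (1:ℕ) else 0)
        ≤ (Q.filter fun y => m + τ y ≤ τ v).card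
          + (P.filter fun x => m + τ x ≤ τ v).card := by
      rcases hWdich with h0 | ⟨hp1, hq1, hm2⟩
      · omega
      · have hWc := hWcard
        rw [min_def, max_def] at hWc
        split_ifs at hWc <;> omega
    omega

lemma robinson_mono {n : ℕ} {A : Matrix (Fin n) (Fin n) ℝ} (hA : IsRobinsonSim A)
    {x x' y' y : Fin n} (h1 : x ≤ x') (h2 : x' ≤ y') (h3 : y' ≤ y) :
    A x y ≤ A x' y' := by
  have ha := hA.2 x x' y h1 (le_trans h2 h3)
  have hb := hA.2 x' y' y h2 h3
  calc A x y ≤ A x' y := le_trans ha (min_le_right _ _)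
    _ ≤ A x' y' := le_trans hb (min_le_left _ _)

/-- position assignment: `tauOf π x` is the position of value `x` under `π`. -/
def tauOf {n : ℕ} (π : Equiv.Perm (Fin n)) : ℕ → ℕ :=
  fun x => if h : x < n then ((π.symm ⟨x, h⟩ : Fin n) : ℕ) else 0

lemma tauOf_val {n : ℕ} (π : Equiv.Perm (Fin n)) (i : Fin n) :
    tauOf π ((π i : Fin n) : ℕ) = (i : ℕ) := by
  unfold tauOf
  rw [dif_pos (π i).isLt]
  have h : (⟨((π i : Fin n) : ℕ), (π i).isLt⟩ : Fin n) = π i := rfl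
  rw [h, Equiv.symm_apply_apply]

lemma tauOf_inj {n : ℕ} (π : Equiv.Perm (Fin n)) :
    Set.InjOn (tauOf π) (Finset.range n) := by
  intro a ha b hb hab
  simp only [Finset.coe_range, Set.mem_Iio] at ha hb
  unfold tauOf at hab
  rw [dif_pos ha, dif_pos hb] at hab
  have h1 : (π.symm ⟨a, ha⟩) = (π.symm ⟨b, hb⟩) := Fin.ext hab
  have h2 : (⟨a, ha⟩ : Fin n) = ⟨b, hb⟩ := π.symm.injective h1
  exact congrArg Fin.val h2

/-- If `A` is an `n × n` Robinson similarity matrix, `1 ≤ Δ ≤ n - 1` and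
`π` is a permutation of `[n]`, then the sum of `A (π i) (π j)` over the unordered
pairs in `E^Δ_n` is at least the corresponding sum of `A i j`. -/
theorem EDelta_sum_ge {n : ℕ} (hn : 1 ≤ n)
    (A : Matrix (Fin n) (Fin n) ℝ) (hA : IsRobinsonSim A)
    (Δ : ℕ) (hΔ1 : 1 ≤ Δ) (hΔ2 : Δ ≤ n - 1) (π : Equiv.Perm (Fin n)) :
    ∑ p ∈ EDelta n Δ, A (π p.1) (π p.2) ≥ ∑ p ∈ EDelta n Δ, A p.1 p.2 := by
  classical
  set m := n - Δ with hmdef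
  have hm1 : 1 ≤ m := by omega
  have hEmem : ∀ p : Fin n × Fin n, p ∈ EDelta n Δ ↔ (p.1 : ℕ) + m ≤ (p.2 : ℕ) := by
    intro p
    rw [hmdef]
    unfold EDelta
    simp
  have hrank : ∀ x y : ℕ, y < n → rkc (Finset.range n) x y = y - x := by
    intro x y hy
    unfold rkc
    have h : (Finset.range n).filter (fun z => x < z ∧ z ≤ y) = Finset.Ico (x+1) (y+1) := by
      ext z
      simp only [Finset.mem_filter, Finset.mem_range, Finset.mem_Ico]
      omega
    rw [h, Nat.card_Ico]
    omega
  rw [ge_iff_le]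
  suffices H : ∀ k : ℕ, ∀ A : Matrix (Fin n) (Fin n) ℝ, IsRobinsonSim A →
      ((Finset.univ : Finset (Fin n × Fin n)).image fun p => A p.1 p.2).card ≤ k →
      ∑ p ∈ EDelta n Δ, A p.1 p.2 ≤ ∑ p ∈ EDelta n Δ, A (π p.1) (π p.2) by
    exact H _ A hA le_rfl
  intro k
  induction k with
  | zero =>
    intro A hA hcard
    exfalso
    have hne : ((Finset.univ : Finset (Fin n × Fin n)).image fun p => A p.1 p.2).Nonempty :=
      ⟨A ⟨0, hn⟩ ⟨0, hn⟩, Finset.mem_image.2 ⟨(⟨0, hn⟩, ⟨0, hn⟩), Finset.mem_univ _, rfl⟩⟩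
    have := Finset.card_pos.2 hne
    omega
  | succ k IH =>
    intro A hA hcard
    set V := ((Finset.univ : Finset (Fin n × Fin n)).image fun p => A p.1 p.2) with hV
    have hVne : V.Nonempty :=
      ⟨A ⟨0, hn⟩ ⟨0, hn⟩, Finset.mem_image.2 ⟨(⟨0, hn⟩, ⟨0, hn⟩), Finset.mem_univ _, rfl⟩⟩
    have hmemV : ∀ x y : Fin n, A x y ∈ V :=
      fun x y => Finset.mem_image.2 ⟨(x, y), Finset.mem_univ _, rfl⟩
    by_cases hc1 : V.card ≤ 1
    · have hall : ∀ p q : Fin n × Fin n, A p.1 p.2 = A q.1 q.2 := by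
        intro p q
        exact Finset.card_le_one.1 hc1 _ (hmemV p.1 p.2) _ (hmemV q.1 q.2)
      exact le_of_eq (Finset.sum_congr rfl fun p _ => hall p (π p.1, π p.2))
    · have hV2 : 2 ≤ V.card := by omega
      set v := V.max' hVne with hvdef
      have hvV : v ∈ V := V.max'_mem hVne
      have hV'ne : (V.erase v).Nonempty := by
        rw [← Finset.card_pos, Finset.card_erase_of_mem hvV]
        omega
      set v' := (V.erase v).max' hV'ne with hv'def
      have hv'V : v' ∈ V.erase v := (V.erase v).max'_mem hV'ne
      have hv'v : v' < v :=
        lt_of_le_of_ne (V.le_max' v' (Finset.mem_of_mem_erase hv'V)) (Finset.ne_of_mem_erase hv'V)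
      have hle_v : ∀ x y : Fin n, A x y ≤ v := fun x y => V.le_max' _ (hmemV x y)
      have hlt_v' : ∀ x y : Fin n, A x y ≠ v → A x y ≤ v' := fun x y hne' =>
        (V.erase v).le_max' _ (Finset.mem_erase.2 ⟨hne', hmemV x y⟩)
      set A₂ : Matrix (Fin n) (Fin n) ℝ := Matrix.of (fun i j => min (A i j) v') with hA₂def
      have hA₂app : ∀ i j, A₂ i j = min (A i j) v' := fun i j => rfl
      have hA₂rob : IsRobinsonSim A₂ := by
        constructor
        · intro i j
          rw [hA₂app, hA₂app, hA.1 i j]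
        · intro i j k h1 h2
          rw [hA₂app, hA₂app, hA₂app]
          have h := hA.2 i j k h1 h2
          refine le_min (min_le_min ?_ le_rfl) (min_le_min ?_ le_rfl)
          · exact le_trans h (min_le_left _ _)
          · exact le_trans h (min_le_right _ _)
      have hA₂img : ((Finset.univ : Finset (Fin n × Fin n)).image fun p => A₂ p.1 p.2).card ≤ k := by
        have hsub : ((Finset.univ : Finset (Fin n × Fin n)).image fun p => A₂ p.1 p.2)
            ⊆ V.erase v := by
          intro w hw
          obtain ⟨p, _, rfl⟩ := Finset.mem_image.1 hw
          rw [hA₂app]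
          by_cases hp : A p.1 p.2 = v
          · rw [hp, min_eq_right hv'v.le]
            exact hv'V
          · rw [min_eq_left (hlt_v' _ _ hp)]
            exact Finset.mem_erase.2 ⟨hp, hmemV _ _⟩
        calc ((Finset.univ : Finset (Fin n × Fin n)).image fun p => A₂ p.1 p.2).card
            ≤ (V.erase v).card := Finset.card_le_card hsub
          _ = V.card - 1 := Finset.card_erase_of_mem hvV
          _ ≤ k := by omega
      have hIH2 := IH A₂ hA₂rob hA₂img
      have hpoint : ∀ x y : Fin n,
          A x y = A₂ x y + (v - v') * (if v ≤ A x y then (1:ℝ) else 0) := by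
        intro x y
        rw [hA₂app]
        by_cases h : v ≤ A x y
        · have hxy : A x y = v := le_antisymm (hle_v x y) h
          rw [if_pos h, hxy, min_eq_right hv'v.le]
          ring
        · have h1 : A x y ≤ v' := hlt_v' x y (fun hc => h (le_of_eq hc.symm))
          rw [if_neg h, min_eq_left h1]
          ring
      -- the counting step
      have hcount : ((EDelta n Δ).filter fun p => v ≤ A p.1 p.2).card
          ≤ ((EDelta n Δ).filter fun p => v ≤ A (π p.1) (π p.2)).card := by
        set R : ℕ → ℕ → Prop :=
          fun x y => ∃ (hx : x < n) (hy : y < n), v ≤ A ⟨x, hx⟩ ⟨y, hy⟩ with hRdef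
        have hclR : ∀ x x' y' y : ℕ, x ≤ x' → x' ≤ y' → y' ≤ y → R x y → R x' y' := by
          intro x x' y' y h1 h2 h3 hxy
          obtain ⟨hx, hy, hv⟩ := hxy
          have hx' : x' < n := by omega
          have hy' : y' < n := by omega
          refine ⟨hx', hy', le_trans hv ?_⟩
          exact robinson_mono hA (show (⟨x,hx⟩ : Fin n) ≤ ⟨x',hx'⟩ from h1)
            (show (⟨x',hx'⟩ : Fin n) ≤ ⟨y',hy'⟩ from h2)
            (show (⟨y',hy'⟩ : Fin n) ≤ ⟨y,hy⟩ from h3)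
        have hRsym : ∀ x y : ℕ, R x y → R y x := by
          intro x y hxy
          obtain ⟨hx, hy, hv⟩ := hxy
          exact ⟨hy, hx, by rw [hA.1]; exact hv⟩
        have hstar := star_lemma m hm1 R hclR (tauOf π) (Finset.range n) (tauOf_inj π)
        have e1 : (∑ x ∈ Finset.range n, ∑ y ∈ Finset.range n,
              if x < y ∧ R x y ∧ m ≤ rkc (Finset.range n) x y then 1 else 0)
            = ((Finset.range n ×ˢ Finset.range n).filter
                fun q => q.1 < q.2 ∧ R q.1 q.2 ∧ m ≤ rkc (Finset.range n) q.1 q.2).card := by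
          rw [Finset.card_filter, Finset.sum_product]
        have e2 : (∑ x ∈ Finset.range n, ∑ y ∈ Finset.range n,
              if x < y ∧ R x y ∧ m + min (tauOf π x) (tauOf π y)
                ≤ max (tauOf π x) (tauOf π y) then 1 else 0)
            = ((Finset.range n ×ˢ Finset.range n).filter
                fun q => q.1 < q.2 ∧ R q.1 q.2 ∧ m + min (tauOf π q.1) (tauOf π q.2)
                  ≤ max (tauOf π q.1) (tauOf π q.2)).card := by
          rw [Finset.card_filter, Finset.sum_product]
        rw [e1, e2] at hstar
        -- identity-side bijection
        have hbij1 : ((EDelta n Δ).filter fun p => v ≤ A p.1 p.2).card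
            = ((Finset.range n ×ˢ Finset.range n).filter
                fun q => q.1 < q.2 ∧ R q.1 q.2 ∧ m ≤ rkc (Finset.range n) q.1 q.2).card := by
          refine Finset.card_bij (fun p _ => ((p.1 : ℕ), (p.2 : ℕ))) ?_ ?_ ?_
          · intro p hp
            obtain ⟨hpE, hpv⟩ := Finset.mem_filter.1 hp
            have hE := (hEmem p).1 hpE
            refine Finset.mem_filter.2 ⟨Finset.mem_product.2
              ⟨Finset.mem_range.2 p.1.isLt, Finset.mem_range.2 p.2.isLt⟩, ?_, ?_, ?_⟩
            · show (p.1 : ℕ) < (p.2 : ℕ); omega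
            · exact ⟨p.1.isLt, p.2.isLt, hpv⟩
            · show m ≤ rkc (Finset.range n) (p.1 : ℕ) (p.2 : ℕ)
              rw [hrank _ _ p.2.isLt]
              omega
          · intro p hp p' hp' h
            have h1 : (p.1 : ℕ) = (p'.1 : ℕ) := congrArg Prod.fst h
            have h2 : (p.2 : ℕ) = (p'.2 : ℕ) := congrArg Prod.snd h
            exact Prod.ext (Fin.ext h1) (Fin.ext h2)
          · intro q hq
            obtain ⟨hqmem, hlt, hR, hrk⟩ := Finset.mem_filter.1 hq
            obtain ⟨hx, hy, hvA⟩ := hR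
            refine ⟨(⟨q.1, hx⟩, ⟨q.2, hy⟩), ?_, ?_⟩
            · refine Finset.mem_filter.2 ⟨(hEmem _).2 ?_, hvA⟩
              show q.1 + m ≤ q.2
              rw [hrank _ _ hy] at hrk
              omega
            · exact Prod.mk.eta
        -- π-side bijection
        have hbij2 : ((EDelta n Δ).filter fun p => v ≤ A (π p.1) (π p.2)).card
            = ((Finset.range n ×ˢ Finset.range n).filter
                fun q => q.1 < q.2 ∧ R q.1 q.2 ∧ m + min (tauOf π q.1) (tauOf π q.2)
                  ≤ max (tauOf π q.1) (tauOf π q.2)).card := by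
          refine Finset.card_bij
            (fun p _ => (min ((π p.1 : Fin n) : ℕ) ((π p.2 : Fin n) : ℕ),
                         max ((π p.1 : Fin n) : ℕ) ((π p.2 : Fin n) : ℕ))) ?_ ?_ ?_
          · intro p hp
            obtain ⟨hpE, hpv⟩ := Finset.mem_filter.1 hp
            have hE := (hEmem p).1 hpE
            have hne12 : ((π p.1 : Fin n) : ℕ) ≠ ((π p.2 : Fin n) : ℕ) := by
              intro hc
              have : p.1 = p.2 := π.injective (Fin.ext hc)
              have : (p.1 : ℕ) = (p.2 : ℕ) := congrArg Fin.val this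
              omega
            have hRab : R ((π p.1 : Fin n) : ℕ) ((π p.2 : Fin n) : ℕ) :=
              ⟨(π p.1).isLt, (π p.2).isLt, hpv⟩
            refine Finset.mem_filter.2 ⟨Finset.mem_product.2
              ⟨Finset.mem_range.2 (lt_of_le_of_lt (min_le_left _ _) (π p.1).isLt),
               Finset.mem_range.2 (max_lt (π p.1).isLt (π p.2).isLt)⟩, ?_, ?_, ?_⟩
            · show min _ _ < max _ _
              omega
            · show R (min _ _) (max _ _)
              rcases le_total ((π p.1 : Fin n) : ℕ) ((π p.2 : Fin n) : ℕ) with h | h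
              · rw [min_eq_left h, max_eq_right h]; exact hRab
              · rw [min_eq_right h, max_eq_left h]; exact hRsym _ _ hRab
            · show m + min (tauOf π (min _ _)) (tauOf π (max _ _))
                ≤ max (tauOf π (min _ _)) (tauOf π (max _ _))
              rcases le_total ((π p.1 : Fin n) : ℕ) ((π p.2 : Fin n) : ℕ) with h | h
              · rw [min_eq_left h, max_eq_right h, tauOf_val, tauOf_val]
                omega
              · rw [min_eq_right h, max_eq_left h, tauOf_val, tauOf_val]
                omega
          · intro p hp p' hp' h
            obtain ⟨hpE, _⟩ := Finset.mem_filter.1 hp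
            obtain ⟨hp'E, _⟩ := Finset.mem_filter.1 hp'
            have hE := (hEmem p).1 hpE
            have hE' := (hEmem p').1 hp'E
            have h1 : min ((π p.1 : Fin n) : ℕ) ((π p.2 : Fin n) : ℕ)
                = min ((π p'.1 : Fin n) : ℕ) ((π p'.2 : Fin n) : ℕ) := congrArg Prod.fst h
            have h2 : max ((π p.1 : Fin n) : ℕ) ((π p.2 : Fin n) : ℕ)
                = max ((π p'.1 : Fin n) : ℕ) ((π p'.2 : Fin n) : ℕ) := congrArg Prod.snd h
            have hcases : (((π p.1 : Fin n) : ℕ) = ((π p'.1 : Fin n) : ℕ)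
                  ∧ ((π p.2 : Fin n) : ℕ) = ((π p'.2 : Fin n) : ℕ))
                ∨ (((π p.1 : Fin n) : ℕ) = ((π p'.2 : Fin n) : ℕ)
                  ∧ ((π p.2 : Fin n) : ℕ) = ((π p'.1 : Fin n) : ℕ)) := by omega
            rcases hcases with ⟨ha, hb⟩ | ⟨ha, hb⟩
            · have e1' : p.1 = p'.1 := π.injective (Fin.ext ha)
              have e2' : p.2 = p'.2 := π.injective (Fin.ext hb)
              exact Prod.ext e1' e2'
            · have e1' : p.1 = p'.2 := π.injective (Fin.ext ha)
              have e2' : p.2 = p'.1 := π.injective (Fin.ext hb)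
              have v1 : (p.1 : ℕ) = (p'.2 : ℕ) := congrArg Fin.val e1'
              have v2 : (p.2 : ℕ) = (p'.1 : ℕ) := congrArg Fin.val e2'
              have : False := by omega
              exact absurd this (fun h => h)
          · intro q hq
            obtain ⟨hqmem, hlt, hR, hτc⟩ := Finset.mem_filter.1 hq
            obtain ⟨hx, hy, hvA⟩ := hR
            have ht1 : tauOf π q.1 = ((π.symm ⟨q.1, hx⟩ : Fin n) : ℕ) := dif_pos hx
            have ht2 : tauOf π q.2 = ((π.symm ⟨q.2, hy⟩ : Fin n) : ℕ) := dif_pos hy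
            rw [ht1, ht2] at hτc
            have hππ1 : π (π.symm ⟨q.1, hx⟩) = ⟨q.1, hx⟩ := Equiv.apply_symm_apply _ _
            have hππ2 : π (π.symm ⟨q.2, hy⟩) = ⟨q.2, hy⟩ := Equiv.apply_symm_apply _ _
            rcases le_total ((π.symm ⟨q.1, hx⟩ : Fin n) : ℕ) ((π.symm ⟨q.2, hy⟩ : Fin n) : ℕ)
              with h | h
            · refine ⟨(π.symm ⟨q.1, hx⟩, π.symm ⟨q.2, hy⟩), ?_, ?_⟩
              · refine Finset.mem_filter.2 ⟨(hEmem _).2 ?_, ?_⟩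
                · show ((π.symm ⟨q.1, hx⟩ : Fin n) : ℕ) + m ≤ ((π.symm ⟨q.2, hy⟩ : Fin n) : ℕ)
                  rw [min_eq_left h, max_eq_right h] at hτc
                  omega
                · show v ≤ A (π (π.symm ⟨q.1, hx⟩)) (π (π.symm ⟨q.2, hy⟩))
                  rw [hππ1, hππ2]
                  exact hvA
              · show (min ((π (π.symm ⟨q.1, hx⟩) : Fin n) : ℕ) ((π (π.symm ⟨q.2, hy⟩) : Fin n) : ℕ),
                      max ((π (π.symm ⟨q.1, hx⟩) : Fin n) : ℕ) ((π (π.symm ⟨q.2, hy⟩) : Fin n) : ℕ)) = q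
                rw [hππ1, hππ2]
                show (min q.1 q.2, max q.1 q.2) = q
                rw [min_eq_left hlt.le, max_eq_right hlt.le]
            · refine ⟨(π.symm ⟨q.2, hy⟩, π.symm ⟨q.1, hx⟩), ?_, ?_⟩
              · refine Finset.mem_filter.2 ⟨(hEmem _).2 ?_, ?_⟩
                · show ((π.symm ⟨q.2, hy⟩ : Fin n) : ℕ) + m ≤ ((π.symm ⟨q.1, hx⟩ : Fin n) : ℕ)
                  rw [min_eq_right h, max_eq_left h] at hτc
                  omega
                · show v ≤ A (π (π.symm ⟨q.2, hy⟩)) (π (π.symm ⟨q.1, hx⟩))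
                  rw [hππ1, hππ2, hA.1]
                  exact hvA
              · show (min ((π (π.symm ⟨q.2, hy⟩) : Fin n) : ℕ) ((π (π.symm ⟨q.1, hx⟩) : Fin n) : ℕ),
                      max ((π (π.symm ⟨q.2, hy⟩) : Fin n) : ℕ) ((π (π.symm ⟨q.1, hx⟩) : Fin n) : ℕ)) = q
                rw [hππ1, hππ2]
                show (min q.2 q.1, max q.2 q.1) = q
                rw [min_eq_right hlt.le, max_eq_left hlt.le]
        rw [hbij1, hbij2]
        exact hstar
      -- assemble the sums
      have hsum1 : ∑ p ∈ EDelta n Δ, A p.1 p.2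
          = ∑ p ∈ EDelta n Δ, A₂ p.1 p.2
            + (v - v') * (((EDelta n Δ).filter fun p => v ≤ A p.1 p.2).card : ℝ) := by
        calc ∑ p ∈ EDelta n Δ, A p.1 p.2
            = ∑ p ∈ EDelta n Δ, (A₂ p.1 p.2 + (v - v') * (if v ≤ A p.1 p.2 then (1:ℝ) else 0)) :=
              Finset.sum_congr rfl fun p _ => hpoint p.1 p.2
          _ = ∑ p ∈ EDelta n Δ, A₂ p.1 p.2
              + ∑ p ∈ EDelta n Δ, (v - v') * (if v ≤ A p.1 p.2 then (1:ℝ) else 0) :=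
              Finset.sum_add_distrib
          _ = _ := by rw [← Finset.mul_sum, Finset.sum_boole]
      have hsum2 : ∑ p ∈ EDelta n Δ, A (π p.1) (π p.2)
          = ∑ p ∈ EDelta n Δ, A₂ (π p.1) (π p.2)
            + (v - v') * (((EDelta n Δ).filter fun p => v ≤ A (π p.1) (π p.2)).card : ℝ) := by
        calc ∑ p ∈ EDelta n Δ, A (π p.1) (π p.2)
            = ∑ p ∈ EDelta n Δ,
                (A₂ (π p.1) (π p.2) + (v - v') * (if v ≤ A (π p.1) (π p.2) then (1:ℝ) else 0)) :=
              Finset.sum_congr rfl fun p _ => hpoint (π p.1) (π p.2)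
          _ = ∑ p ∈ EDelta n Δ, A₂ (π p.1) (π p.2)
              + ∑ p ∈ EDelta n Δ, (v - v') * (if v ≤ A (π p.1) (π p.2) then (1:ℝ) else 0) :=
              Finset.sum_add_distrib
          _ = _ := by rw [← Finset.mul_sum, Finset.sum_boole]
      rw [hsum1, hsum2]
      refine add_le_add hIH2 ?_
      refine mul_le_mul_of_nonneg_left ?_ (by linarith)
      exact_mod_cast hcount
end

section
/- Let B be an n×n symmetric Toeplitz matrix and let β_0, β_1, …, β_{n−1} be the real numbers such that B_{ij} = β_k whenever |i−j| = k. Then B = β_0 J + ∑_{k=1}^{n−1} (β_k − β_{k−1}) B^{n−k}_n, where J is the all-ones matrix. Moreover, if B is a Robinson dissimilarity matrix with β_0 = 0 ≤ β_1 ≤ ⋯ ≤ β_{n−1}, then B is a conic (nonnegative) combination of the matrices B^Δ_n for Δ = 1, …, n−1. -/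
/-- The all-ones matrix `J`. -/
def Jmat (n : ℕ) : Matrix (Fin n) (Fin n) ℝ := Matrix.of fun _ _ => 1

lemma telescope_aux (β : ℕ → ℝ) (d : ℕ) :
    ∑ k ∈ Finset.Icc 1 d, (β k - β (k - 1)) = β d - β 0 := by
  induction d with
  | zero => simp
  | succ m ih =>
    rw [Finset.sum_Icc_succ_top (by omega : 1 ≤ m + 1), ih]
    simp only [Nat.add_sub_cancel]
    ring

/-- a symmetric Toeplitz matrix `B` with entries `β_{|i-j|}` decomposes as
`B = β 0 • J + ∑_{k=1}^{n-1} (β k - β (k-1)) • B^{n-k}_n`; moreover, if `B` is a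
Robinson dissimilarity with `β 0 = 0 ≤ β 1 ≤ ⋯ ≤ β (n-1)`, then `B` is a conic
combination of the matrices `B^Δ_n`, `Δ = 1, …, n-1`. -/
theorem toeplitz_decomposition {n : ℕ} (hn : 1 ≤ n)
    (B : Matrix (Fin n) (Fin n) ℝ) (hBsym : ∀ i j, B i j = B j i) (hBtoep : IsToeplitz B)
    (β : ℕ → ℝ) (hβ : ∀ i j : Fin n, B i j = β ((i.val : ℤ) - (j.val : ℤ)).natAbs) :
    B = β 0 • Jmat n + ∑ k ∈ Finset.Icc 1 (n - 1), (β k - β (k - 1)) • BDelta n (n - k)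
    ∧ (IsRobinsonDissim B → β 0 = 0 → (∀ k, 1 ≤ k → k ≤ n - 1 → β (k - 1) ≤ β k) →
        ∃ lam : ℕ → ℝ, (∀ Δ ∈ Finset.Icc 1 (n - 1), 0 ≤ lam Δ) ∧
          B = ∑ Δ ∈ Finset.Icc 1 (n - 1), lam Δ • BDelta n Δ) := by
  have key : B = β 0 • Jmat n +
      ∑ k ∈ Finset.Icc 1 (n - 1), (β k - β (k - 1)) • BDelta n (n - k) := by
    ext i j
    have hi := i.isLt
    have hj := j.isLt
    set d := ((i.val : ℤ) - (j.val : ℤ)).natAbs with hd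
    have hdle : d ≤ n - 1 := by omega
    have habs : |(i.val : ℤ) - (j.val : ℤ)| = (d : ℤ) := by
      rw [Int.abs_eq_natAbs]
    rw [hβ, ← hd]
    simp only [Matrix.add_apply, Matrix.smul_apply, Matrix.sum_apply, Jmat, BDelta,
      Matrix.of_apply, smul_eq_mul, mul_one]
    have hcong : ∀ k ∈ Finset.Icc 1 (n - 1),
        (β k - β (k - 1)) * (if (n : ℤ) - ((n - k : ℕ) : ℤ) ≤ |(i.val : ℤ) - (j.val : ℤ)| then (1:ℝ) else 0)
        = if k ≤ d then β k - β (k - 1) else 0 := by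
      intro k hk
      simp only [Finset.mem_Icc] at hk
      have hcond : ((n : ℤ) - ((n - k : ℕ) : ℤ) ≤ |(i.val : ℤ) - (j.val : ℤ)|) ↔ k ≤ d := by
        rw [habs]
        omega
      by_cases h : k ≤ d
      · rw [if_pos (hcond.mpr h), if_pos h, mul_one]
      · rw [if_neg (fun hc => h (hcond.mp hc)), if_neg h, mul_zero]
    rw [Finset.sum_congr rfl hcong, ← Finset.sum_filter]
    have hfil : (Finset.Icc 1 (n - 1)).filter (fun k => k ≤ d) = Finset.Icc 1 d := by
      ext k
      simp only [Finset.mem_filter, Finset.mem_Icc]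
      omega
    rw [hfil, telescope_aux]
    ring
  refine ⟨key, fun _ hβ0 hmono => ?_⟩
  refine ⟨fun Δ => β (n - Δ) - β (n - Δ - 1), ?_, ?_⟩
  · intro Δ hΔ
    simp only [Finset.mem_Icc] at hΔ
    have := hmono (n - Δ) (by omega) (by omega)
    dsimp only
    linarith
  · rw [key, hβ0, zero_smul, zero_add]
    refine Finset.sum_nbij' (fun k => n - k) (fun Δ => n - Δ) ?_ ?_ ?_ ?_ ?_
    · intro k hk
      simp only [Finset.mem_Icc] at hk ⊢
      omega
    · intro Δ hΔ
      simp only [Finset.mem_Icc] at hΔ ⊢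
      omega
    · intro k hk
      simp only [Finset.mem_Icc] at hk
      omega
    · intro Δ hΔ
      simp only [Finset.mem_Icc] at hΔ
      omega
    · intro k hk
      simp only [Finset.mem_Icc] at hk
      dsimp only
      have h1 : n - (n - k) = k := by omega
      rw [h1]
end

section
/- Let A, B be n×n symmetric real matrices such that A is a Robinson similarity matrix, B is a Robinson dissimilarity matrix, and at least one of A or B is a Toeplitz matrix. Then the identity permutation is an optimal solution to QAP(A,B); that is, ⟨A_π, B⟩ ≥ ⟨A, B⟩ for every permutation π of [n]. -/
open Finset

lemma maj_lemma (G : ℕ → ℝ) (hG : Monotone G) :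
    ∀ (k : ℕ) (T : Finset ℕ) (ν : ℕ → ℕ), T.card = k →
      (∀ c, (T.filter fun t => ν t ≤ c).card ≤ c + 1) →
      ∑ r ∈ range k, G r ≤ ∑ t ∈ T, G (ν t) := by
  intro k
  induction k with
  | zero => intro T ν hc _; rw [Finset.card_eq_zero.mp hc]; simp
  | succ k ih =>
    intro T ν hc hcnt
    have hne : T.Nonempty := by
      rw [← Finset.card_pos, hc]; omega
    obtain ⟨t0, ht0, hmax⟩ := Finset.exists_max_image T ν hne
    have hνt0 : k ≤ ν t0 := by
      have := hcnt (ν t0)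
      rw [Finset.filter_true_of_mem (fun t ht => hmax t ht)] at this
      omega
    have hsum : ∑ t ∈ T.erase t0, G (ν t) + G (ν t0) = ∑ t ∈ T, G (ν t) :=
      Finset.sum_erase_add T _ ht0
    have hIH : ∑ r ∈ range k, G r ≤ ∑ t ∈ T.erase t0, G (ν t) := by
      apply ih _ ν (by rw [Finset.card_erase_of_mem ht0, hc]; omega)
      intro c
      exact le_trans (Finset.card_le_card (Finset.filter_subset_filter _ (Finset.erase_subset _ _))) (hcnt c)
    rw [Finset.sum_range_succ, ← hsum]
    exact add_le_add hIH (hG hνt0)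

lemma sum_reindex_ite {a b : ℕ} (P Q : ℕ → Prop) [DecidablePred P] [DecidablePred Q]
    (g1 g2 : ℕ → ℝ) (φ ψ : ℕ → ℕ)
    (h1 : ∀ t, t < a → P t → ψ t < b ∧ Q (ψ t) ∧ g2 (ψ t) = g1 t ∧ φ (ψ t) = t)
    (h2 : ∀ s, s < b → Q s → φ s < a ∧ P (φ s) ∧ ψ (φ s) = s) :
    (∑ t ∈ range a, if P t then g1 t else 0) = ∑ s ∈ range b, if Q s then g2 s else 0 := by
  rw [← Finset.sum_filter, ← Finset.sum_filter]
  refine Finset.sum_nbij' ψ φ ?_ ?_ ?_ ?_ ?_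
  · intro t ht
    simp only [Finset.mem_filter, Finset.mem_range] at ht ⊢
    exact ⟨(h1 t ht.1 ht.2).1, (h1 t ht.1 ht.2).2.1⟩
  · intro s hs
    simp only [Finset.mem_filter, Finset.mem_range] at hs ⊢
    exact ⟨(h2 s hs.1 hs.2).1, (h2 s hs.1 hs.2).2.1⟩
  · intro t ht
    simp only [Finset.mem_filter, Finset.mem_range] at ht
    exact (h1 t ht.1 ht.2).2.2.2
  · intro s hs
    simp only [Finset.mem_filter, Finset.mem_range] at hs
    exact (h2 s hs.1 hs.2).2.2
  · intro t ht
    simp only [Finset.mem_filter, Finset.mem_range] at ht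
    exact ((h1 t ht.1 ht.2).2.2.1).symm

def Ssum (m : ℕ) {n N : ℕ} (A : Matrix (Fin n) (Fin n) ℝ) (f : Fin N → Fin n) : ℝ :=
  ∑ i : Fin N, ∑ j : Fin N, if i.val + m ≤ j.val then A (f i) (f j) else 0

def FFd {n K : ℕ} (A : Matrix (Fin n) (Fin n) ℝ) (f : Fin (K+1) → Fin n) (a c : ℕ) : ℝ :=
  A (f ⟨min a K, by omega⟩) (f ⟨min c K, by omega⟩)

lemma FFd_eq {n K : ℕ} (A : Matrix (Fin n) (Fin n) ℝ) (f : Fin (K+1) → Fin n)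
    (i j : Fin (K+1)) : FFd A f i.val j.val = A (f i) (f j) := by
  have e1 : (⟨min i.val K, by omega⟩ : Fin (K+1)) = i := by
    apply Fin.ext; have := i.isLt; simp; omega
  have e2 : (⟨min j.val K, by omega⟩ : Fin (K+1)) = j := by
    apply Fin.ext; have := j.isLt; simp; omega
  unfold FFd
  rw [e1, e2]

def savNd (pv s : ℕ) : ℕ := if s < pv then s else s + 1

lemma sav {K : ℕ} (p : Fin (K+1)) (i : Fin K) :
    (p.succAbove i).val = savNd p.val i.val := by
  unfold savNd
  rcases Nat.lt_or_ge i.val p.val with h | h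
  · rw [Fin.succAbove_of_castSucc_lt _ _ (by simpa [Fin.lt_def] using h)]
    simp [h]
  · rw [Fin.succAbove_of_le_castSucc _ _ (by simpa [Fin.le_def] using h)]
    simp [Nat.not_lt.mpr h]

lemma split_lemma (m : ℕ) (hm : 1 ≤ m) {n K : ℕ} (A : Matrix (Fin n) (Fin n) ℝ)
    (f : Fin (K+1) → Fin n) (p : Fin (K+1)) :
    Ssum m A f = Ssum m A (f ∘ p.succAbove)
      + ∑ t ∈ range (K+1-m), FFd A f (min t p.val) (max p.val (t+m)) := by
  classical
  have hpK : p.val ≤ K := by have := p.isLt; omega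
  -- step 1 : expand the double sum at p
  have expand : ∀ (g : Fin (K+1) → Fin (K+1) → ℝ),
      (∑ i, ∑ j, g i j)
        = g p p + (∑ j : Fin K, g p (p.succAbove j)) + (∑ i : Fin K, g (p.succAbove i) p)
          + ∑ i : Fin K, ∑ j : Fin K, g (p.succAbove i) (p.succAbove j) := by
    intro g
    rw [Fin.sum_univ_succAbove (fun i => ∑ j, g i j) p,
        Fin.sum_univ_succAbove (fun j => g p j) p]
    have h2 : ∀ i : Fin K, (∑ j, g (p.succAbove i) j)
        = g (p.succAbove i) p + ∑ j : Fin K, g (p.succAbove i) (p.succAbove j) :=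
      fun i => Fin.sum_univ_succAbove _ p
    rw [Finset.sum_congr rfl (fun i _ => h2 i), Finset.sum_add_distrib]
    ring
  have main := expand (fun i j => if i.val + m ≤ j.val then A (f i) (f j) else 0)
  have hpp : (if p.val + m ≤ p.val then A (f p) (f p) else 0) = 0 := by
    rw [if_neg]; omega
  -- pointwise split of the double sum
  have ptsplit : ∀ i' j' : Fin K,
      (if (p.succAbove i').val + m ≤ (p.succAbove j').val
        then A (f (p.succAbove i')) (f (p.succAbove j')) else 0)
      = (if i'.val + m ≤ j'.val then A (f (p.succAbove i')) (f (p.succAbove j')) else 0)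
        + (if i'.val < p.val ∧ p.val ≤ j'.val ∧ i'.val + m = j'.val + 1
            then A (f (p.succAbove i')) (f (p.succAbove j')) else 0) := by
    intro i' j'
    have hi := sav p i'
    have hj := sav p j'
    unfold savNd at hi hj
    by_cases h1 : i'.val < p.val <;> by_cases h2 : j'.val < p.val <;>
      simp only [h1, h2, if_true, if_false] at hi hj <;>
      rw [hi, hj] <;> split_ifs <;> first | ring1 | (exfalso; omega)
  have dsum : (∑ i' : Fin K, ∑ j' : Fin K,
        if (p.succAbove i').val + m ≤ (p.succAbove j').val
          then A (f (p.succAbove i')) (f (p.succAbove j')) else 0)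
      = Ssum m A (f ∘ p.succAbove)
        + ∑ i' : Fin K, ∑ j' : Fin K,
            (if i'.val < p.val ∧ p.val ≤ j'.val ∧ i'.val + m = j'.val + 1
              then A (f (p.succAbove i')) (f (p.succAbove j')) else 0) := by
    rw [Ssum, ← Finset.sum_add_distrib]
    apply Finset.sum_congr rfl
    intro i' _
    rw [← Finset.sum_add_distrib]
    exact Finset.sum_congr rfl (fun j' _ => ptsplit i' j')
  -- collapse the straddle double sum
  have collapse : ∀ i' : Fin K,
      (∑ j' : Fin K, if i'.val < p.val ∧ p.val ≤ j'.val ∧ i'.val + m = j'.val + 1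
          then A (f (p.succAbove i')) (f (p.succAbove j')) else 0)
      = (if i'.val < p.val ∧ p.val < i'.val + m ∧ i'.val + m ≤ K
          then FFd A f i'.val (i'.val + m) else 0) := by
    intro i'
    by_cases hD : i'.val < p.val ∧ p.val < i'.val + m ∧ i'.val + m ≤ K
    · have hj0 : i'.val + m - 1 < K := by omega
      rw [if_pos hD]
      rw [Finset.sum_eq_single_of_mem (⟨i'.val + m - 1, hj0⟩ : Fin K) (Finset.mem_univ _)
        (by
          intro j' _ hne
          rw [if_neg]
          intro hc
          refine hne (Fin.ext ?_)
          simp only [Fin.val_mk]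
          omega)]
      rw [if_pos (by refine ⟨hD.1, ?_, ?_⟩ <;> simp only [Fin.val_mk] <;> omega)]
      have e1 : p.succAbove i' = (⟨min i'.val K, by omega⟩ : Fin (K+1)) := by
        apply Fin.ext
        rw [sav]; unfold savNd
        have hlt : i'.val < p.val := hD.1
        have := i'.isLt
        rw [if_pos hlt]
        simp only [Fin.val_mk]
        omega
      have e2 : p.succAbove (⟨i'.val + m - 1, hj0⟩ : Fin K)
          = (⟨min (i'.val + m) K, by omega⟩ : Fin (K+1)) := by
        apply Fin.ext
        rw [sav]; unfold savNd
        simp only [Fin.val_mk]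
        have hge : ¬ (i'.val + m - 1 < p.val) := by omega
        rw [if_neg hge]
        omega
      rw [FFd, ← e1, ← e2]
    · rw [if_neg hD]
      apply Finset.sum_eq_zero
      intro j' _
      rw [if_neg]
      intro hc
      exact hD ⟨hc.1, by omega, by have := j'.isLt; omega⟩
  -- convert boundary sums to ℕ-range sums
  have rowNat : (∑ j' : Fin K, if p.val + m ≤ (p.succAbove j').val
        then A (f p) (f (p.succAbove j')) else 0)
      = ∑ s ∈ range K, (if p.val + m ≤ savNd p.val s
          then FFd A f p.val (savNd p.val s) else 0) := by
    rw [← Fin.sum_univ_eq_sum_range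
      (fun s => if p.val + m ≤ savNd p.val s then FFd A f p.val (savNd p.val s) else 0) K]
    apply Finset.sum_congr rfl
    intro j' _
    rw [← sav p j', FFd_eq A f p (p.succAbove j')]
  have colNat : (∑ i' : Fin K, if (p.succAbove i').val + m ≤ p.val
        then A (f (p.succAbove i')) (f p) else 0)
      = ∑ s ∈ range K, (if savNd p.val s + m ≤ p.val
          then FFd A f (savNd p.val s) p.val else 0) := by
    rw [← Fin.sum_univ_eq_sum_range
      (fun s => if savNd p.val s + m ≤ p.val then FFd A f (savNd p.val s) p.val else 0) K]
    apply Finset.sum_congr rfl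
    intro i' _
    rw [← sav p i', FFd_eq A f (p.succAbove i') p]
  have strNat : (∑ i' : Fin K, (if i'.val < p.val ∧ p.val < i'.val + m ∧ i'.val + m ≤ K
        then FFd A f i'.val (i'.val + m) else 0))
      = ∑ s ∈ range K, (if s < p.val ∧ p.val < s + m ∧ s + m ≤ K
          then FFd A f s (s + m) else 0) := by
    rw [← Fin.sum_univ_eq_sum_range
      (fun s => if s < p.val ∧ p.val < s + m ∧ s + m ≤ K then FFd A f s (s + m) else 0) K]
  -- the three reindexings
  set W : ℕ → ℝ := fun t => FFd A f (min t p.val) (max p.val (t + m)) with hW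
  have R1 : (∑ s ∈ range K, if savNd p.val s + m ≤ p.val
        then FFd A f (savNd p.val s) p.val else 0)
      = ∑ t ∈ range (K+1-m), if t + m ≤ p.val then W t else 0 := by
    apply sum_reindex_ite _ _ _ _ id id
    · intro s hs hP
      unfold savNd at hP
      by_cases hsp : s < p.val
      · rw [if_pos hsp] at hP
        simp only [id_eq]
        refine ⟨by omega, by omega, ?_, trivial⟩
        simp only [hW]
        rw [show min s p.val = s from by omega, show max p.val (s + m) = p.val from by omega]
        unfold savNd
        rw [if_pos hsp]
      · rw [if_neg hsp] at hP
        exact absurd hP (by omega)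
    · intro t ht hQ
      simp only [id_eq]
      refine ⟨by omega, ?_, trivial⟩
      unfold savNd
      rw [if_pos (show t < p.val from by omega)]
      omega
  have R2 : (∑ s ∈ range K, if p.val + m ≤ savNd p.val s
        then FFd A f p.val (savNd p.val s) else 0)
      = ∑ t ∈ range (K+1-m), if p.val ≤ t then W t else 0 := by
    apply sum_reindex_ite _ _ _ _ (fun t => t + m - 1) (fun s => savNd p.val s - m)
    · intro s hs hP
      have hsp : ¬ s < p.val := by
        intro hsp
        unfold savNd at hP
        rw [if_pos hsp] at hP
        omega
      have hsav : savNd p.val s = s + 1 := by unfold savNd; rw [if_neg hsp]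
      rw [hsav] at hP
      simp only [hsav]
      refine ⟨by omega, by omega, ?_, by omega⟩
      simp only [hW]
      rw [show min (s + 1 - m) p.val = p.val from by omega,
          show max p.val (s + 1 - m + m) = s + 1 from by omega]
    · intro t ht hQ
      have h1 : t + m - 1 < K := by omega
      have hsp : ¬ (t + m - 1 < p.val) := by omega
      have hsav : savNd p.val (t + m - 1) = t + m := by
        unfold savNd; rw [if_neg hsp]; omega
      refine ⟨h1, ?_, ?_⟩
      · show p.val + m ≤ savNd p.val (t + m - 1)
        rw [hsav]; omega
      · show savNd p.val (t + m - 1) - m = t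
        rw [hsav]; omega
  have R3 : (∑ s ∈ range K, if s < p.val ∧ p.val < s + m ∧ s + m ≤ K
        then FFd A f s (s + m) else 0)
      = ∑ t ∈ range (K+1-m), if t < p.val ∧ p.val < t + m then W t else 0 := by
    apply sum_reindex_ite _ _ _ _ id id
    · intro s hs hP
      simp only [id_eq]
      refine ⟨by omega, ⟨hP.1, hP.2.1⟩, ?_, trivial⟩
      simp only [hW]
      rw [show min s p.val = s from by omega, show max p.val (s + m) = s + m from by omega]
    · intro t ht hQ
      simp only [id_eq]
      exact ⟨by omega, ⟨hQ.1, hQ.2, by omega⟩, trivial⟩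
  -- three-way pointwise split of the target sum
  have tri : ∀ t, W t = (if t + m ≤ p.val then W t else 0)
      + (if t < p.val ∧ p.val < t + m then W t else 0)
      + (if p.val ≤ t then W t else 0) := by
    intro t
    split_ifs <;> first | ring1 | (exfalso; omega)
  have target : (∑ t ∈ range (K+1-m), W t)
      = (∑ t ∈ range (K+1-m), if t + m ≤ p.val then W t else 0)
        + (∑ t ∈ range (K+1-m), if t < p.val ∧ p.val < t + m then W t else 0)
        + (∑ t ∈ range (K+1-m), if p.val ≤ t then W t else 0) := by
    rw [← Finset.sum_add_distrib, ← Finset.sum_add_distrib]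
    exact Finset.sum_congr rfl (fun t _ => tri t)
  -- assemble
  rw [Ssum, main, hpp, dsum, Finset.sum_congr rfl (fun i' (_ : i' ∈ univ) => collapse i'),
      rowNat, colNat, strNat, R1, R2, R3, target]
  ring

lemma delta_lemma (m : ℕ) (hm : 1 ≤ m) {n K : ℕ} (A : Matrix (Fin n) (Fin n) ℝ)
    (hA : IsRobinsonSim A)
    (f h : Fin (K+1) → Fin n) (hf : Function.Injective f) (hh : StrictMono h)
    (hr : Set.range f = Set.range h) (p : Fin (K+1)) (hp : f p = h (Fin.last K)) :
    ∑ t ∈ range (K+1-m), FFd A h (min t (Fin.last K).val) (max (Fin.last K).val (t+m))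
      ≤ ∑ t ∈ range (K+1-m), FFd A f (min t p.val) (max p.val (t+m)) := by
  classical
  have hpK : p.val ≤ K := by have := p.isLt; omega
  -- the rank function
  have hmem : ∀ i, ∃ r, h r = f i := by
    intro i
    have : f i ∈ Set.range h := by rw [← hr]; exact Set.mem_range_self i
    exact this
  choose ρ hρ using hmem
  have hρinj : Function.Injective ρ := by
    intro i j hij
    exact hf (by rw [← hρ i, ← hρ j, hij])
  have hρp : ρ p = Fin.last K := hh.injective (by rw [hρ p, hp])
  -- the comparison column
  set G : ℕ → ℝ := fun r => A (h ⟨min r K, by omega⟩) (h (Fin.last K)) with hG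
  have hGmono : Monotone G := by
    intro r r' hrr
    simp only [hG]
    have h1 : h ⟨min r K, by omega⟩ ≤ h ⟨min r' K, by omega⟩ := by
      apply hh.monotone
      rw [Fin.le_def]
      simp only [Fin.val_mk]
      omega
    have h2 : h ⟨min r' K, by omega⟩ ≤ h (Fin.last K) := hh.monotone (Fin.le_last _)
    exact le_trans (hA.2 _ _ _ h1 h2) (min_le_right _ _)
  -- index pair functions
  set xt : ℕ → Fin (K+1) := fun t => ⟨min t p.val, by omega⟩ with hxt
  set yt : ℕ → Fin (K+1) := fun t => ⟨min (max p.val (t+m)) K, by omega⟩ with hyt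
  set ν : ℕ → ℕ := fun t => min (ρ (xt t)).val (ρ (yt t)).val with hν
  -- pointwise bound
  have bound : ∀ (u v : Fin (K+1)), G (min (ρ u).val (ρ v).val) ≤ A (f u) (f v) := by
    intro u v
    have hcapu : (⟨min (ρ u).val K, by omega⟩ : Fin (K+1)) = ρ u := by
      apply Fin.ext; have := (ρ u).isLt; simp only [Fin.val_mk]; omega
    have hcapv : (⟨min (ρ v).val K, by omega⟩ : Fin (K+1)) = ρ v := by
      apply Fin.ext; have := (ρ v).isLt; simp only [Fin.val_mk]; omega
    rcases le_total (ρ u).val (ρ v).val with huv | huv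
    · have hmin : min (ρ u).val (ρ v).val = (ρ u).val := by omega
      rw [hmin, ← hρ u, ← hρ v]
      simp only [hG]
      rw [hcapu]
      have h1 : h (ρ u) ≤ h (ρ v) := hh.monotone (by rw [Fin.le_def]; exact huv)
      have h2 : h (ρ v) ≤ h (Fin.last K) := hh.monotone (Fin.le_last _)
      exact le_trans (hA.2 _ _ _ h1 h2) (min_le_left _ _)
    · have hmin : min (ρ u).val (ρ v).val = (ρ v).val := by omega
      rw [hmin, ← hρ u, ← hρ v, hA.1 (h (ρ u)) (h (ρ v))]
      simp only [hG]
      rw [hcapv]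
      have h1 : h (ρ v) ≤ h (ρ u) := hh.monotone (by rw [Fin.le_def]; exact huv)
      have h2 : h (ρ u) ≤ h (Fin.last K) := hh.monotone (Fin.le_last _)
      exact le_trans (hA.2 _ _ _ h1 h2) (min_le_left _ _)
  -- counting condition
  have hcnt : ∀ c, ((range (K+1-m)).filter fun t => ν t ≤ c).card ≤ c + 1 := by
    intro c
    by_cases hcK : K ≤ c
    · calc ((range (K+1-m)).filter fun t => ν t ≤ c).card
          ≤ (range (K+1-m)).card := Finset.card_filter_le _ _
        _ ≤ c + 1 := by rw [Finset.card_range]; omega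
    · push_neg at hcK
      set w : ℕ → Fin (K+1) := fun t => if (ρ (xt t)).val ≤ c then xt t else yt t with hw
      have hwρ : ∀ t ∈ (range (K+1-m)).filter fun t => ν t ≤ c, (ρ (w t)).val ≤ c := by
        intro t ht
        simp only [Finset.mem_filter, Finset.mem_range, hν] at ht
        simp only [hw]
        split
        · assumption
        · omega
      have hwne : ∀ t ∈ (range (K+1-m)).filter fun t => ν t ≤ c, w t ≠ p := by
        intro t ht he
        have := hwρ t ht
        rw [he, hρp] at this
        simp only [Fin.val_last] at this
        omega
      calc ((range (K+1-m)).filter fun t => ν t ≤ c).card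
          ≤ (Finset.univ.filter fun i : Fin (K+1) => (ρ i).val ≤ c).card := by
            apply Finset.card_le_card_of_injOn w
            · intro t ht
              simp only [Finset.mem_coe, Finset.mem_filter, Finset.mem_univ, true_and]
              exact hwρ t ht
            · intro t ht t' ht' hww
              simp only [Finset.coe_filter, Set.mem_setOf_eq, Finset.mem_range] at ht ht'
              have hne := hwne t (by simp only [Finset.mem_filter, Finset.mem_range]; exact ht)
              have hne' := hwne t' (by simp only [Finset.mem_filter, Finset.mem_range]; exact ht')
              have hxv : ∀ s, (xt s).val = min s p.val := fun s => rfl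
              have hyv : ∀ s, (yt s).val = min (max p.val (s+m)) K := fun s => rfl
              have hvv : (w t).val = (w t').val := by rw [hww]
              have hvp : (w t).val ≠ p.val := fun hc => hne (Fin.ext hc)
              have hvp' : (w t').val ≠ p.val := fun hc => hne' (Fin.ext hc)
              have e1 : (xt t).val = min t p.val := rfl
              have e2 : (xt t').val = min t' p.val := rfl
              have e3 : (yt t).val = min (max p.val (t+m)) K := rfl
              have e4 : (yt t').val = min (max p.val (t'+m)) K := rfl
              by_cases b1 : (ρ (xt t)).val ≤ c <;> by_cases b2 : (ρ (xt t')).val ≤ c <;>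
                simp only [hw, b1, b2, if_true, if_false] at hvv hvp hvp' <;>
                omega
        _ ≤ (range (c+1)).card := by
            apply Finset.card_le_card_of_injOn (fun i => (ρ i).val)
            · intro i hi
              simp only [Finset.mem_coe, Finset.mem_filter] at hi
              simp only [Finset.mem_coe, Finset.mem_range]
              omega
            · intro i _ j _ hij
              exact hρinj (Fin.ext hij)
        _ = c + 1 := Finset.card_range _
  -- rewrite both sides
  have hLHS : ∀ t ∈ range (K+1-m),
      FFd A f (min t p.val) (max p.val (t+m)) = A (f (xt t)) (f (yt t)) := by
    intro t ht
    have e1 : (⟨min (min t p.val) K, by omega⟩ : Fin (K+1)) = xt t := by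
      apply Fin.ext; simp only [hxt, Fin.val_mk]; omega
    have e2 : (⟨min (max p.val (t+m)) K, by omega⟩ : Fin (K+1)) = yt t := by
      apply Fin.ext; simp only [hyt, Fin.val_mk]
    simp only [FFd]
    rw [e1, e2]
  have hRHS : ∀ t ∈ range (K+1-m),
      FFd A h (min t (Fin.last K).val) (max (Fin.last K).val (t+m)) = G t := by
    intro t ht
    have e1 : (⟨min (min t (Fin.last K).val) K, by omega⟩ : Fin (K+1))
        = (⟨min t K, by omega⟩ : Fin (K+1)) := by
      apply Fin.ext; simp only [Fin.val_mk, Fin.val_last]; omega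
    have e2 : (⟨min (max (Fin.last K).val (t+m)) K, by omega⟩ : Fin (K+1)) = Fin.last K := by
      apply Fin.ext; simp only [Fin.val_mk, Fin.val_last]; omega
    simp only [FFd]
    rw [e1, e2]
  calc ∑ t ∈ range (K+1-m), FFd A h (min t (Fin.last K).val) (max (Fin.last K).val (t+m))
      = ∑ t ∈ range (K+1-m), G t := Finset.sum_congr rfl hRHS
    _ ≤ ∑ t ∈ range (K+1-m), G (ν t) :=
        maj_lemma G hGmono (K+1-m) (range (K+1-m)) ν (Finset.card_range _) hcnt
    _ ≤ ∑ t ∈ range (K+1-m), A (f (xt t)) (f (yt t)) :=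
        Finset.sum_le_sum (fun t _ => bound (xt t) (yt t))
    _ = ∑ t ∈ range (K+1-m), FFd A f (min t p.val) (max p.val (t+m)) :=
        (Finset.sum_congr rfl hLHS).symm

lemma image_compl_singleton {α β : Type*} {g : α → β} (hg : Function.Injective g) (p : α) :
    g '' {p}ᶜ = Set.range g \ {g p} := by
  ext y
  constructor
  · rintro ⟨x, hx, rfl⟩
    refine ⟨Set.mem_range_self x, ?_⟩
    simp only [Set.mem_singleton_iff]
    intro he
    exact hx (hg he)
  · rintro ⟨⟨x, rfl⟩, hy⟩
    refine ⟨x, ?_, rfl⟩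
    intro he
    apply hy
    simp only [Set.mem_singleton_iff] at he ⊢
    rw [he]

lemma core_lemma (m : ℕ) (hm : 1 ≤ m) {n : ℕ} (A : Matrix (Fin n) (Fin n) ℝ)
    (hA : IsRobinsonSim A) :
    ∀ (N : ℕ) (f h : Fin N → Fin n), Function.Injective f → StrictMono h →
      Set.range f = Set.range h → Ssum m A h ≤ Ssum m A f := by
  intro N
  induction N with
  | zero =>
    intro f h _ _ _
    simp [Ssum]
  | succ K ih =>
    intro f h hf hh hr
    have hmem : h (Fin.last K) ∈ Set.range f := by
      rw [hr]; exact Set.mem_range_self _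
    obtain ⟨p, hp⟩ := hmem
    have hf' : Function.Injective (f ∘ p.succAbove) :=
      hf.comp (Fin.succAbove_right_injective)
    have hh' : StrictMono (h ∘ Fin.castSucc) :=
      hh.comp (Fin.strictMono_castSucc)
    have e0 : (Set.range (Fin.castSucc : Fin K → Fin (K+1))) = ({Fin.last K}ᶜ : Set (Fin (K+1))) := by
      rw [Fin.range_castSucc]
      ext i
      simp only [Set.mem_setOf_eq, Set.mem_compl_iff, Set.mem_singleton_iff, Fin.ext_iff,
        Fin.val_last]
      have := i.isLt
      omega
    have hr' : Set.range (f ∘ p.succAbove) = Set.range (h ∘ Fin.castSucc) := by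
      rw [Set.range_comp, Set.range_comp, Fin.range_succAbove, e0,
          image_compl_singleton hf p, image_compl_singleton hh.injective (Fin.last K), hr, hp]
    rw [split_lemma m hm A f p, split_lemma m hm A h (Fin.last K), Fin.succAbove_last]
    exact add_le_add (ih _ _ hf' hh' hr') (delta_lemma m hm A hA f h hf hh hr p hp)

def distN {N : ℕ} (i j : Fin N) : ℕ := max i.val j.val - min i.val j.val

lemma band_split {n N : ℕ} (A : Matrix (Fin n) (Fin n) ℝ) (hAs : ∀ i j, A i j = A j i)
    (d : ℕ) (hd : 1 ≤ d) (g : Fin N → Fin n) :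
    (∑ i : Fin N, ∑ j : Fin N, if d ≤ distN i j then A (g i) (g j) else 0)
      = Ssum d A g + Ssum d A g := by
  have pt : ∀ i j : Fin N, (if d ≤ distN i j then A (g i) (g j) else 0)
      = (if i.val + d ≤ j.val then A (g i) (g j) else 0)
        + (if j.val + d ≤ i.val then A (g i) (g j) else 0) := by
    intro i j
    unfold distN
    split_ifs <;> first | ring1 | (exfalso; omega)
  calc (∑ i : Fin N, ∑ j : Fin N, if d ≤ distN i j then A (g i) (g j) else 0)
      = (∑ i : Fin N, ∑ j : Fin N, ((if i.val + d ≤ j.val then A (g i) (g j) else 0)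
          + (if j.val + d ≤ i.val then A (g i) (g j) else 0))) := by
        exact Finset.sum_congr rfl (fun i _ => Finset.sum_congr rfl (fun j _ => pt i j))
    _ = Ssum d A g + ∑ i : Fin N, ∑ j : Fin N, (if j.val + d ≤ i.val then A (g i) (g j) else 0) := by
        rw [Ssum, ← Finset.sum_add_distrib]
        exact Finset.sum_congr rfl (fun i _ => Finset.sum_add_distrib)
    _ = Ssum d A g + Ssum d A g := by
        congr 1
        rw [Finset.sum_comm]
        rw [Ssum]
        apply Finset.sum_congr rfl
        intro j _
        apply Finset.sum_congr rfl
        intro i _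
        rw [hAs (g i) (g j)]

lemma main_toeplitzB {n : ℕ} (A B : Matrix (Fin n) (Fin n) ℝ)
    (hA : IsRobinsonSim A) (hB : IsRobinsonDissim B) (hTB : IsToeplitz B)
    (π : Equiv.Perm (Fin n)) :
    mInner A B ≤ mInner (permMat A π) B := by
  classical
  cases n with
  | zero => simp [mInner]
  | succ n' =>
    -- the Toeplitz profile
    set b : ℕ → ℝ := fun e => B ⟨0, Nat.succ_pos n'⟩ ⟨min e n', by omega⟩ with hb
    have hdiag : ∀ (s k : ℕ) (hsk : s + k ≤ n'),
        B ⟨s, by omega⟩ ⟨s + k, by omega⟩ = B ⟨0, by omega⟩ ⟨k, by omega⟩ := by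
      intro s
      induction s with
      | zero =>
        intro k h
        have e1 : (⟨0 + k, by omega⟩ : Fin (n'+1)) = ⟨k, by omega⟩ := Fin.ext (by simp)
        rw [e1]
      | succ s ihs =>
        intro k h
        have h1 : s + k ≤ n' := by omega
        have step := hTB ⟨s, by omega⟩ ⟨s + k, by omega⟩ (by simp; omega) (by simp; omega)
        have e1 : (⟨(s:ℕ) + 1, by simp; omega⟩ : Fin (n'+1)) = ⟨s + 1, by omega⟩ := rfl
        have e2 : (⟨(s+k:ℕ) + 1, by simp; omega⟩ : Fin (n'+1)) = ⟨s + 1 + k, by omega⟩ :=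
          Fin.ext (by simp; omega)
        rw [e1, e2] at step
        rw [← step]
        exact ihs k h1
    have hBval : ∀ i j : Fin (n'+1), i.val ≤ j.val → B i j = b (j.val - i.val) := by
      intro i j hij
      have h1 : i.val + (j.val - i.val) ≤ n' := by have := j.isLt; omega
      have key := hdiag i.val (j.val - i.val) h1
      have e1 : (⟨i.val, by omega⟩ : Fin (n'+1)) = i := Fin.ext rfl
      have e2 : (⟨i.val + (j.val - i.val), by omega⟩ : Fin (n'+1)) = j := Fin.ext (by simp; omega)
      rw [e1, e2] at key
      rw [key]
      simp only [hb]
      have e3 : (⟨min (j.val - i.val) n', by omega⟩ : Fin (n'+1)) = ⟨j.val - i.val, by omega⟩ :=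
        Fin.ext (by simp; omega)
      rw [e3]
    have hbmono : ∀ d e : ℕ, d ≤ e → e ≤ n' → b d ≤ b e := by
      intro d e hde he
      have h1 : (⟨0, Nat.succ_pos n'⟩ : Fin (n'+1)) ≤ ⟨min d n', by omega⟩ := by
        rw [Fin.le_def]; simp
      have h2 : (⟨min d n', by omega⟩ : Fin (n'+1)) ≤ ⟨min e n', by omega⟩ := by
        rw [Fin.le_def]; simp; omega
      have := hB.2 _ _ _ h1 h2
      simp only [hb]
      exact le_trans (le_max_left _ _) this
    -- pointwise expansion of B
    have hBpt : ∀ i j : Fin (n'+1), B i j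
        = b 0 + ∑ d ∈ range n', ((b (d+1) - b d) * if d + 1 ≤ distN i j then 1 else 0) := by
      intro i j
      have hd : distN i j ≤ n' := by
        have := i.isLt; have := j.isLt; unfold distN; omega
      have hsum : (∑ d ∈ range n', ((b (d+1) - b d) * if d + 1 ≤ distN i j then 1 else 0))
          = b (distN i j) - b 0 := by
        rw [← Finset.sum_range_sub b (distN i j)]
        refine (Finset.sum_subset (Finset.range_subset_range.mpr hd) ?_).symm.trans ?_
        · intro x _ hx
          simp only [Finset.mem_range] at hx
          rw [if_neg (by omega), mul_zero]
        · apply Finset.sum_congr rfl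
          intro d hd'
          simp only [Finset.mem_range] at hd'
          rw [if_pos (by omega), mul_one]
      rw [hsum]
      have hval : B i j = b (distN i j) := by
        rcases le_total i.val j.val with hij | hij
        · rw [hBval i j hij]
          congr 1
          unfold distN
          omega
        · rw [hB.1 i j, hBval j i hij]
          congr 1
          unfold distN
          omega
      rw [hval]; ring
    -- expansion of the inner product
    have hexp : ∀ X : Matrix (Fin (n'+1)) (Fin (n'+1)) ℝ,
        mInner X B = b 0 * (∑ i, ∑ j, X i j)
          + ∑ d ∈ range n', ((b (d+1) - b d)
              * ∑ i, ∑ j, (if d + 1 ≤ distN i j then X i j else 0)) := by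
      intro X
      have step1 : mInner X B = ∑ i, ∑ j, (X i j * b 0
          + ∑ d ∈ range n', ((b (d+1) - b d) * (if d + 1 ≤ distN i j then X i j else 0))) := by
        rw [mInner]
        apply Finset.sum_congr rfl; intro i _
        apply Finset.sum_congr rfl; intro j _
        rw [hBpt i j, mul_add, Finset.mul_sum]
        congr 1
        apply Finset.sum_congr rfl; intro d _
        split_ifs <;> ring
      rw [step1]
      rw [Finset.sum_congr rfl (fun i (_ : i ∈ univ) => Finset.sum_add_distrib),
          Finset.sum_add_distrib]
      congr 1
      · rw [Finset.mul_sum]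
        apply Finset.sum_congr rfl; intro i _
        rw [Finset.mul_sum]
        apply Finset.sum_congr rfl; intro j _
        ring
      · rw [Finset.sum_congr rfl (fun i (_ : i ∈ univ) => Finset.sum_comm), Finset.sum_comm]
        apply Finset.sum_congr rfl; intro d _
        rw [Finset.mul_sum]
        apply Finset.sum_congr rfl; intro i _
        rw [Finset.mul_sum]
    -- total sums agree
    have htot : (∑ i, ∑ j, (permMat A π) i j) = ∑ i, ∑ j, A i j := by
      have inner : ∀ i : Fin (n'+1), (∑ j, A (π i) (π j)) = ∑ j, A (π i) j :=
        fun i => Equiv.sum_comp π (fun j => A (π i) j)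
      calc (∑ i, ∑ j, (permMat A π) i j) = ∑ i, ∑ j, A (π i) (π j) := rfl
        _ = ∑ i, ∑ j, A (π i) j := Finset.sum_congr rfl (fun i _ => inner i)
        _ = ∑ i, ∑ j, A i j := Equiv.sum_comp π (fun i => ∑ j, A i j)
    -- band comparison
    have hband : ∀ d : ℕ, d < n' →
        (∑ i, ∑ j, (if d + 1 ≤ distN i j then A i j else 0))
          ≤ ∑ i, ∑ j, (if d + 1 ≤ distN i j then (permMat A π) i j else 0) := by
      intro d _
      have h1 : (∑ i : Fin (n'+1), ∑ j, (if d + 1 ≤ distN i j then A i j else 0))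
          = Ssum (d+1) A (fun i => i) + Ssum (d+1) A (fun i => i) :=
        band_split A hA.1 (d+1) (by omega) (fun i => i)
      have h2 : (∑ i : Fin (n'+1), ∑ j, (if d + 1 ≤ distN i j then (permMat A π) i j else 0))
          = Ssum (d+1) A (fun i => π i) + Ssum (d+1) A (fun i => π i) :=
        band_split A hA.1 (d+1) (by omega) (fun i => π i)
      rw [h1, h2]
      have hcore := core_lemma (d+1) (by omega) A hA (n'+1) (fun i => π i) (fun i => i)
        (π.injective) strictMono_id (by rw [Equiv.range_eq_univ]; exact (Set.range_id).symm)
      exact add_le_add hcore hcore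
    -- put it together
    rw [hexp A, hexp (permMat A π), htot]
    apply add_le_add (le_refl _)
    apply Finset.sum_le_sum
    intro d hd
    simp only [Finset.mem_range] at hd
    have hc : 0 ≤ b (d+1) - b d := by
      have := hbmono d (d+1) (by omega) (by omega)
      linarith
    exact mul_le_mul_of_nonneg_left (hband d hd) hc


/-- if `A` is a Robinson similarity, `B` is a Robinson dissimilarity,
and at least one of `A` or `B` is Toeplitz, then the identity permutation is optimal
for `QAP(A,B)`: `⟨A_π, B⟩ ≥ ⟨A, B⟩` for every permutation `π`. -/
theorem identity_optimal_QAP {n : ℕ}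
    (A B : Matrix (Fin n) (Fin n) ℝ)
    (hA : IsRobinsonSim A) (hB : IsRobinsonDissim B)
    (hT : IsToeplitz A ∨ IsToeplitz B) (π : Equiv.Perm (Fin n)) :
    mInner (permMat A π) B ≥ mInner A B := by
  rcases hT with hTA | hTB
  · -- reduce to the Toeplitz-B case via negation
    have hA' : IsRobinsonSim (-B) := by
      refine ⟨fun i j => by simp [hB.1 i j], fun i j k hij hjk => ?_⟩
      have := hB.2 i j k hij hjk
      simp only [Matrix.neg_apply]
      rw [le_min_iff]
      constructor <;> [skip; skip] <;>
        (apply neg_le_neg)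
      · exact le_trans (le_max_left _ _) this
      · exact le_trans (le_max_right _ _) this
    have hB' : IsRobinsonDissim (-A) := by
      refine ⟨fun i j => by simp [hA.1 i j], fun i j k hij hjk => ?_⟩
      have := hA.2 i j k hij hjk
      simp only [Matrix.neg_apply]
      rw [max_le_iff]
      constructor <;> (apply neg_le_neg)
      · exact le_trans this (min_le_left _ _)
      · exact le_trans this (min_le_right _ _)
    have hT' : IsToeplitz (-A) := by
      intro i j hi hj
      simp only [Matrix.neg_apply]
      rw [hTA i j hi hj]
    have key := main_toeplitzB (-B) (-A) hA' hB' hT' π.symm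
    have e1 : mInner (-B) (-A) = mInner A B := by
      unfold mInner
      apply Finset.sum_congr rfl; intro i _
      apply Finset.sum_congr rfl; intro j _
      simp only [Matrix.neg_apply]
      ring
    have e2 : mInner (permMat (-B) π.symm) (-A) = mInner (permMat A π) B := by
      unfold mInner
      have inner1 : ∀ i : Fin n, (∑ j, (permMat (-B) π.symm) i j * (-A) i j)
          = ∑ j, B (π.symm i) (π.symm j) * A i j := by
        intro i
        apply Finset.sum_congr rfl; intro j _
        simp only [permMat, Matrix.of_apply, Matrix.neg_apply]
        ring
      rw [Finset.sum_congr rfl (fun i (_ : i ∈ univ) => inner1 i)]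
      have reidx : (∑ i, ∑ j, B (π.symm i) (π.symm j) * A i j)
          = ∑ i, ∑ j, B i j * A (π i) (π j) := by
        calc (∑ i, ∑ j, B (π.symm i) (π.symm j) * A i j)
            = ∑ i, ∑ j, B (π.symm (π i)) (π.symm (π j)) * A (π i) (π j) := by
              rw [← Equiv.sum_comp π (fun i => ∑ j, B (π.symm i) (π.symm j) * A i j)]
              exact Finset.sum_congr rfl (fun i _ =>
                (Equiv.sum_comp π (fun j => B (π.symm (π i)) (π.symm j) * A (π i) j)).symm)
          _ = ∑ i, ∑ j, B i j * A (π i) (π j) := by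
              apply Finset.sum_congr rfl; intro i _
              apply Finset.sum_congr rfl; intro j _
              simp only [Equiv.symm_apply_apply]
      rw [reidx]
      apply Finset.sum_congr rfl; intro i _
      apply Finset.sum_congr rfl; intro j _
      simp only [permMat, Matrix.of_apply]
      ring
    rw [ge_iff_le, ← e1, ← e2]
    exact key
  · exact main_toeplitzB A B hA hB hTB π
end

section
/- Let A be an n×n Toeplitz Robinson similarity matrix and let B be an n×n Robinson dissimilarity matrix. Then for every permutation π of [n], ⟨A_π, B⟩ ≥ ⟨A, B⟩; that is, the identity permutation is optimal for QAP(A,B). -/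
def nd (x y : ℕ) : ℕ := (x - y) + (y - x)

def natPairs (m : ℕ) : Finset (ℕ × ℕ) :=
  (Finset.range m ×ˢ Finset.range m).filter fun q => q.1 < q.2

def IsUpsetN (m : ℕ) (U : Finset (ℕ × ℕ)) : Prop :=
  U ⊆ natPairs m ∧ ∀ q ∈ U, ∀ x y : ℕ, x ≤ q.1 → q.2 ≤ y → y < m → (x, y) ∈ U

lemma mem_natPairs {m : ℕ} {q : ℕ × ℕ} : q ∈ natPairs m ↔ q.1 < q.2 ∧ q.2 < m := by
  unfold natPairs
  simp only [Finset.mem_filter, Finset.mem_product, Finset.mem_range]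
  constructor
  · rintro ⟨⟨h1, h2⟩, h3⟩; exact ⟨h3, h2⟩
  · rintro ⟨h1, h2⟩; exact ⟨⟨lt_trans h1 h2, h2⟩, h1⟩

lemma downclosed_eq_range (S : Finset ℕ) (h : ∀ y ∈ S, ∀ z, z ≤ y → z ∈ S) :
    S = Finset.range S.card := by
  have key : ∀ x, x ∈ S ↔ x < S.card := by
    intro x
    constructor
    · intro hx
      have hsub : Finset.range (x + 1) ⊆ S := by
        intro z hz
        exact h x hx z (by simpa [Nat.lt_succ_iff] using Finset.mem_range.mp hz)
      have := Finset.card_le_card hsub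
      simpa using this
    · intro hx
      by_contra hxn
      have hsub : S ⊆ Finset.range x := by
        intro y hy
        rw [Finset.mem_range]
        by_contra hyx
        exact hxn (h y hy x (le_of_not_gt hyx))
      have := Finset.card_le_card hsub
      simp at this
      omega
  ext x
  rw [Finset.mem_range]
  exact key x

lemma upclosed_eq_Ico (m : ℕ) (S : Finset ℕ) (hsub : ∀ y ∈ S, y < m)
    (h : ∀ y ∈ S, ∀ z, y ≤ z → z < m → z ∈ S) :
    S = Finset.Ico (m - S.card) m := by
  have key : ∀ x, x ∈ S ↔ m - S.card ≤ x ∧ x < m := by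
    intro x
    constructor
    · intro hx
      have hxm := hsub x hx
      have hsub2 : Finset.Ico x m ⊆ S := by
        intro z hz
        rw [Finset.mem_Ico] at hz
        exact h x hx z hz.1 hz.2
      have := Finset.card_le_card hsub2
      rw [Nat.card_Ico] at this
      omega
    · rintro ⟨h1, h2⟩
      by_contra hxn
      have hsub2 : S ⊆ Finset.Ico (x + 1) m := by
        intro y hy
        rw [Finset.mem_Ico]
        refine ⟨?_, hsub y hy⟩
        by_contra hyx
        exact hxn (h y hy x (by omega) h2)
      have := Finset.card_le_card hsub2
      rw [Nat.card_Ico] at this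
      omega
  ext x
  rw [Finset.mem_Ico]
  exact key x

lemma starArith (n k a c w x1 x2 D2 G2 M U12 I12 C1 C2 : ℕ)
    (hk : 1 ≤ k) (ha : a ≤ w) (hw : w ≤ n) (hc : c ≤ n - w)
    (hx1 : x1 ≤ a) (hx2 : x2 ≤ c) (hxnk : x1 + x2 ≤ n + 1 - k)
    (hIH : D2 ≤ G2)
    (hstr : U12 ≤ M)
    (hIcard : U12 + I12 = C1 + C2)
    (hC1 : C1 = a ⊓ (n + 1 - k) - (w + 1 - k))
    (hC2 : C2 = w ⊓ (n + 1 - k) - ((n + 1 - c) - k) ⊔ (w + 1 - k))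
    (hI12 : I12 = a ⊓ (n + 1 - k) ⊓ (w ⊓ (n + 1 - k)) - (w + 1 - k) ⊔ (((n + 1 - c) - k) ⊔ (w + 1 - k))) :
    x1 + x2 + D2 ≤ a ⊓ (w + 1 - k) + (n + 1 - (n + 1 - c) ⊔ (w + k)) + (G2 + M) := by
  omega

theorem mcl (k : ℕ) (hk : 1 ≤ k) :
    ∀ (m : ℕ) (f g : ℕ → ℕ),
      (∀ x, x < m → f x < m ∧ g (f x) = x) →
      (∀ x, x < m → g x < m ∧ f (g x) = x) →
      ∀ U : Finset (ℕ × ℕ), IsUpsetN m U →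
      (U.filter fun q => k ≤ nd (f q.1) (f q.2)).card ≤
      (U.filter fun q => k ≤ q.2 - q.1).card := by
  intro m
  induction m with
  | zero =>
      intro f g hfg hgf U hU
      have hUe : U = ∅ := by
        ext q
        simp only [Finset.notMem_empty, iff_false]
        intro hq
        have := mem_natPairs.mp (hU.1 hq)
        omega
      simp [hUe]
  | succ n ih =>
      intro f g hfg hgf U hU
      obtain ⟨hUsub, hUup⟩ := hU
      have hmem : ∀ q ∈ U, q.1 < q.2 ∧ q.2 < n + 1 := fun q hq => mem_natPairs.mp (hUsub hq)
      obtain ⟨hwlt, hfw⟩ := hgf n (Nat.lt_succ_self n)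
      set w := g n with hwdef
      have hflt : ∀ y, y < n + 1 → f y < n + 1 := fun y hy => (hfg y hy).1
      have hfne : ∀ y, y < n + 1 → y ≠ w → f y ≠ n := by
        intro y hy hyw hfy
        obtain ⟨_, h2⟩ := hfg y hy
        rw [hfy] at h2
        exact hyw (by rw [hwdef, h2])
      set ρ : ℕ → ℕ := fun y => if y < w then y else y + 1 with hρdef
      set sh : ℕ → ℕ := fun z => if z < w then z else z - 1 with hshdef
      have hρ_lt : ∀ y, y < n → ρ y < n + 1 ∧ ρ y ≠ w := by
        intro y hy; simp only [hρdef]; split_ifs <;> omega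
      have hshρ : ∀ y, sh (ρ y) = y := by
        intro y; simp only [hρdef, hshdef]; split_ifs <;> omega
      have hρsh : ∀ z, z ≠ w → ρ (sh z) = z := by
        intro z hz; simp only [hρdef, hshdef]; split_ifs <;> omega
      have hρmono : ∀ x y, x ≤ y → ρ x ≤ ρ y := by
        intro x y h; simp only [hρdef]; split_ifs <;> omega
      set f₂ : ℕ → ℕ := fun y => f (ρ y) with hf₂def
      set g₂ : ℕ → ℕ := fun x => sh (g x) with hg₂def
      have hfg₂ : ∀ x, x < n → f₂ x < n ∧ g₂ (f₂ x) = x := by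
        intro x hx
        obtain ⟨h1, h2⟩ := hρ_lt x hx
        obtain ⟨h3, h4⟩ := hfg (ρ x) h1
        have h5 : f (ρ x) ≠ n := hfne (ρ x) h1 h2
        constructor
        · simp only [hf₂def]; omega
        · simp only [hf₂def, hg₂def, h4]
          exact hshρ x
      have hgf₂ : ∀ x, x < n → g₂ x < n ∧ f₂ (g₂ x) = x := by
        intro x hx
        have hxlt : x < n + 1 := by omega
        obtain ⟨h1, h2⟩ := hgf x hxlt
        have hgxw : g x ≠ w := by
          intro hcon
          rw [hcon, hfw] at h2
          omega
        constructor
        · simp only [hg₂def, hshdef]; split_ifs <;> omega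
        · simp only [hg₂def, hf₂def]
          rw [hρsh (g x) hgxw, h2]
      set U₂ : Finset (ℕ × ℕ) := (natPairs n).filter (fun q => (ρ q.1, ρ q.2) ∈ U) with hU₂def
      have hU₂mem : ∀ q, q ∈ U₂ ↔ (q.1 < q.2 ∧ q.2 < n) ∧ (ρ q.1, ρ q.2) ∈ U := by
        intro q
        simp only [hU₂def, Finset.mem_filter, mem_natPairs]
      have hU₂up : IsUpsetN n U₂ := by
        constructor
        · exact Finset.filter_subset _ _
        · intro q hq x y hx hy hyn
          rw [hU₂mem] at hq ⊢
          obtain ⟨⟨hq1, hq2⟩, hq3⟩ := hq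
          refine ⟨⟨by omega, hyn⟩, ?_⟩
          exact hUup _ hq3 (ρ x) (ρ y) (hρmono x q.1 hx) (hρmono q.2 y hy) (hρ_lt y hyn).1
      -- the two transfer bijections between U-pairs avoiding w and U₂-pairs
      have e1 : (U.filter fun q => (k ≤ nd (f q.1) (f q.2)) ∧ ¬(q.1 = w ∨ q.2 = w)).card
          = (U₂.filter fun q => k ≤ nd (f₂ q.1) (f₂ q.2)).card := by
        refine Finset.card_bij' (fun q _ => (sh q.1, sh q.2)) (fun q _ => (ρ q.1, ρ q.2)) ?_ ?_ ?_ ?_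
        · intro q hq
          simp only [Finset.mem_filter] at hq
          obtain ⟨hqU, hcond, htw⟩ := hq
          obtain ⟨hq12, hq2n⟩ := hmem q hqU
          have hne1 : q.1 ≠ w := fun h => htw (Or.inl h)
          have hne2 : q.2 ≠ w := fun h => htw (Or.inr h)
          have hρ1 : ρ (sh q.1) = q.1 := hρsh _ hne1
          have hρ2 : ρ (sh q.2) = q.2 := hρsh _ hne2
          rw [Finset.mem_filter, hU₂mem]
          refine ⟨⟨⟨?_, ?_⟩, ?_⟩, ?_⟩
          · simp only [hshdef]; split_ifs <;> omega
          · simp only [hshdef]; split_ifs <;> omega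
          · simpa only [hρ1, hρ2, Prod.mk.eta] using hqU
          · simpa only [hf₂def, hρ1, hρ2] using hcond
        · intro q hq
          simp only [Finset.mem_filter] at hq
          obtain ⟨hqU2, hcond⟩ := hq
          rw [hU₂mem] at hqU2
          obtain ⟨⟨hq12, hq2n⟩, hqU⟩ := hqU2
          rw [Finset.mem_filter]
          refine ⟨hqU, ?_, ?_⟩
          · simpa only [hf₂def] using hcond
          · push_neg
            exact ⟨(hρ_lt q.1 (by omega)).2, (hρ_lt q.2 hq2n).2⟩
        · intro q hq
          simp only [Finset.mem_filter] at hq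
          obtain ⟨hqU, hcond, htw⟩ := hq
          have hne1 : q.1 ≠ w := fun h => htw (Or.inl h)
          have hne2 : q.2 ≠ w := fun h => htw (Or.inr h)
          simp only [hρsh _ hne1, hρsh _ hne2, Prod.mk.eta]
        · intro q hq
          simp only [hshρ, Prod.mk.eta]
      have e2 : (U.filter fun q => (k ≤ sh q.2 - sh q.1) ∧ ¬(q.1 = w ∨ q.2 = w)).card
          = (U₂.filter fun q => k ≤ q.2 - q.1).card := by
        refine Finset.card_bij' (fun q _ => (sh q.1, sh q.2)) (fun q _ => (ρ q.1, ρ q.2)) ?_ ?_ ?_ ?_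
        · intro q hq
          simp only [Finset.mem_filter] at hq
          obtain ⟨hqU, hcond, htw⟩ := hq
          obtain ⟨hq12, hq2n⟩ := hmem q hqU
          have hne1 : q.1 ≠ w := fun h => htw (Or.inl h)
          have hne2 : q.2 ≠ w := fun h => htw (Or.inr h)
          have hρ1 : ρ (sh q.1) = q.1 := hρsh _ hne1
          have hρ2 : ρ (sh q.2) = q.2 := hρsh _ hne2
          rw [Finset.mem_filter, hU₂mem]
          refine ⟨⟨⟨?_, ?_⟩, ?_⟩, ?_⟩
          · simp only [hshdef]; split_ifs <;> omega
          · simp only [hshdef]; split_ifs <;> omega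
          · simpa only [hρ1, hρ2, Prod.mk.eta] using hqU
          · exact hcond
        · intro q hq
          simp only [Finset.mem_filter] at hq
          obtain ⟨hqU2, hcond⟩ := hq
          rw [hU₂mem] at hqU2
          obtain ⟨⟨hq12, hq2n⟩, hqU⟩ := hqU2
          rw [Finset.mem_filter]
          refine ⟨hqU, ?_, ?_⟩
          · simpa only [hshρ] using hcond
          · push_neg
            exact ⟨(hρ_lt q.1 (by omega)).2, (hρ_lt q.2 hq2n).2⟩
        · intro q hq
          simp only [Finset.mem_filter] at hq
          obtain ⟨hqU, hcond, htw⟩ := hq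
          have hne1 : q.1 ≠ w := fun h => htw (Or.inl h)
          have hne2 : q.2 ≠ w := fun h => htw (Or.inr h)
          simp only [hρsh _ hne1, hρsh _ hne2, Prod.mk.eta]
        · intro q hq
          simp only [hshρ, Prod.mk.eta]
      -- splitting the counts by whether the pair touches w
      have split1 :
          (U.filter fun q => k ≤ nd (f q.1) (f q.2)).card
          = (U.filter fun q => (k ≤ nd (f q.1) (f q.2)) ∧ (q.1 = w ∨ q.2 = w)).card
            + (U.filter fun q => (k ≤ nd (f q.1) (f q.2)) ∧ ¬(q.1 = w ∨ q.2 = w)).card := by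
        rw [← Finset.filter_filter, ← Finset.filter_filter,
          Finset.card_filter_add_card_filter_not]
      have split2 :
          (U.filter fun q => k ≤ q.2 - q.1).card
          = (U.filter fun q => (k ≤ q.2 - q.1) ∧ (q.1 = w ∨ q.2 = w)).card
            + (U.filter fun q => (k ≤ q.2 - q.1) ∧ ¬(q.1 = w ∨ q.2 = w)).card := by
        rw [← Finset.filter_filter, ← Finset.filter_filter,
          Finset.card_filter_add_card_filter_not]
      have split3 :
          (U.filter fun q => (k ≤ q.2 - q.1) ∧ ¬(q.1 = w ∨ q.2 = w)).card
          = (U.filter fun q => (k ≤ sh q.2 - sh q.1) ∧ ¬(q.1 = w ∨ q.2 = w)).card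
            + (U.filter fun q => q.1 < w ∧ w < q.2 ∧ q.2 - q.1 = k).card := by
        have hA : (U.filter fun q => (k ≤ q.2 - q.1) ∧ ¬(q.1 = w ∨ q.2 = w)).card
            = (U.filter fun q => ((k ≤ q.2 - q.1) ∧ ¬(q.1 = w ∨ q.2 = w)) ∧ (k ≤ sh q.2 - sh q.1)).card
              + (U.filter fun q => ((k ≤ q.2 - q.1) ∧ ¬(q.1 = w ∨ q.2 = w)) ∧ ¬(k ≤ sh q.2 - sh q.1)).card := by
          have hB := (Finset.card_filter_add_card_filter_not
            (s := U.filter (fun q => (k ≤ q.2 - q.1) ∧ ¬(q.1 = w ∨ q.2 = w)))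
            (p := fun q => k ≤ sh q.2 - sh q.1)).symm
          simpa only [Finset.filter_filter] using hB
        have e3 : (U.filter fun q => ((k ≤ q.2 - q.1) ∧ ¬(q.1 = w ∨ q.2 = w)) ∧ (k ≤ sh q.2 - sh q.1))
            = (U.filter fun q => (k ≤ sh q.2 - sh q.1) ∧ ¬(q.1 = w ∨ q.2 = w)) := by
          apply Finset.filter_congr
          intro q hq
          have h2 := hmem q hq
          simp only [hshdef, not_or]
          constructor
          · rintro ⟨⟨_, h4, h5⟩, h6⟩; exact ⟨h6, h4, h5⟩
          · rintro ⟨h6, h4, h5⟩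
            have h7 : k ≤ q.2 - q.1 := by revert h6; split_ifs <;> omega
            exact ⟨⟨h7, h4, h5⟩, h6⟩
        have e4 : (U.filter fun q => ((k ≤ q.2 - q.1) ∧ ¬(q.1 = w ∨ q.2 = w)) ∧ ¬(k ≤ sh q.2 - sh q.1))
            = (U.filter fun q => q.1 < w ∧ w < q.2 ∧ q.2 - q.1 = k) := by
          apply Finset.filter_congr
          intro q hq
          have h2 := hmem q hq
          simp only [hshdef, not_or]
          split_ifs <;> omega
        rw [hA, e3, e4]
      -- the column structure at w
      set Nlo : Finset ℕ := (Finset.range w).filter (fun y => (y, w) ∈ U) with hNlodef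
      set Nhi : Finset ℕ := (Finset.Ico (w+1) (n+1)).filter (fun y => (w, y) ∈ U) with hNhidef
      have hNloMem : ∀ y, y ∈ Nlo ↔ y < w ∧ (y, w) ∈ U := by
        intro y; simp [hNlodef, Finset.mem_filter]
      have hNhiMem : ∀ y, y ∈ Nhi ↔ (w < y ∧ y < n + 1) ∧ (w, y) ∈ U := by
        intro y; simp [hNhidef, Finset.mem_filter, Finset.mem_Ico, Nat.succ_le_iff]
      have s1 : Nlo = Finset.range Nlo.card := by
        apply downclosed_eq_range
        intro y hy z hz
        rw [hNloMem] at hy ⊢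
        exact ⟨by omega, hUup _ hy.2 z w hz (le_refl w) (by omega)⟩
      have s2 : Nhi = Finset.Ico (n + 1 - Nhi.card) (n + 1) := by
        apply upclosed_eq_Ico
        · intro y hy; exact ((hNhiMem y).mp hy).1.2
        · intro y hy z hyz hzn
          rw [hNhiMem] at hy ⊢
          exact ⟨⟨by omega, hzn⟩, hUup _ hy.2 w z (le_refl w) hyz hzn⟩
      set a := Nlo.card with hadef
      set c := Nhi.card with hcdef
      set b := n + 1 - c with hbdef
      have ha_le : a ≤ w := by
        have := Finset.card_filter_le (Finset.range w) (fun y => (y, w) ∈ U)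
        simpa [hadef, hNlodef] using this
      have hc_le : c ≤ n - w := by
        have := Finset.card_filter_le (Finset.Ico (w+1) (n+1)) (fun y => (w, y) ∈ U)
        rw [Nat.card_Ico] at this
        simp only [hcdef, hNhidef]
        omega
      -- counting the w-column pairs
      have bijAlo : (U.filter fun q => (k ≤ nd (f q.1) (f q.2)) ∧ q.2 = w).card
          = (Nlo.filter fun y => f y + k ≤ n).card := by
        refine Finset.card_bij' (fun q _ => q.1) (fun y _ => (y, w)) ?_ ?_ ?_ ?_
        · rintro ⟨q1, q2⟩ hq
          simp only [Finset.mem_filter] at hq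
          obtain ⟨hqU, hcond, hq2⟩ := hq
          have hq12 : q1 < q2 := (hmem _ hqU).1
          have hq2n : q2 < n + 1 := (hmem _ hqU).2
          have hcond' : k ≤ nd (f q1) (f q2) := hcond
          have hq2' : q2 = w := hq2
          subst hq2'
          show q1 ∈ Finset.filter (fun y => f y + k ≤ n) Nlo
          rw [Finset.mem_filter, hNloMem]
          have hf1 : f q1 < n + 1 := hflt q1 (by omega)
          have hf1n : f q1 ≠ n := hfne q1 (by omega) (by omega)
          rw [hfw] at hcond'
          simp only [nd] at hcond'
          exact ⟨⟨by omega, hqU⟩, by omega⟩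
        · intro y hy
          simp only [Finset.mem_filter] at hy
          obtain ⟨hyN, hcond⟩ := hy
          rw [hNloMem] at hyN
          obtain ⟨hyw, hyU⟩ := hyN
          show (y, w) ∈ Finset.filter _ U
          rw [Finset.mem_filter]
          have hf1 : f y < n + 1 := hflt y (by omega)
          have hf1n : f y ≠ n := hfne y (by omega) (by omega)
          refine ⟨hyU, ?_, rfl⟩
          show k ≤ nd (f y) (f w)
          rw [hfw]
          simp only [nd]
          omega
        · rintro ⟨q1, q2⟩ hq
          simp only [Finset.mem_filter] at hq
          obtain ⟨hqU, hcond, hq2⟩ := hq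
          have hq2' : q2 = w := hq2
          show (q1, w) = (q1, q2)
          rw [hq2']
        · intro y hy
          rfl
      have bijAhi : (U.filter fun q => (k ≤ nd (f q.1) (f q.2)) ∧ q.1 = w).card
          = (Nhi.filter fun y => f y + k ≤ n).card := by
        refine Finset.card_bij' (fun q _ => q.2) (fun y _ => (w, y)) ?_ ?_ ?_ ?_
        · rintro ⟨q1, q2⟩ hq
          simp only [Finset.mem_filter] at hq
          obtain ⟨hqU, hcond, hq1⟩ := hq
          have hq12 : q1 < q2 := (hmem _ hqU).1
          have hq2n : q2 < n + 1 := (hmem _ hqU).2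
          have hcond' : k ≤ nd (f q1) (f q2) := hcond
          have hq1' : q1 = w := hq1
          subst hq1'
          show q2 ∈ Finset.filter (fun y => f y + k ≤ n) Nhi
          rw [Finset.mem_filter, hNhiMem]
          have hf1 : f q2 < n + 1 := hflt q2 (by omega)
          have hf1n : f q2 ≠ n := hfne q2 (by omega) (by omega)
          rw [hfw] at hcond'
          simp only [nd] at hcond'
          exact ⟨⟨⟨by omega, hq2n⟩, hqU⟩, by omega⟩
        · intro y hy
          simp only [Finset.mem_filter] at hy
          obtain ⟨hyN, hcond⟩ := hy
          rw [hNhiMem] at hyN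
          obtain ⟨⟨hyw, hyn⟩, hyU⟩ := hyN
          show (w, y) ∈ Finset.filter _ U
          rw [Finset.mem_filter]
          have hf1 : f y < n + 1 := hflt y hyn
          have hf1n : f y ≠ n := hfne y hyn (by omega)
          refine ⟨hyU, ?_, rfl⟩
          show k ≤ nd (f w) (f y)
          rw [hfw]
          simp only [nd]
          omega
        · rintro ⟨q1, q2⟩ hq
          simp only [Finset.mem_filter] at hq
          obtain ⟨hqU, hcond, hq1⟩ := hq
          have hq1' : q1 = w := hq1
          show (w, q2) = (q1, q2)
          rw [hq1']
        · intro y hy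
          rfl
      have bijGlo : (U.filter fun q => (k ≤ q.2 - q.1) ∧ q.2 = w).card
          = (Nlo.filter fun y => y + k ≤ w).card := by
        refine Finset.card_bij' (fun q _ => q.1) (fun y _ => (y, w)) ?_ ?_ ?_ ?_
        · rintro ⟨q1, q2⟩ hq
          simp only [Finset.mem_filter] at hq
          obtain ⟨hqU, hcond, hq2⟩ := hq
          have hq12 : q1 < q2 := (hmem _ hqU).1
          have hcond' : k ≤ q2 - q1 := hcond
          have hq2' : q2 = w := hq2
          subst hq2'
          show q1 ∈ Finset.filter (fun y => y + k ≤ w) Nlo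
          rw [Finset.mem_filter, hNloMem]
          exact ⟨⟨by omega, hqU⟩, by omega⟩
        · intro y hy
          simp only [Finset.mem_filter] at hy
          obtain ⟨hyN, hcond⟩ := hy
          rw [hNloMem] at hyN
          obtain ⟨hyw, hyU⟩ := hyN
          show (y, w) ∈ Finset.filter _ U
          rw [Finset.mem_filter]
          refine ⟨hyU, ?_, rfl⟩
          show k ≤ w - y
          omega
        · rintro ⟨q1, q2⟩ hq
          simp only [Finset.mem_filter] at hq
          obtain ⟨hqU, hcond, hq2⟩ := hq
          have hq2' : q2 = w := hq2
          show (q1, w) = (q1, q2)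
          rw [hq2']
        · intro y hy
          rfl
      have bijGhi : (U.filter fun q => (k ≤ q.2 - q.1) ∧ q.1 = w).card
          = (Nhi.filter fun y => w + k ≤ y).card := by
        refine Finset.card_bij' (fun q _ => q.2) (fun y _ => (w, y)) ?_ ?_ ?_ ?_
        · rintro ⟨q1, q2⟩ hq
          simp only [Finset.mem_filter] at hq
          obtain ⟨hqU, hcond, hq1⟩ := hq
          have hq12 : q1 < q2 := (hmem _ hqU).1
          have hq2n : q2 < n + 1 := (hmem _ hqU).2
          have hcond' : k ≤ q2 - q1 := hcond
          have hq1' : q1 = w := hq1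
          subst hq1'
          show q2 ∈ Finset.filter (fun y => w + k ≤ y) Nhi
          rw [Finset.mem_filter, hNhiMem]
          exact ⟨⟨⟨by omega, hq2n⟩, hqU⟩, by omega⟩
        · intro y hy
          simp only [Finset.mem_filter] at hy
          obtain ⟨hyN, hcond⟩ := hy
          rw [hNhiMem] at hyN
          obtain ⟨⟨hyw, hyn⟩, hyU⟩ := hyN
          show (w, y) ∈ Finset.filter _ U
          rw [Finset.mem_filter]
          refine ⟨hyU, ?_, rfl⟩
          show k ≤ y - w
          omega
        · rintro ⟨q1, q2⟩ hq
          simp only [Finset.mem_filter] at hq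
          obtain ⟨hqU, hcond, hq1⟩ := hq
          have hq1' : q1 = w := hq1
          show (w, q2) = (q1, q2)
          rw [hq1']
        · intro y hy
          rfl
      -- splitting touching-w sets into the lo and hi columns
      have splitAw : (U.filter fun q => (k ≤ nd (f q.1) (f q.2)) ∧ (q.1 = w ∨ q.2 = w)).card
          = (U.filter fun q => (k ≤ nd (f q.1) (f q.2)) ∧ q.2 = w).card
            + (U.filter fun q => (k ≤ nd (f q.1) (f q.2)) ∧ q.1 = w).card := by
        have hB := (Finset.card_filter_add_card_filter_not
          (s := U.filter (fun q => (k ≤ nd (f q.1) (f q.2)) ∧ (q.1 = w ∨ q.2 = w)))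
          (p := fun q => q.2 = w)).symm
        rw [Finset.filter_filter, Finset.filter_filter] at hB
        rw [hB]
        congr 1
        · apply congrArg Finset.card
          apply Finset.filter_congr
          intro q hq
          have h2 := hmem q hq
          constructor
          · rintro ⟨⟨h3, _⟩, h5⟩; exact ⟨h3, h5⟩
          · rintro ⟨h3, h5⟩; exact ⟨⟨h3, Or.inr h5⟩, h5⟩
        · apply congrArg Finset.card
          apply Finset.filter_congr
          intro q hq
          have h2 := hmem q hq
          constructor
          · rintro ⟨⟨h3, h4⟩, h5⟩
            rcases h4 with h4 | h4
            · exact ⟨h3, h4⟩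
            · exact absurd h4 h5
          · rintro ⟨h3, h5⟩
            refine ⟨⟨h3, Or.inl h5⟩, ?_⟩
            omega
      have splitGw : (U.filter fun q => (k ≤ q.2 - q.1) ∧ (q.1 = w ∨ q.2 = w)).card
          = (U.filter fun q => (k ≤ q.2 - q.1) ∧ q.2 = w).card
            + (U.filter fun q => (k ≤ q.2 - q.1) ∧ q.1 = w).card := by
        have hB := (Finset.card_filter_add_card_filter_not
          (s := U.filter (fun q => (k ≤ q.2 - q.1) ∧ (q.1 = w ∨ q.2 = w)))
          (p := fun q => q.2 = w)).symm
        rw [Finset.filter_filter, Finset.filter_filter] at hB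
        rw [hB]
        congr 1
        · apply congrArg Finset.card
          apply Finset.filter_congr
          intro q hq
          have h2 := hmem q hq
          constructor
          · rintro ⟨⟨h3, _⟩, h5⟩; exact ⟨h3, h5⟩
          · rintro ⟨h3, h5⟩; exact ⟨⟨h3, Or.inr h5⟩, h5⟩
        · apply congrArg Finset.card
          apply Finset.filter_congr
          intro q hq
          have h2 := hmem q hq
          constructor
          · rintro ⟨⟨h3, h4⟩, h5⟩
            rcases h4 with h4 | h4
            · exact ⟨h3, h4⟩
            · exact absurd h4 h5
          · rintro ⟨h3, h5⟩
            refine ⟨⟨h3, Or.inl h5⟩, ?_⟩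
            omega
      -- bounds on the permuted column count
      set x1 := (Nlo.filter fun y => f y + k ≤ n).card with hx1def
      set x2 := (Nhi.filter fun y => f y + k ≤ n).card with hx2def
      have hx1a : x1 ≤ a := by
        rw [hx1def, hadef]; exact Finset.card_filter_le _ _
      have hx2c : x2 ≤ c := by
        rw [hx2def, hcdef]; exact Finset.card_filter_le _ _
      have hxnk : x1 + x2 ≤ n + 1 - k := by
        have hdisj : Disjoint (Nlo.filter fun y => f y + k ≤ n) (Nhi.filter fun y => f y + k ≤ n) := by
          rw [Finset.disjoint_left]
          intro y hy1 hy2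
          rw [Finset.mem_filter, hNloMem] at hy1
          rw [Finset.mem_filter, hNhiMem] at hy2
          omega
        have hcup : x1 + x2 = ((Nlo.filter fun y => f y + k ≤ n) ∪ (Nhi.filter fun y => f y + k ≤ n)).card := by
          rw [Finset.card_union_of_disjoint hdisj]
        have hinj : (((Nlo.filter fun y => f y + k ≤ n) ∪ (Nhi.filter fun y => f y + k ≤ n)) : Finset ℕ).card
            ≤ (Finset.range (n + 1 - k)).card := by
          apply Finset.card_le_card_of_injOn f
          · intro y hy
            rw [Finset.mem_coe] at hy ⊢
            rw [Finset.mem_union] at hy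
            rw [Finset.mem_range]
            rcases hy with hy | hy
            · rw [Finset.mem_filter] at hy; omega
            · rw [Finset.mem_filter] at hy; omega
          · intro y hy z hz hfyz
            have hybnd : y < n + 1 := by
              rcases Finset.mem_union.mp hy with h | h
              · rw [Finset.mem_filter, hNloMem] at h; omega
              · rw [Finset.mem_filter, hNhiMem] at h; omega
            have hzbnd : z < n + 1 := by
              rcases Finset.mem_union.mp hz with h | h
              · rw [Finset.mem_filter, hNloMem] at h; omega
              · rw [Finset.mem_filter, hNhiMem] at h; omega
            have h1 := (hfg y hybnd).2
            have h2 := (hfg z hzbnd).2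
            rw [← h1, ← h2, hfyz]
        rw [Finset.card_range] at hinj
        omega
      -- exact counts of the identity column parts
      have gcount1 : (Nlo.filter fun y => y + k ≤ w).card = min a (w + 1 - k) := by
        rw [s1]
        have : (Finset.range a).filter (fun y => y + k ≤ w) = Finset.range (min a (w + 1 - k)) := by
          ext z
          simp only [Finset.mem_filter, Finset.mem_range]
          omega
        rw [this, Finset.card_range]
      have gcount2 : (Nhi.filter fun y => w + k ≤ y).card = (n + 1) - max b (w + k) := by
        rw [s2]
        have : (Finset.Ico (n + 1 - c) (n + 1)).filter (fun y => w + k ≤ y)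
            = Finset.Ico (max b (w + k)) (n + 1) := by
          ext z
          simp only [Finset.mem_filter, Finset.mem_Ico]
          omega
        rw [this, Nat.card_Ico]
      -- the straddling pairs
      set L1 := w + 1 - k with hL1def
      set I1 := Finset.Ico L1 (min a (n + 1 - k)) with hI1def
      set I2 := Finset.Ico (max (b - k) L1) (min w (n + 1 - k)) with hI2def
      have hstr : (I1 ∪ I2).card ≤ (U.filter fun q => q.1 < w ∧ w < q.2 ∧ q.2 - q.1 = k).card := by
        apply Finset.card_le_card_of_injOn (fun u => (u, u + k))
        · intro u hu
          simp only [Finset.mem_coe] at hu ⊢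
          rw [Finset.mem_union] at hu
          rw [Finset.mem_filter]
          rcases hu with hu | hu
          · rw [hI1def, Finset.mem_Ico] at hu
            have huNlo : u ∈ Nlo := by
              rw [s1, Finset.mem_range]; omega
            rw [hNloMem] at huNlo
            have hU1 : (u, u + k) ∈ U :=
              hUup _ huNlo.2 u (u + k) (le_refl u) (by omega) (by omega)
            exact ⟨hU1, by omega, by omega, by omega⟩
          · rw [hI2def, Finset.mem_Ico] at hu
            have hukNhi : u + k ∈ Nhi := by
              rw [s2, Finset.mem_Ico]; omega
            rw [hNhiMem] at hukNhi
            have hU1 : (u, u + k) ∈ U :=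
              hUup _ hukNhi.2 u (u + k) (by omega) (le_refl (u + k)) (by omega)
            exact ⟨hU1, by omega, by omega, by omega⟩
        · intro u _ v _ huv
          exact congrArg Prod.fst huv
      have hIcard : (I1 ∪ I2).card + (I1 ∩ I2).card = I1.card + I2.card :=
        Finset.card_union_add_card_inter I1 I2
      have hIinter : I1 ∩ I2 = Finset.Ico (max L1 (max (b - k) L1)) (min (min a (n + 1 - k)) (min w (n + 1 - k))) := by
        rw [hI1def, hI2def, Finset.Ico_inter_Ico]
      have hI1c : I1.card = min a (n + 1 - k) - L1 := by rw [hI1def, Nat.card_Ico]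
      have hI2c : I2.card = min w (n + 1 - k) - max (b - k) L1 := by rw [hI2def, Nat.card_Ico]
      have hIic : (I1 ∩ I2).card = min (min a (n + 1 - k)) (min w (n + 1 - k)) - max L1 (max (b - k) L1) := by
        rw [hIinter, Nat.card_Ico]
      -- final assembly
      have hIH := ih f₂ g₂ hfg₂ hgf₂ U₂ hU₂up
      rw [split1, split2, split3, splitAw, splitGw, bijAlo, bijAhi, bijGlo, bijGhi,
        gcount1, gcount2, e1, e2]
      exact starArith n k a c w x1 x2 _ _ _ _ _ _ _ hk ha_le (Nat.lt_succ_iff.mp hwlt) hc_le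
        hx1a hx2c hxnk hIH hstr hIcard hI1c hI2c hIic

/-- The master sum lemma: Hall's theorem converts the counting lemma into a
weighted inequality for monotone (Robinson) weights. -/
theorem msl (m k : ℕ) (hk : 1 ≤ k) (f g : ℕ → ℕ)
    (hfg : ∀ x, x < m → f x < m ∧ g (f x) = x)
    (hgf : ∀ x, x < m → g x < m ∧ f (g x) = x)
    (W : ℕ × ℕ → ℝ)
    (hW : ∀ x y a b : ℕ, x ≤ a → a < b → b ≤ y → y < m → W (a, b) ≤ W (x, y)) :
    ∑ q ∈ (natPairs m).filter (fun q => k ≤ nd (f q.1) (f q.2)), W q ≤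
    ∑ q ∈ (natPairs m).filter (fun q => k ≤ q.2 - q.1), W q := by
  classical
  set S := (natPairs m).filter (fun q => k ≤ nd (f q.1) (f q.2)) with hSdef
  set T := (natPairs m).filter (fun q => k ≤ q.2 - q.1) with hTdef
  have hSmem : ∀ q, q ∈ S ↔ (q.1 < q.2 ∧ q.2 < m) ∧ k ≤ nd (f q.1) (f q.2) := by
    intro q; rw [hSdef, Finset.mem_filter, mem_natPairs]
  have hTmem : ∀ q, q ∈ T ↔ (q.1 < q.2 ∧ q.2 < m) ∧ k ≤ q.2 - q.1 := by
    intro q; rw [hTdef, Finset.mem_filter, mem_natPairs]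
  -- S and T have the same cardinality
  have hST : S.card = T.card := by
    refine Finset.card_bij'
      (fun q _ => (min (f q.1) (f q.2), max (f q.1) (f q.2)))
      (fun q _ => (min (g q.1) (g q.2), max (g q.1) (g q.2))) ?_ ?_ ?_ ?_
    · rintro ⟨q1, q2⟩ hq
      rw [hSmem] at hq
      obtain ⟨⟨h12, h2m⟩, hcond⟩ := hq
      have hcond' : k ≤ nd (f q1) (f q2) := hcond
      have hf1 : f q1 < m := (hfg q1 (by omega)).1
      have hf2 : f q2 < m := (hfg q2 (by omega)).1
      have hne : f q1 ≠ f q2 := by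
        intro hcon
        have e1 := (hfg q1 (by omega)).2
        have e2 := (hfg q2 (by omega)).2
        rw [hcon] at e1
        rw [e2] at e1
        omega
      rw [hTmem]
      constructor
      · constructor
        · simp only [nd] at hcond' ⊢; omega
        · simp only; omega
      · simp only [nd] at hcond' ⊢; omega
    · rintro ⟨q1, q2⟩ hq
      rw [hTmem] at hq
      obtain ⟨⟨h12, h2m⟩, hcond⟩ := hq
      have hcond' : k ≤ q2 - q1 := hcond
      have hg1 : g q1 < m := (hgf q1 (by omega)).1
      have hg2 : g q2 < m := (hgf q2 (by omega)).1
      have e1 : f (g q1) = q1 := (hgf q1 (by omega)).2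
      have e2 : f (g q2) = q2 := (hgf q2 (by omega)).2
      have hne : g q1 ≠ g q2 := by
        intro hcon
        rw [hcon, e2] at e1
        omega
      rw [hSmem]
      show ((g q1 ⊓ g q2) < (g q1 ⊔ g q2) ∧ (g q1 ⊔ g q2) < m) ∧
        k ≤ nd (f (g q1 ⊓ g q2)) (f (g q1 ⊔ g q2))
      rcases le_total (g q1) (g q2) with hle | hle
      · have hmin : min (g q1) (g q2) = g q1 := by omega
        have hmax : max (g q1) (g q2) = g q2 := by omega
        rw [hmin, hmax]
        constructor
        · constructor
          · omega
          · exact hg2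
        · simp only [e1, e2, nd]; omega
      · have hmin : min (g q1) (g q2) = g q2 := by omega
        have hmax : max (g q1) (g q2) = g q1 := by omega
        rw [hmin, hmax]
        constructor
        · constructor
          · omega
          · exact hg1
        · simp only [e1, e2, nd]; omega
    · rintro ⟨q1, q2⟩ hq
      rw [hSmem] at hq
      obtain ⟨⟨h12, h2m⟩, hcond⟩ := hq
      have e1 : g (f q1) = q1 := (hfg q1 (by omega)).2
      have e2 : g (f q2) = q2 := (hfg q2 (by omega)).2
      show (g (f q1 ⊓ f q2) ⊓ g (f q1 ⊔ f q2), g (f q1 ⊓ f q2) ⊔ g (f q1 ⊔ f q2)) = (q1, q2)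
      rcases le_total (f q1) (f q2) with hle | hle
      · have hmin : min (f q1) (f q2) = f q1 := by omega
        have hmax : max (f q1) (f q2) = f q2 := by omega
        rw [hmin, hmax, e1, e2]
        have : min q1 q2 = q1 := by omega
        have h2 : max q1 q2 = q2 := by omega
        rw [this, h2]
      · have hmin : min (f q1) (f q2) = f q2 := by omega
        have hmax : max (f q1) (f q2) = f q1 := by omega
        rw [hmin, hmax, e1, e2]
        have : min q2 q1 = q1 := by omega
        have h2 : max q2 q1 = q2 := by omega
        rw [this, h2]
    · rintro ⟨q1, q2⟩ hq
      rw [hTmem] at hq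
      obtain ⟨⟨h12, h2m⟩, hcond⟩ := hq
      have e1 : f (g q1) = q1 := (hgf q1 (by omega)).2
      have e2 : f (g q2) = q2 := (hgf q2 (by omega)).2
      show (f (g q1 ⊓ g q2) ⊓ f (g q1 ⊔ g q2), f (g q1 ⊓ g q2) ⊔ f (g q1 ⊔ g q2)) = (q1, q2)
      rcases le_total (g q1) (g q2) with hle | hle
      · have hmin : min (g q1) (g q2) = g q1 := by omega
        have hmax : max (g q1) (g q2) = g q2 := by omega
        rw [hmin, hmax, e1, e2]
        have : min q1 q2 = q1 := by omega
        have h2 : max q1 q2 = q2 := by omega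
        rw [this, h2]
      · have hmin : min (g q1) (g q2) = g q2 := by omega
        have hmax : max (g q1) (g q2) = g q1 := by omega
        rw [hmin, hmax, e1, e2]
        have : min q2 q1 = q1 := by omega
        have h2 : max q2 q1 = q2 := by omega
        rw [this, h2]
  -- Hall's condition
  let t : {q // q ∈ S} → Finset (ℕ × ℕ) := fun e => T.filter fun r => r.1 ≤ e.1.1 ∧ e.1.2 ≤ r.2
  have hall : ∀ s : Finset {q // q ∈ S}, s.card ≤ (s.biUnion t).card := by
    intro s
    set Wst := s.image Subtype.val with hWdef
    have hWcard : Wst.card = s.card := Finset.card_image_of_injective s Subtype.val_injective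
    set U := (natPairs m).filter (fun r => ∃ e ∈ Wst, r.1 ≤ e.1 ∧ e.2 ≤ r.2) with hUdef
    have hUmem : ∀ r, r ∈ U ↔ (r.1 < r.2 ∧ r.2 < m) ∧ ∃ e ∈ Wst, r.1 ≤ e.1 ∧ e.2 ≤ r.2 := by
      intro r; rw [hUdef, Finset.mem_filter, mem_natPairs]
    have hUup : IsUpsetN m U := by
      constructor
      · rw [hUdef]; exact Finset.filter_subset _ _
      · intro q hq x y hx hy hym
        rw [hUmem] at hq ⊢
        obtain ⟨⟨h12, h2m⟩, e, he, he1, he2⟩ := hq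
        exact ⟨⟨by omega, hym⟩, e, he, by omega, by omega⟩
    have hWsub : Wst ⊆ U.filter (fun q => k ≤ nd (f q.1) (f q.2)) := by
      intro e he
      have heS : e ∈ S := by
        rw [hWdef] at he
        obtain ⟨e', he', rfl⟩ := Finset.mem_image.mp he
        exact e'.2
      rw [Finset.mem_filter, hUmem]
      rw [hSmem] at heS
      exact ⟨⟨heS.1, e, he, le_refl _, le_refl _⟩, heS.2⟩
    have h1 : s.card ≤ (U.filter (fun q => k ≤ nd (f q.1) (f q.2))).card := by
      rw [← hWcard]
      exact Finset.card_le_card hWsub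
    have h2 := mcl k hk m f g hfg hgf U hUup
    have h3 : U.filter (fun q => k ≤ q.2 - q.1) ⊆ s.biUnion t := by
      intro r hr
      rw [Finset.mem_filter, hUmem] at hr
      obtain ⟨⟨⟨h12, h2m⟩, e, he, he1, he2⟩, hgap⟩ := hr
      rw [hWdef] at he
      obtain ⟨e', he', rfl⟩ := Finset.mem_image.mp he
      rw [Finset.mem_biUnion]
      refine ⟨e', he', ?_⟩
      rw [Finset.mem_filter]
      refine ⟨?_, he1, he2⟩
      rw [hTmem]
      exact ⟨⟨h12, h2m⟩, hgap⟩
    calc s.card ≤ (U.filter (fun q => k ≤ nd (f q.1) (f q.2))).card := h1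
      _ ≤ (U.filter (fun q => k ≤ q.2 - q.1)).card := h2
      _ ≤ (s.biUnion t).card := Finset.card_le_card h3
  obtain ⟨φ, hφinj, hφmem⟩ := (Finset.all_card_le_biUnion_card_iff_exists_injective t).mp hall
  -- the image of φ is exactly T
  have hφT : ∀ e, φ e ∈ T := by
    intro e
    have := hφmem e
    rw [Finset.mem_filter] at this
    exact this.1
  have himg : Finset.univ.image φ = T := by
    apply Finset.eq_of_subset_of_card_le
    · intro r hr
      obtain ⟨e, _, rfl⟩ := Finset.mem_image.mp hr
      exact hφT e
    · rw [Finset.card_image_of_injective _ hφinj]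
      rw [Finset.card_univ, Fintype.card_coe]
      omega
  -- conclude
  have hsum1 : ∑ q ∈ S, W q = ∑ e : {q // q ∈ S}, W e.1 := by
    rw [← Finset.sum_attach S W]
    rfl
  have hsum2 : ∑ q ∈ T, W q = ∑ e : {q // q ∈ S}, W (φ e) := by
    rw [← himg]
    rw [Finset.sum_image (fun x _ y _ h => hφinj h)]
  rw [hsum1, hsum2]
  apply Finset.sum_le_sum
  intro e _
  have heS := e.2
  rw [hSmem] at heS
  obtain ⟨⟨h12, h2m⟩, _⟩ := heS
  have hmemt := hφmem e
  rw [Finset.mem_filter] at hmemt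
  obtain ⟨hT, hle1, hle2⟩ := hmemt
  rw [hTmem] at hT
  obtain ⟨⟨hT12, hT2m⟩, _⟩ := hT
  have := hW (φ e).1 (φ e).2 e.1.1 e.1.2 hle1 h12 hle2 hT2m
  simpa using this

/-- if `A` is a Toeplitz Robinson similarity and `B` is a Robinson
dissimilarity, then `⟨A_π, B⟩ ≥ ⟨A, B⟩` for every permutation `π`. -/
theorem identity_optimal_QAP_toeplitzA {n : ℕ}
    (A B : Matrix (Fin n) (Fin n) ℝ)
    (hA : IsRobinsonSim A) (hAT : IsToeplitz A) (hB : IsRobinsonDissim B)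
    (π : Equiv.Perm (Fin n)) :
    mInner (permMat A π) B ≥ mInner A B := by
  classical
  rcases Nat.eq_zero_or_pos n with hn0 | hn
  · subst hn0
    apply le_of_eq
    unfold mInner
    simp
  obtain ⟨hAsym, hArob⟩ := hA
  obtain ⟨hBsym, hBrob⟩ := hB
  -- A is a function of |i - j|
  set gg : ℕ → ℝ := fun d => if h : d < n then A ⟨0, hn⟩ ⟨d, h⟩ else 0 with hggdef
  have key : ∀ s : ℕ, ∀ i j : Fin n, (i : ℕ) = s → (i : ℕ) ≤ (j : ℕ) →
      A i j = gg ((j : ℕ) - (i : ℕ)) := by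
    intro s
    induction s with
    | zero =>
        intro i j hi hij
        have hi0 : i = ⟨0, hn⟩ := Fin.ext hi
        have hd : (j : ℕ) - (i : ℕ) = (j : ℕ) := by omega
        rw [hd, hi0]
        have : gg ((j : ℕ)) = A ⟨0, hn⟩ ⟨(j : ℕ), j.isLt⟩ := by
          simp only [hggdef]
          rw [dif_pos j.isLt]
        rw [this]
    | succ s ihs =>
        intro i j hi hij
        have hslt : s < n := by
          have := i.isLt
          omega
        have hs1 : s + 1 < n := by
          have := i.isLt
          omega
        set d : ℕ := (j : ℕ) - (i : ℕ) with hddef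
        have hsd : s + d < n := by
          have := j.isLt
          omega
        have hsd1 : s + d + 1 < n := by
          have := j.isLt
          omega
        have hT := hAT ⟨s, hslt⟩ ⟨s + d, hsd⟩ hs1 hsd1
        have hIH : A ⟨s, hslt⟩ ⟨s + d, hsd⟩ = gg (s + d - s) :=
          ihs ⟨s, hslt⟩ ⟨s + d, hsd⟩ rfl (Nat.le_add_right s d)
        have hd2 : s + d - s = d := by omega
        rw [hd2] at hIH
        have hieq : i = ⟨s + 1, hs1⟩ := Fin.ext hi
        have hjeq : j = ⟨s + d + 1, hsd1⟩ := Fin.ext (show (j : ℕ) = s + d + 1 by omega)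
        rw [hieq, hjeq]
        have hTT : A ⟨s + 1, hs1⟩ ⟨s + d + 1, hsd1⟩ = gg d := by
          rw [← hT]
          exact hIH
        rw [hTT]
  have ndA : ∀ i j : Fin n, A i j = gg (nd (i : ℕ) (j : ℕ)) := by
    intro i j
    rcases le_total (i : ℕ) (j : ℕ) with h | h
    · rw [key (i : ℕ) i j rfl h]
      congr 1
      simp only [nd]
      omega
    · rw [hAsym i j, key (j : ℕ) j i rfl h]
      congr 1
      simp only [nd]
      omega
  -- monotonicity of gg
  have hmono : ∀ t, 1 ≤ t → t < n → gg t ≤ gg (t - 1) := by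
    intro t h1 h2
    have h1n : 1 < n := by omega
    have hk1 := hArob ⟨0, hn⟩ ⟨1, h1n⟩ ⟨t, h2⟩
      (by rw [Fin.mk_le_mk]; omega) (by rw [Fin.mk_le_mk]; omega)
    have e0 : A ⟨0, hn⟩ ⟨t, h2⟩ = gg (t - 0) := key 0 ⟨0, hn⟩ ⟨t, h2⟩ rfl (by simp)
    rw [Nat.sub_zero] at e0
    have e1 : A ⟨1, h1n⟩ ⟨t, h2⟩ = gg (t - 1) := key 1 ⟨1, h1n⟩ ⟨t, h2⟩ rfl (by simp; omega)
    calc gg t = A ⟨0, hn⟩ ⟨t, h2⟩ := e0.symm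
      _ ≤ min (A ⟨0, hn⟩ ⟨1, h1n⟩) (A ⟨1, h1n⟩ ⟨t, h2⟩) := hk1
      _ ≤ A ⟨1, h1n⟩ ⟨t, h2⟩ := min_le_right _ _
      _ = gg (t - 1) := e1
  set c : ℕ → ℝ := fun t => gg (t - 1) - gg t with hcdef
  have hc0 : ∀ t ∈ Finset.Ico 1 n, 0 ≤ c t := by
    intro t ht
    rw [Finset.mem_Ico] at ht
    have := hmono t ht.1 ht.2
    simp only [hcdef]
    linarith
  -- telescoping
  have tele : ∀ d, d < n → gg d = gg 0 - ∑ t ∈ Finset.Ico 1 n, (if t ≤ d then c t else 0) := by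
    intro d hd
    have h1 : ∑ t ∈ Finset.Ico 1 n, (if t ≤ d then c t else 0) = ∑ t ∈ Finset.Ico 1 (d + 1), c t := by
      rw [← Finset.sum_filter]
      congr 1
      ext t
      simp only [Finset.mem_filter, Finset.mem_Ico]
      omega
    rw [h1]
    have h2 : ∑ t ∈ Finset.Ico 1 (d + 1), c t = ∑ i ∈ Finset.range d, c (1 + i) := by
      rw [Finset.sum_Ico_eq_sum_range]
      norm_num
    rw [h2]
    have h3 : ∑ i ∈ Finset.range d, c (1 + i) = ∑ i ∈ Finset.range d, (gg i - gg (i + 1)) := by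
      apply Finset.sum_congr rfl
      intro i _
      simp only [hcdef]
      congr 2
      · omega
      · omega
    rw [h3, Finset.sum_range_sub' gg d]
    ring
  -- the scalar decomposition
  have scalar : ∀ D D' : ℕ, D < n → D' < n →
      gg D' - gg D = ∑ t ∈ Finset.Ico 1 n,
        c t * ((if t ≤ D then (1 : ℝ) else 0) - (if t ≤ D' then (1 : ℝ) else 0)) := by
    intro D D' hD hD'
    rw [tele D hD, tele D' hD']
    simp only [mul_sub, mul_ite, mul_one, mul_zero, Finset.sum_sub_distrib]
    ring
  -- WB and its properties
  set WB : ℕ × ℕ → ℝ := fun q => if h : q.1 < n ∧ q.2 < n then B ⟨q.1, h.1⟩ ⟨q.2, h.2⟩ else 0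
    with hWBdef
  have hWBval : ∀ i j : Fin n, WB ((i : ℕ), (j : ℕ)) = B i j := by
    intro i j
    simp only [hWBdef]
    rw [dif_pos ⟨i.isLt, j.isLt⟩]
  have hWBsymm : ∀ a b : ℕ, WB (b, a) = WB (a, b) := by
    intro a b
    simp only [hWBdef]
    by_cases h : a < n ∧ b < n
    · rw [dif_pos ⟨h.2, h.1⟩, dif_pos h]
      exact hBsym _ _
    · rw [dif_neg (by tauto), dif_neg h]
  have hWBmono : ∀ x y a b : ℕ, x ≤ a → a < b → b ≤ y → y < n → WB (a, b) ≤ WB (x, y) := by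
    intro x y a b h1 h2 h3 h4
    have hb : b < n := by omega
    have ha : a < n := by omega
    have hx : x < n := by omega
    simp only [hWBdef]
    rw [dif_pos ⟨ha, hb⟩, dif_pos ⟨hx, h4⟩]
    have s1 : B ⟨a, ha⟩ ⟨b, hb⟩ ≤ B ⟨x, hx⟩ ⟨b, hb⟩ := by
      have := hBrob ⟨x, hx⟩ ⟨a, ha⟩ ⟨b, hb⟩ (by rw [Fin.mk_le_mk]; omega) (by rw [Fin.mk_le_mk]; omega)
      exact le_trans (le_max_right _ _) this
    have s2 : B ⟨x, hx⟩ ⟨b, hb⟩ ≤ B ⟨x, hx⟩ ⟨y, h4⟩ := by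
      have := hBrob ⟨x, hx⟩ ⟨b, hb⟩ ⟨y, h4⟩ (by rw [Fin.mk_le_mk]; omega) (by rw [Fin.mk_le_mk]; omega)
      exact le_trans (le_max_left _ _) this
    linarith
  have ndcomm : ∀ x y : ℕ, nd x y = nd y x := by
    intro x y; simp only [nd]; omega
  -- conversion of Fin-indexed sums to pair sums
  have convS : ∀ (t : ℕ), 1 ≤ t → ∀ (f' : ℕ → ℕ) (ff : Fin n → Fin n),
      (∀ i : Fin n, f' (i : ℕ) = ((ff i) : ℕ)) →
      (∑ i : Fin n, ∑ j : Fin n, (if t ≤ nd ((ff i) : ℕ) ((ff j) : ℕ) then B i j else 0))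
      = 2 * ∑ q ∈ (natPairs n).filter (fun q => t ≤ nd (f' q.1) (f' q.2)), WB q := by
    intro t ht f' ff hff
    have step1 : (∑ i : Fin n, ∑ j : Fin n, (if t ≤ nd ((ff i) : ℕ) ((ff j) : ℕ) then B i j else 0))
        = ∑ a ∈ Finset.range n, ∑ b ∈ Finset.range n,
            (if t ≤ nd (f' a) (f' b) then WB (a, b) else 0) := by
      rw [← Fin.sum_univ_eq_sum_range
        (fun a => ∑ b ∈ Finset.range n, (if t ≤ nd (f' a) (f' b) then WB (a, b) else 0))]
      apply Finset.sum_congr rfl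
      intro i _
      rw [← Fin.sum_univ_eq_sum_range
        (fun b => (if t ≤ nd (f' (i : ℕ)) (f' b) then WB ((i : ℕ), b) else 0))]
      apply Finset.sum_congr rfl
      intro j _
      rw [hff i, hff j, hWBval i j]
    rw [step1]
    have step2 : ∑ a ∈ Finset.range n, ∑ b ∈ Finset.range n,
          (if t ≤ nd (f' a) (f' b) then WB (a, b) else 0)
        = ∑ q ∈ (Finset.range n ×ˢ Finset.range n),
            (if t ≤ nd (f' q.1) (f' q.2) then WB (q.1, q.2) else 0) :=
      (Finset.sum_product' _ _ _).symm
    rw [step2]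
    set RR := (Finset.range n ×ˢ Finset.range n) with hRRdef
    set F : ℕ × ℕ → ℝ := fun q => if t ≤ nd (f' q.1) (f' q.2) then WB (q.1, q.2) else 0 with hFdef
    have hFsymm : ∀ q : ℕ × ℕ, F (q.2, q.1) = F q := by
      rintro ⟨a, b⟩
      simp only [hFdef]
      rw [ndcomm (f' b) (f' a), hWBsymm b a]
    have split1 : ∑ q ∈ RR, F q
        = (∑ q ∈ RR.filter (fun q => q.1 < q.2), F q)
          + ∑ q ∈ RR.filter (fun q => ¬ q.1 < q.2), F q :=
      (Finset.sum_filter_add_sum_filter_not RR _ F).symm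
    have split2 : ∑ q ∈ RR.filter (fun q => ¬ q.1 < q.2), F q
        = (∑ q ∈ (RR.filter (fun q => ¬ q.1 < q.2)).filter (fun q => q.2 < q.1), F q)
          + ∑ q ∈ (RR.filter (fun q => ¬ q.1 < q.2)).filter (fun q => ¬ q.2 < q.1), F q :=
      (Finset.sum_filter_add_sum_filter_not _ _ F).symm
    have hdiag : ∑ q ∈ (RR.filter (fun q => ¬ q.1 < q.2)).filter (fun q => ¬ q.2 < q.1), F q = 0 := by
      apply Finset.sum_eq_zero
      rintro ⟨a, b⟩ hq
      simp only [Finset.mem_filter] at hq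
      have hab : a = b := by omega
      simp only [hFdef]
      rw [if_neg]
      subst hab
      simp only [nd]
      omega
    have hgt : ∑ q ∈ (RR.filter (fun q => ¬ q.1 < q.2)).filter (fun q => q.2 < q.1), F q
        = ∑ q ∈ RR.filter (fun q => q.1 < q.2), F q := by
      refine Finset.sum_bij' (fun q _ => (q.2, q.1)) (fun q _ => (q.2, q.1)) ?_ ?_ ?_ ?_ ?_
      · rintro ⟨a, b⟩ hq
        simp only [Finset.mem_filter, hRRdef, Finset.mem_product, Finset.mem_range] at hq ⊢
        exact ⟨⟨hq.1.1.2, hq.1.1.1⟩, hq.2⟩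
      · rintro ⟨a, b⟩ hq
        simp only [Finset.mem_filter, hRRdef, Finset.mem_product, Finset.mem_range] at hq ⊢
        exact ⟨⟨⟨hq.1.2, hq.1.1⟩, by omega⟩, by omega⟩
      · rintro ⟨a, b⟩ _
        rfl
      · rintro ⟨a, b⟩ _
        rfl
      · rintro ⟨a, b⟩ _
        exact (hFsymm (a, b)).symm
    have hfinal : ∑ q ∈ RR.filter (fun q => q.1 < q.2), F q
        = ∑ q ∈ (natPairs n).filter (fun q => t ≤ nd (f' q.1) (f' q.2)), WB q := by
      have hstep : ∑ q ∈ RR.filter (fun q => q.1 < q.2), F q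
          = ∑ q ∈ RR.filter (fun q => q.1 < q.2),
              (if t ≤ nd (f' q.1) (f' q.2) then WB q else 0) := by
        apply Finset.sum_congr rfl
        rintro ⟨a, b⟩ _
        simp only [hFdef]
      rw [hstep, ← Finset.sum_filter]
      rfl
    rw [split1, split2, hdiag, hgt, hfinal]
    ring
  -- the key inequality for each t
  have KL : ∀ t : ℕ, 1 ≤ t →
      (∑ i : Fin n, ∑ j : Fin n, (if t ≤ nd ((π i : Fin n) : ℕ) ((π j : Fin n) : ℕ) then B i j else 0))
      ≤ ∑ i : Fin n, ∑ j : Fin n, (if t ≤ nd ((i : Fin n) : ℕ) ((j : Fin n) : ℕ) then B i j else 0) := by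
    intro t ht
    set fσ : ℕ → ℕ := fun x => if h : x < n then ((π ⟨x, h⟩ : Fin n) : ℕ) else x with hfσdef
    set gσ : ℕ → ℕ := fun x => if h : x < n then ((π.symm ⟨x, h⟩ : Fin n) : ℕ) else x with hgσdef
    have hfσ : ∀ i : Fin n, fσ ((i : ℕ)) = ((π i : Fin n) : ℕ) := by
      intro i
      simp only [hfσdef]
      rw [dif_pos i.isLt]
    have hgσ : ∀ i : Fin n, gσ ((i : ℕ)) = ((π.symm i : Fin n) : ℕ) := by
      intro i
      simp only [hgσdef]
      rw [dif_pos i.isLt]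
    have hfgσ : ∀ x, x < n → fσ x < n ∧ gσ (fσ x) = x := by
      intro x hx
      have h1 : fσ x = ((π ⟨x, hx⟩ : Fin n) : ℕ) := by
        simp only [hfσdef]; rw [dif_pos hx]
      constructor
      · rw [h1]; exact (π ⟨x, hx⟩).isLt
      · rw [h1, hgσ (π ⟨x, hx⟩), Equiv.symm_apply_apply]
    have hgfσ : ∀ x, x < n → gσ x < n ∧ fσ (gσ x) = x := by
      intro x hx
      have h1 : gσ x = ((π.symm ⟨x, hx⟩ : Fin n) : ℕ) := by
        simp only [hgσdef]; rw [dif_pos hx]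
      constructor
      · rw [h1]; exact (π.symm ⟨x, hx⟩).isLt
      · rw [h1, hfσ (π.symm ⟨x, hx⟩), Equiv.apply_symm_apply]
    have hconv1 := convS t ht fσ (fun i => π i) hfσ
    have hconv2 := convS t ht (fun x => x) (fun i => i) (fun i => rfl)
    rw [hconv1, hconv2]
    have hidfil : (natPairs n).filter (fun q => t ≤ nd q.1 q.2)
        = (natPairs n).filter (fun q => t ≤ q.2 - q.1) := by
      apply Finset.filter_congr
      intro q hq
      have h2 := mem_natPairs.mp hq
      simp only [nd]
      omega
    rw [hidfil]
    have := msl n t ht fσ gσ hfgσ hgfσ WB hWBmono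
    linarith
  -- assemble everything
  rw [ge_iff_le, ← sub_nonneg]
  have hdiff : mInner (permMat A π) B - mInner A B
      = ∑ i : Fin n, ∑ j : Fin n, (A (π i) (π j) - A i j) * B i j := by
    unfold mInner permMat
    rw [← Finset.sum_sub_distrib]
    apply Finset.sum_congr rfl
    intro i _
    rw [← Finset.sum_sub_distrib]
    apply Finset.sum_congr rfl
    intro j _
    simp only [Matrix.of_apply]
    ring
  rw [hdiff]
  have hpt : ∀ i j : Fin n, (A (π i) (π j) - A i j) * B i j
      = ∑ t ∈ Finset.Ico 1 n, c t *
          ((if t ≤ nd ((i : Fin n) : ℕ) ((j : Fin n) : ℕ) then B i j else 0)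
            - (if t ≤ nd ((π i : Fin n) : ℕ) ((π j : Fin n) : ℕ) then B i j else 0)) := by
    intro i j
    have hD : nd ((i : Fin n) : ℕ) ((j : Fin n) : ℕ) < n := by
      have := i.isLt; have := j.isLt; simp only [nd]; omega
    have hD' : nd ((π i : Fin n) : ℕ) ((π j : Fin n) : ℕ) < n := by
      have := (π i).isLt; have := (π j).isLt; simp only [nd]; omega
    rw [ndA (π i) (π j), ndA i j, scalar _ _ hD hD', Finset.sum_mul]
    apply Finset.sum_congr rfl
    intro t _
    split_ifs <;> ring
  have hmain : ∑ i : Fin n, ∑ j : Fin n, (A (π i) (π j) - A i j) * B i j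
      = ∑ t ∈ Finset.Ico 1 n, c t *
          ((∑ i : Fin n, ∑ j : Fin n, (if t ≤ nd ((i : Fin n) : ℕ) ((j : Fin n) : ℕ) then B i j else 0))
            - ∑ i : Fin n, ∑ j : Fin n, (if t ≤ nd ((π i : Fin n) : ℕ) ((π j : Fin n) : ℕ) then B i j else 0)) := by
    calc ∑ i : Fin n, ∑ j : Fin n, (A (π i) (π j) - A i j) * B i j
        = ∑ i : Fin n, ∑ j : Fin n, ∑ t ∈ Finset.Ico 1 n, c t *
            ((if t ≤ nd ((i : Fin n) : ℕ) ((j : Fin n) : ℕ) then B i j else 0)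
              - (if t ≤ nd ((π i : Fin n) : ℕ) ((π j : Fin n) : ℕ) then B i j else 0)) := by
          apply Finset.sum_congr rfl
          intro i _
          apply Finset.sum_congr rfl
          intro j _
          exact hpt i j
      _ = ∑ t ∈ Finset.Ico 1 n, ∑ i : Fin n, ∑ j : Fin n, c t *
            ((if t ≤ nd ((i : Fin n) : ℕ) ((j : Fin n) : ℕ) then B i j else 0)
              - (if t ≤ nd ((π i : Fin n) : ℕ) ((π j : Fin n) : ℕ) then B i j else 0)) := by
          calc ∑ i : Fin n, ∑ j : Fin n, ∑ t ∈ Finset.Ico 1 n, c t *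
                ((if t ≤ nd ((i : Fin n) : ℕ) ((j : Fin n) : ℕ) then B i j else 0)
                  - (if t ≤ nd ((π i : Fin n) : ℕ) ((π j : Fin n) : ℕ) then B i j else 0))
              = ∑ i : Fin n, ∑ t ∈ Finset.Ico 1 n, ∑ j : Fin n, c t *
                ((if t ≤ nd ((i : Fin n) : ℕ) ((j : Fin n) : ℕ) then B i j else 0)
                  - (if t ≤ nd ((π i : Fin n) : ℕ) ((π j : Fin n) : ℕ) then B i j else 0)) :=
              Finset.sum_congr rfl (fun i _ => Finset.sum_comm)
            _ = ∑ t ∈ Finset.Ico 1 n, ∑ i : Fin n, ∑ j : Fin n, c t *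
                ((if t ≤ nd ((i : Fin n) : ℕ) ((j : Fin n) : ℕ) then B i j else 0)
                  - (if t ≤ nd ((π i : Fin n) : ℕ) ((π j : Fin n) : ℕ) then B i j else 0)) :=
              Finset.sum_comm
      _ = ∑ t ∈ Finset.Ico 1 n, c t *
            ((∑ i : Fin n, ∑ j : Fin n, (if t ≤ nd ((i : Fin n) : ℕ) ((j : Fin n) : ℕ) then B i j else 0))
              - ∑ i : Fin n, ∑ j : Fin n, (if t ≤ nd ((π i : Fin n) : ℕ) ((π j : Fin n) : ℕ) then B i j else 0)) := by
          apply Finset.sum_congr rfl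
          intro t _
          calc ∑ i : Fin n, ∑ j : Fin n, c t *
                ((if t ≤ nd ((i : Fin n) : ℕ) ((j : Fin n) : ℕ) then B i j else 0)
                  - (if t ≤ nd ((π i : Fin n) : ℕ) ((π j : Fin n) : ℕ) then B i j else 0))
              = ∑ i : Fin n, c t * ∑ j : Fin n,
                ((if t ≤ nd ((i : Fin n) : ℕ) ((j : Fin n) : ℕ) then B i j else 0)
                  - (if t ≤ nd ((π i : Fin n) : ℕ) ((π j : Fin n) : ℕ) then B i j else 0)) :=
              Finset.sum_congr rfl (fun i _ => (Finset.mul_sum _ _ _).symm)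
            _ = c t * ∑ i : Fin n, ∑ j : Fin n,
                ((if t ≤ nd ((i : Fin n) : ℕ) ((j : Fin n) : ℕ) then B i j else 0)
                  - (if t ≤ nd ((π i : Fin n) : ℕ) ((π j : Fin n) : ℕ) then B i j else 0)) :=
              (Finset.mul_sum _ _ _).symm
            _ = c t *
                ((∑ i : Fin n, ∑ j : Fin n, (if t ≤ nd ((i : Fin n) : ℕ) ((j : Fin n) : ℕ) then B i j else 0))
                  - ∑ i : Fin n, ∑ j : Fin n, (if t ≤ nd ((π i : Fin n) : ℕ) ((π j : Fin n) : ℕ) then B i j else 0)) := by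
              congr 1
              rw [← Finset.sum_sub_distrib]
              apply Finset.sum_congr rfl
              intro i _
              rw [← Finset.sum_sub_distrib]
  rw [hmain]
  apply Finset.sum_nonneg
  intro t ht
  apply mul_nonneg (hc0 t ht)
  rw [sub_nonneg]
  exact KL t (Finset.mem_Ico.mp ht).1
end

section
/- Let A be an n×n symmetric matrix that can be written as a conic (nonnegative) combination of cut matrices CUT(u,v). Then the identity permutation is optimal for the 2-SUM problem on A; that is, for every permutation π of [n], ∑_{i,j=1}^n A_{π(i)π(j)} (i−j)^2 ≥ ∑_{i,j=1}^n A_{ij} (i−j)^2. -/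
/-- The cut matrix `CUT(u,v)` (with `1`-based indices `1 ≤ u ≤ v ≤ n`): its `(i,j)`
entry is `1` if `u ≤ i, j ≤ v` and `0` otherwise. -/
def CutMat (n u v : ℕ) : Matrix (Fin n) (Fin n) ℝ :=
  Matrix.of fun i j =>
    if u ≤ i.val + 1 ∧ i.val + 1 ≤ v ∧ u ≤ j.val + 1 ∧ j.val + 1 ≤ v then 1 else 0

/-- `A` is a conic (nonnegative) combination of cut matrices `CUT(u,v)`, `1 ≤ u ≤ v ≤ n`. -/
def IsConicCombOfCuts {n : ℕ} (A : Matrix (Fin n) (Fin n) ℝ) : Prop :=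
  ∃ (s : Finset (ℕ × ℕ)) (c : ℕ × ℕ → ℝ),
    (∀ p ∈ s, 0 ≤ c p ∧ 1 ≤ p.1 ∧ p.1 ≤ p.2 ∧ p.2 ≤ n) ∧
    A = ∑ p ∈ s, c p • CutMat n p.1 p.2

/-- The 2-SUM objective `∑_{i,j} A (π i) (π j) (i - j)²`. -/
def twoSum {n : ℕ} (A : Matrix (Fin n) (Fin n) ℝ) (π : Equiv.Perm (Fin n)) : ℝ :=
  ∑ i, ∑ j, A (π i) (π j) * ((i.val : ℝ) - (j.val : ℝ)) ^ 2


section Aux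

private lemma gap_le {k : ℕ} (f : Fin k → ℕ) (hf : StrictMono f) :
    ∀ (d : ℕ) (a b : Fin k), b.val = a.val + d → f a + d ≤ f b := by
  intro d
  induction d with
  | zero =>
    intro a b h
    have : a = b := Fin.ext (by omega)
    subst this; omega
  | succ d ih =>
    intro a b h
    have hb := b.isLt
    have h1 := ih a ⟨a.val + d, by omega⟩ rfl
    have h2 : (⟨a.val + d, by omega⟩ : Fin k) < b := by
      simp [Fin.lt_def]; omega
    have := hf h2
    omega

private lemma sq_gap {k : ℕ} (f : Fin k → ℕ) (hf : StrictMono f) (a b : Fin k) :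
    ((a.val : ℝ) - b.val) ^ 2 ≤ ((f a : ℝ) - f b) ^ 2 := by
  rcases le_total a b with h | h
  · have hab : a.val ≤ b.val := h
    have h1 := gap_le f hf (b.val - a.val) a b (by omega)
    have h2 : (f a : ℝ) + ((b.val : ℝ) - a.val) ≤ f b := by
      have : ((f a + (b.val - a.val) : ℕ) : ℝ) ≤ ((f b : ℕ) : ℝ) := by exact_mod_cast h1
      push_cast [Nat.cast_sub hab] at this
      linarith
    have h3 : (a.val : ℝ) ≤ b.val := by exact_mod_cast hab
    nlinarith
  · have hab : b.val ≤ a.val := h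
    have h1 := gap_le f hf (a.val - b.val) b a (by omega)
    have h2 : (f b : ℝ) + ((a.val : ℝ) - b.val) ≤ f a := by
      have : ((f b + (a.val - b.val) : ℕ) : ℝ) ≤ ((f a : ℕ) : ℝ) := by exact_mod_cast h1
      push_cast [Nat.cast_sub hab] at this
      linarith
    have h3 : (b.val : ℝ) ≤ a.val := by exact_mod_cast hab
    nlinarith

private lemma sum_sq_ge {n k : ℕ} (S : Finset (Fin n)) (hS : S.card = k) :
    ∑ a : Fin k, ∑ b : Fin k, ((a.val : ℝ) - b.val) ^ 2 ≤
      ∑ i ∈ S, ∑ j ∈ S, ((i.val : ℝ) - j.val) ^ 2 := by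
  let f := S.orderEmbOfFin hS
  have hmap : Finset.map f.toEmbedding Finset.univ = S := by
    apply Finset.eq_of_subset_of_card_le
    · intro x hx
      simp only [Finset.mem_map, Finset.mem_univ, true_and] at hx
      obtain ⟨a, rfl⟩ := hx
      exact S.orderEmbOfFin_mem hS a
    · simp [hS]
  rw [← hmap]
  simp only [Finset.sum_map]
  have hmono : StrictMono (fun a : Fin k => (f a).val) :=
    fun a b hab => (f.strictMono hab)
  apply Finset.sum_le_sum
  intro a _
  apply Finset.sum_le_sum
  intro b _
  exact sq_gap (fun a => (f a).val) hmono a b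

private lemma interval_sum_eq {n m v : ℕ} (hv : v ≤ n) :
    ∑ i ∈ Finset.univ.filter (fun i : Fin n => m ≤ i.val ∧ i.val < v),
      ∑ j ∈ Finset.univ.filter (fun j : Fin n => m ≤ j.val ∧ j.val < v),
        ((i.val : ℝ) - j.val) ^ 2
      = ∑ a : Fin (v - m), ∑ b : Fin (v - m), ((a.val : ℝ) - b.val) ^ 2 := by
  let e : Fin (v - m) ↪ Fin n :=
    ⟨fun a => ⟨m + a.val, by have := a.isLt; omega⟩,
     fun a b h => by
       have : m + a.val = m + b.val := congrArg Fin.val h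
       exact Fin.ext (by omega)⟩
  have hset : Finset.univ.filter (fun i : Fin n => m ≤ i.val ∧ i.val < v) =
      Finset.map e Finset.univ := by
    ext i
    simp only [Finset.mem_filter, Finset.mem_univ, true_and, Finset.mem_map,
      Function.Embedding.coeFn_mk, e]
    constructor
    · rintro ⟨h1, h2⟩
      exact ⟨⟨i.val - m, by omega⟩, by apply Fin.ext; show m + (i.val - m) = i.val; omega⟩
    · rintro ⟨a, rfl⟩
      have := a.isLt
      exact ⟨show m ≤ m + a.val by omega, show m + a.val < v by omega⟩
  rw [hset]
  simp only [Finset.sum_map, Function.Embedding.coeFn_mk, e]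
  apply Finset.sum_congr rfl
  intro a _
  apply Finset.sum_congr rfl
  intro b _
  show (((m + a.val : ℕ) : ℝ) - ((m + b.val : ℕ) : ℝ)) ^ 2 = ((a.val : ℝ) - b.val) ^ 2
  push_cast
  ring

private lemma interval_card {n m v : ℕ} (hv : v ≤ n) :
    (Finset.univ.filter (fun i : Fin n => m ≤ i.val ∧ i.val < v)).card = v - m := by
  classical
  rw [show (Finset.univ.filter (fun i : Fin n => m ≤ i.val ∧ i.val < v)) =
      Finset.map ⟨fun a : Fin (v - m) => (⟨m + a.val, by have := a.isLt; omega⟩ : Fin n),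
        fun a b h => by
          apply Fin.ext
          have := congrArg Fin.val h
          simpa using this⟩ Finset.univ from ?_]
  · simp
  · ext i
    simp only [Finset.mem_filter, Finset.mem_univ, true_and, Finset.mem_map,
      Function.Embedding.coeFn_mk]
    constructor
    · rintro ⟨h1, h2⟩
      exact ⟨⟨i.val - m, by omega⟩, by apply Fin.ext; show m + (i.val - m) = i.val; omega⟩
    · rintro ⟨a, rfl⟩
      have := a.isLt
      exact ⟨show m ≤ m + a.val by omega, show m + a.val < v by omega⟩

private lemma twoSum_cut_eq {n u v : ℕ} (π : Equiv.Perm (Fin n)) :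
    twoSum (CutMat n u v) π =
      ∑ i ∈ Finset.univ.filter
          (fun i : Fin n => u ≤ (π i).val + 1 ∧ (π i).val + 1 ≤ v),
        ∑ j ∈ Finset.univ.filter
          (fun j : Fin n => u ≤ (π j).val + 1 ∧ (π j).val + 1 ≤ v),
          ((i.val : ℝ) - j.val) ^ 2 := by
  unfold twoSum CutMat
  rw [Finset.sum_filter]
  apply Finset.sum_congr rfl
  intro i _
  rw [Finset.sum_filter]
  by_cases hi : u ≤ (π i).val + 1 ∧ (π i).val + 1 ≤ v
  · rw [if_pos hi]
    apply Finset.sum_congr rfl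
    intro j _
    by_cases hj : u ≤ (π j).val + 1 ∧ (π j).val + 1 ≤ v
    · have hcond : u ≤ (π i).val + 1 ∧ (π i).val + 1 ≤ v ∧
          u ≤ (π j).val + 1 ∧ (π j).val + 1 ≤ v := ⟨hi.1, hi.2, hj.1, hj.2⟩
      simp only [Matrix.of_apply, if_pos hcond, if_pos hj, one_mul]
    · have hcond : ¬(u ≤ (π i).val + 1 ∧ (π i).val + 1 ≤ v ∧
          u ≤ (π j).val + 1 ∧ (π j).val + 1 ≤ v) := by tauto
      simp only [Matrix.of_apply, if_neg hcond, if_neg hj, zero_mul]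
  · rw [if_neg hi]
    have hcond : ∀ j : Fin n, ¬(u ≤ (π i).val + 1 ∧ (π i).val + 1 ≤ v ∧
        u ≤ (π j).val + 1 ∧ (π j).val + 1 ≤ v) := fun j => by tauto
    exact Finset.sum_eq_zero (fun j _ => by simp only [Matrix.of_apply, if_neg (hcond j), zero_mul])

private lemma twoSum_cut_ge {n u v : ℕ} (h1 : 1 ≤ u) (huv : u ≤ v) (hv : v ≤ n)
    (π : Equiv.Perm (Fin n)) :
    twoSum (CutMat n u v) π ≥ twoSum (CutMat n u v) 1 := by
  rw [twoSum_cut_eq, twoSum_cut_eq]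
  have hcond : ∀ x : Fin n, (u ≤ x.val + 1 ∧ x.val + 1 ≤ v) ↔ (u - 1 ≤ x.val ∧ x.val < v) := by
    intro x; omega
  have hfilt : ∀ σ : Equiv.Perm (Fin n),
      Finset.univ.filter (fun i : Fin n => u ≤ (σ i).val + 1 ∧ (σ i).val + 1 ≤ v) =
      Finset.univ.filter (fun i : Fin n => u - 1 ≤ (σ i).val ∧ (σ i).val < v) := by
    intro σ
    apply Finset.filter_congr
    intro i _
    simp [hcond]
  rw [hfilt, hfilt]
  simp only [Equiv.Perm.one_apply]
  erw [interval_sum_eq hv]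
  have hcard : (Finset.univ.filter
      (fun i : Fin n => u - 1 ≤ (π i).val ∧ (π i).val < v)).card = v - (u - 1) := by
    have hmapeq : Finset.univ.filter
        (fun i : Fin n => u - 1 ≤ (π i).val ∧ (π i).val < v) =
        Finset.map π.symm.toEmbedding
          (Finset.univ.filter (fun i : Fin n => u - 1 ≤ i.val ∧ i.val < v)) := by
      ext i
      simp only [Finset.mem_filter, Finset.mem_univ, true_and, Finset.mem_map,
        Equiv.coe_toEmbedding]
      constructor
      · intro h
        exact ⟨π i, h, π.symm_apply_apply i⟩
      · rintro ⟨j, hj, rfl⟩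
        simpa using hj
    rw [hmapeq, Finset.card_map, interval_card hv]
  exact sum_sq_ge _ hcard

private lemma twoSum_sum_smul {n : ℕ} (s : Finset (ℕ × ℕ)) (c : ℕ × ℕ → ℝ)
    (π : Equiv.Perm (Fin n)) :
    twoSum (∑ p ∈ s, c p • CutMat n p.1 p.2) π
      = ∑ p ∈ s, c p * twoSum (CutMat n p.1 p.2) π := by
  classical
  have hsmul : ∀ (r : ℝ) (M : Matrix (Fin n) (Fin n) ℝ),
      twoSum (r • M) π = r * twoSum M π := by
    intro r M
    unfold twoSum
    simp [Finset.mul_sum, mul_assoc]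
  have hadd : ∀ (M N : Matrix (Fin n) (Fin n) ℝ),
      twoSum (M + N) π = twoSum M π + twoSum N π := by
    intro M N
    unfold twoSum
    simp [add_mul, Finset.sum_add_distrib]
  induction s using Finset.induction_on with
  | empty => simp [twoSum]
  | insert _ _ h ih =>
    rw [Finset.sum_insert h, hadd, hsmul, ih, Finset.sum_insert h]

end Aux

/-- if the symmetric matrix `A` is a conic combination of cut matrices,
then the identity permutation is optimal for the 2-SUM problem on `A`. -/
theorem identity_optimal_twoSum_of_cuts {n : ℕ}
    (A : Matrix (Fin n) (Fin n) ℝ) (hAsym : ∀ i j, A i j = A j i)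
    (hA : IsConicCombOfCuts A) (π : Equiv.Perm (Fin n)) :
    twoSum A π ≥ twoSum A (1 : Equiv.Perm (Fin n)) := by
  obtain ⟨s, c, hc, rfl⟩ := hA
  rw [twoSum_sum_smul, twoSum_sum_smul]
  apply Finset.sum_le_sum
  intro p hp
  obtain ⟨hc0, h1, h2, h3⟩ := hc p hp
  exact mul_le_mul_of_nonneg_left (twoSum_cut_ge h1 h2 h3 π) hc0
end
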